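/- arXiv:1708.00615 — 8 statements merged into one kernel-verified Lean document; each statement's English description precedes it below -/
import Mathlib

section
/- Every automorphism of a Miller group fixes the commutator subgroup elementwise: if G is a Miller group, then φ(x) = x for every automorphism φ of G and every x in the commutator subgroup [G,G]. -/
/-- A Miller group: a finite non-abelian group whose full automorphism group is abelian. -/
def IsMiller (G : Type*) [Group G] : Prop :=
  Finite G ∧ (∃ a b : G, a * b ≠ b * a) ∧ ∀ φ ψ : MulAut G, φ * ψ = ψ * φ

open scoped commutatorElement

lemma comm_left_central {G : Type*} [Group G] (a c z : G) (hz : ∀ y, z * y = y * z) :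
    ⁅a * z, c⁆ = ⁅a, c⁆ := by
  simp only [commutatorElement_def, mul_inv_rev]
  calc a * z * c * (z⁻¹ * a⁻¹) * c⁻¹
      = a * (z * c * z⁻¹) * a⁻¹ * c⁻¹ := by group
    _ = a * c * a⁻¹ * c⁻¹ := by rw [hz c]; group

lemma comm_right_central {G : Type*} [Group G] (a c z : G) (hz : ∀ y, z * y = y * z) :
    ⁅c, a * z⁆ = ⁅c, a⁆ := by
  simp only [commutatorElement_def, mul_inv_rev]
  calc c * (a * z) * c⁻¹ * (z⁻¹ * a⁻¹)
      = c * a * (z * c⁻¹ * z⁻¹) * a⁻¹ := by group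
    _ = c * a * c⁻¹ * a⁻¹ := by rw [hz c⁻¹]; group

/-- Every automorphism of a Miller group fixes the commutator subgroup elementwise. -/
theorem miller_aut_fixes_commutator
    (G : Type*) [Group G] (hG : IsMiller G) :
    ∀ (φ : MulAut G) (x : G), x ∈ commutator G → φ x = x := by
  intro φ x hx
  obtain ⟨-, -, hab⟩ := hG
  have hcent : ∀ g : G, ∀ y : G, (g⁻¹ * φ g) * y = y * (g⁻¹ * φ g) := by
    intro g y
    have hc := hab φ (MulAut.conj g)
    have h := congrArg (fun ψ : MulAut G => ψ (φ.symm y)) hc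
    simp only [MulAut.mul_apply, MulAut.conj_apply, MulEquiv.apply_symm_apply, map_mul,
      map_inv] at h
    -- h : φ g * y * (φ g)⁻¹ = g * φ.symm y conj... check
    have h' : φ g * y = g * y * g⁻¹ * φ g := mul_inv_eq_iff_eq_mul.mp h
    calc g⁻¹ * φ g * y = g⁻¹ * (g * y * g⁻¹ * φ g) := by rw [mul_assoc, h']
      _ = y * (g⁻¹ * φ g) := by group
  rw [commutator_eq_closure] at hx
  induction hx using Subgroup.closure_induction with
  | mem w hw =>
      obtain ⟨a, b, rfl⟩ := hw
      have ha : φ a = a * (a⁻¹ * φ a) := by group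
      have hb : φ b = b * (b⁻¹ * φ b) := by group
      rw [map_commutatorElement, ha, hb, comm_left_central _ _ _ (hcent a),
        comm_right_central _ _ _ (hcent b)]
  | one => simp
  | mul u v _ _ hu hv => rw [map_mul, hu, hv]
  | inv u _ hu => rw [map_inv, hu]
end

section
/- If p is a prime and G is a Miller p-group, then Aut(G) is a p-group (every automorphism of G has p-power order). -/
section Aux

lemma expP_hom (p : ℕ) (hp : p.Prime) (Q : Type*) [CommGroup Q] [Nontrivial Q]
    (hQ : ∀ x : Q, x ^ p = 1) : ∃ (φ : Q →* Multiplicative (ZMod p)) (x : Q), φ x ≠ 1 := by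
  haveI : Fact p.Prime := ⟨hp⟩
  haveI : NeZero p := ⟨hp.ne_zero⟩
  letI : Module (ZMod p) (Additive Q) :=
    AddCommGroup.zmodModule (fun x => by
      have h := congrArg Additive.ofMul (hQ x.toMul)
      rwa [ofMul_pow] at h)
  haveI h1 : Module.Free (ZMod p) (Additive Q) := Module.Free.of_divisionRing _ _
  haveI h2 : Module.Projective (ZMod p) (Additive Q) :=
    @Module.Projective.of_free (ZMod p) _ (Additive Q) _ _ h1
  obtain ⟨v, hv⟩ := exists_ne (0 : Additive Q)
  have h3 := (@Module.forall_dual_apply_eq_zero_iff (Additive Q) _ (ZMod p) _ _ h2 v).not.mpr hv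
  push_neg at h3
  obtain ⟨φ, hφ⟩ := h3
  let ψ : Additive Q →+ ZMod p := φ.toAddMonoidHom
  refine ⟨{ toFun := fun q => Multiplicative.ofAdd (ψ (Additive.ofMul q)),
            map_one' := ?_, map_mul' := ?_ }, v.toMul, ?_⟩
  · simp
  · intro a b; simp [ofMul_mul, ofAdd_add]
  · simpa [ψ] using hφ

universe u

lemma pgroup_hom_aux (p : ℕ) (hp : p.Prime) (n : ℕ) :
    ∀ (H : Type u) [Group H] [Finite H] [Nontrivial H], Nat.card H = n → IsPGroup p H →
    ∃ (φ : H →* Multiplicative (ZMod p)) (x : H), φ x ≠ 1 := by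
  induction n using Nat.strong_induction_on with
  | _ n ih =>
    intro H _ _ _ hcard hH
    haveI : Fact p.Prime := ⟨hp⟩
    by_cases hcomm : ∀ a b : H, a * b = b * a
    · -- commutative case
      letI : CommGroup H := { (inferInstance : Group H) with mul_comm := hcomm }
      set R : Subgroup H := (powMonoidHom p : H →* H).range with hR
      haveI : Nontrivial (H ⧸ R) := by
        by_contra hQ
        rw [not_nontrivial_iff_subsingleton] at hQ
        have hsurj : Function.Surjective (fun x : H => x ^ p) := by
          intro y
          have h1 : (y : H ⧸ R) = 1 := Subsingleton.elim _ _
          rw [QuotientGroup.eq_one_iff] at h1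
          obtain ⟨x, hx⟩ := h1
          exact ⟨x, hx⟩
        have hinj : Function.Injective (fun x : H => x ^ p) :=
          Finite.injective_iff_surjective.mpr hsurj
        have hall : ∀ (k : ℕ) (x : H), x ^ p ^ k = 1 → x = 1 := by
          intro k
          induction k with
          | zero => intro x hx; simpa using hx
          | succ k ihk =>
            intro x hx
            refine ihk x (hinj ?_)
            simp only [← pow_mul, ← pow_succ]
            simpa using hx
        obtain ⟨x, hx⟩ := exists_ne (1 : H)
        obtain ⟨k, hk⟩ := hH x
        exact hx (hall k x hk)
      have hexp : ∀ x : H ⧸ R, x ^ p = 1 := by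
        intro x
        obtain ⟨y, rfl⟩ := QuotientGroup.mk_surjective x
        rw [← QuotientGroup.mk_pow, QuotientGroup.eq_one_iff]
        exact ⟨y, rfl⟩
      obtain ⟨φ, x, hφ⟩ := expP_hom p hp (H ⧸ R) hexp
      obtain ⟨y, rfl⟩ := QuotientGroup.mk_surjective x
      exact ⟨φ.comp (QuotientGroup.mk' R), y, hφ⟩
    · -- noncommutative case
      push_neg at hcomm
      obtain ⟨a, b, hab⟩ := hcomm
      haveI hZ : Nontrivial (Subgroup.center H) := hH.center_nontrivial
      haveI : Nontrivial (H ⧸ Subgroup.center H) := by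
        refine ⟨⟨(a : H ⧸ Subgroup.center H), 1, ?_⟩⟩
        rw [Ne, QuotientGroup.eq_one_iff]
        intro ha
        exact hab ((Subgroup.mem_center_iff.mp ha) b).symm
      have hlt : Nat.card (H ⧸ Subgroup.center H) < n := by
        rw [← hcard, Subgroup.card_eq_card_quotient_mul_card_subgroup (Subgroup.center H)]
        have h1 : 1 < Nat.card (Subgroup.center H) := Finite.one_lt_card
        have h2 : 0 < Nat.card (H ⧸ Subgroup.center H) := Nat.card_pos
        nlinarith
      obtain ⟨φ, x, hφ⟩ := ih _ hlt (H ⧸ Subgroup.center H) rfl (hH.to_quotient _)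
      obtain ⟨y, rfl⟩ := QuotientGroup.mk_surjective x
      exact ⟨φ.comp (QuotientGroup.mk' _), y, hφ⟩

end Aux

/-- Core lemma: in a Miller `p`-group, an automorphism of order coprime to `p` is trivial. -/
lemma miller_coprime_aut_eq_one
    (p : ℕ) (hp : p.Prime) (G : Type*) [Group G]
    (hG : IsMiller G) (hpG : IsPGroup p G) (τ : MulAut G)
    (hcop : Nat.Coprime p (orderOf τ)) : τ = 1 := by
  obtain ⟨hfin, ⟨a0, b0, hab0⟩, hcommA⟩ := hG
  haveI : Finite G := hfin
  haveI : NeZero p := ⟨hp.ne_zero⟩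
  by_contra hτ1
  set m := orderOf τ with hm
  set z : G → G := fun g => g⁻¹ * τ g with hz
  -- values of z are central
  have hconj : ∀ a x : G, τ a * x * (τ a)⁻¹ = a * x * a⁻¹ := by
    intro a x
    have h := hcommA τ (MulAut.conj a)
    have h2 := congrArg (fun ψ : MulAut G => ψ (τ.symm x)) h
    simp only [MulAut.mul_apply, MulAut.conj_apply, map_mul, map_inv,
      MulEquiv.apply_symm_apply] at h2
    exact h2
  have hzc : ∀ g x : G, z g * x = x * z g := by
    intro g x
    have h := hconj g x
    calc z g * x = g⁻¹ * (τ g * x * (τ g)⁻¹) * τ g := by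
          simp [hz, mul_assoc]
      _ = g⁻¹ * (g * x * g⁻¹) * τ g := by rw [h]
      _ = x * z g := by simp [hz, mul_assoc]
  have hzmul : ∀ g h : G, z (g * h) = z g * z h := by
    intro g h
    calc z (g * h) = h⁻¹ * (z g * τ h) := by
          simp [hz, map_mul]; group
      _ = h⁻¹ * τ h * z g := by
          rw [hzc g (τ h), mul_assoc]
      _ = z g * z h := by rw [hzc g (h⁻¹ * τ h)]
  have hzpow : ∀ (g : G) (N : ℕ), z (g ^ N) = z g ^ N := by
    intro g N
    induction N with
    | zero => simp [hz]
    | succ N ihN => rw [pow_succ, hzmul, ihN, pow_succ]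
  have hz1 : ∀ g : G, z g = 1 ↔ τ g = g := by
    intro g
    show g⁻¹ * τ g = 1 ↔ τ g = g
    rw [inv_mul_eq_one, eq_comm]
  -- fixed values of z are trivial
  have hfix_pow : ∀ g : G, τ (z g) = z g → ∀ k : ℕ, (τ ^ k) g = g * z g ^ k := by
    intro g hg k
    induction k with
    | zero => simp
    | succ k ihk =>
      have hτz : ∀ j : ℕ, τ (z g ^ j) = z g ^ j := by
        intro j; rw [map_pow, hg]
      have hτg : τ g = g * z g := by simp [hz, mul_assoc]
      rw [pow_succ', MulAut.mul_apply, ihk, map_mul, hτz, hτg, pow_succ', mul_assoc]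
  have hfpf : ∀ g : G, τ (z g) = z g → z g = 1 := by
    intro g hg
    have h1 : (τ ^ m) g = g * z g ^ m := hfix_pow g hg m
    rw [hm, pow_orderOf_eq_one] at h1
    have h2 : z g ^ m = 1 := by
      have h3 := h1.symm
      rwa [MulAut.one_apply, mul_eq_left] at h3
    obtain ⟨j, hj⟩ := hpG (z g)
    have hd1 : orderOf (z g) ∣ m := orderOf_dvd_iff_pow_eq_one.mpr h2
    have hd2 : orderOf (z g) ∣ p ^ j := orderOf_dvd_iff_pow_eq_one.mpr hj
    have hcp : Nat.Coprime (p ^ j) m := hcop.pow_left j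
    have hd : orderOf (z g) ∣ Nat.gcd (p ^ j) m := Nat.dvd_gcd hd2 hd1
    rw [Nat.Coprime] at hcp
    rw [hcp] at hd
    exact orderOf_eq_one_iff.mp (Nat.dvd_one.mp hd)
  -- τ ≠ 1 gives an element with z ≠ 1
  have hg0 : ∃ g₀ : G, z g₀ ≠ 1 := by
    by_contra h
    push_neg at h
    exact hτ1 (MulEquiv.ext fun g => ((hz1 g).mp (h g) : τ g = g))
  obtain ⟨g₀, hg₀⟩ := hg0
  -- an element b₀ of order p among values of z
  obtain ⟨j0, hj0⟩ := hpG (z g₀)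
  obtain ⟨j, hjle, hj⟩ := (Nat.dvd_prime_pow hp).mp (orderOf_dvd_iff_pow_eq_one.mpr hj0)
  have hj1 : 1 ≤ j := by
    rcases Nat.eq_zero_or_pos j with h | h
    · exfalso; apply hg₀; rw [← orderOf_eq_one_iff, hj, h, pow_zero]
    · exact h
  set b₀ : G := z g₀ ^ (p ^ (j - 1)) with hb₀def
  have hordb₀ : orderOf b₀ = p := by
    rw [hb₀def, orderOf_pow, hj, Nat.gcd_eq_right (pow_dvd_pow p (by omega)),
      Nat.pow_div (by omega) hp.pos]
    have hjj : j - (j - 1) = 1 := by omega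
    rw [hjj, pow_one]
  have hb₀ne : b₀ ≠ 1 := by
    intro h
    have := hordb₀
    rw [h, orderOf_one] at this
    exact hp.one_lt.ne this
  -- the homomorphism z, its range B
  let zhom : G →* G := { toFun := z, map_one' := by simp [hz], map_mul' := hzmul }
  set B : Subgroup G := zhom.range with hB
  haveI hBnorm : B.Normal := by
    constructor
    intro n hn g
    obtain ⟨g', rfl⟩ := hn
    have h1 : g * zhom g' * g⁻¹ = zhom g' := by
      have h2 := hzc g' g
      show g * z g' * g⁻¹ = z g'
      rw [← h2]
      group
    rw [h1]
    exact ⟨g', rfl⟩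
  haveI : Nontrivial (G ⧸ B) := by
    by_contra h
    rw [not_nontrivial_iff_subsingleton] at h
    have hc : ∀ g : G, g ∈ B := fun g =>
      (QuotientGroup.eq_one_iff g).mp (Subsingleton.elim _ _)
    apply hab0
    obtain ⟨ga, hga⟩ := hc a0
    have : z ga = a0 := hga
    rw [← this]
    exact hzc ga b0
  obtain ⟨φq, xq, hφq⟩ := pgroup_hom_aux p hp (Nat.card (G ⧸ B)) (G ⧸ B) rfl (hpG.to_quotient B)
  set φ : G →* Multiplicative (ZMod p) := φq.comp (QuotientGroup.mk' B) with hφdef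
  obtain ⟨x2, rfl⟩ := QuotientGroup.mk_surjective xq
  have hφx2 : φ x2 ≠ 1 := hφq
  have hφB : ∀ g ∈ B, φ g = 1 := by
    intro g hg
    simp only [hφdef, MonoidHom.comp_apply, QuotientGroup.mk'_apply,
      (QuotientGroup.eq_one_iff g).mpr hg, map_one]
  -- find b ∈ B with z b = (z x2)⁻¹, producing a τ-fixed point x with φ x ≠ 1
  have hzmem : ∀ c : B, z (c : G) ∈ B := fun c => ⟨(c : G), rfl⟩
  let θ : B → B := fun c => ⟨z (c : G), hzmem c⟩
  have hθinj : Function.Injective θ := by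
    intro c d hcd
    have h1 : z (c : G) = z (d : G) := congrArg Subtype.val hcd
    have h2 : z ((c : G) * (d : G)⁻¹) = 1 := by
      have : z ((d : G)⁻¹) = (z (d : G))⁻¹ := by
        have := map_inv zhom (d : G)
        exact this
      rw [hzmul, this, h1, mul_inv_cancel]
    obtain ⟨g', hg'⟩ := B.mul_mem c.2 (B.inv_mem d.2)
    have h3 : z g' = 1 := by
      apply hfpf
      show τ (zhom g') = zhom g'
      rw [hg']
      exact (hz1 _).mp h2
    have h4 : (c : G) * (d : G)⁻¹ = 1 := by
      have h5 : zhom g' = (c : G) * (d : G)⁻¹ := hg'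
      rw [← h5]
      exact h3
    ext
    exact mul_inv_eq_one.mp h4
  have hθsurj : Function.Surjective θ := Finite.injective_iff_surjective.mp hθinj
  obtain ⟨c, hc⟩ := hθsurj ⟨(z x2)⁻¹, B.inv_mem ⟨x2, rfl⟩⟩
  set x : G := x2 * (c : G) with hxdef
  have hzx : z x = 1 := by
    have h1 : z (c : G) = (z x2)⁻¹ := congrArg Subtype.val hc
    rw [hxdef, hzmul, h1, mul_inv_cancel]
  have hτx : τ x = x := (hz1 x).mp hzx
  have hφx : φ x ≠ 1 := by
    rw [hxdef, map_mul, hφB (c : G) c.2, mul_one]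
    exact hφx2
  -- construct the automorphism δ : g ↦ g * b₀ ^ v g
  set v : G → ℕ := fun g => ((φ g).toAdd).val with hvdef
  set f : G → G := fun g => b₀ ^ v g with hfdef
  have hfmul : ∀ g h : G, f (g * h) = f g * f h := by
    intro g h
    have hkey : ∀ a b : ℕ, b₀ ^ ((a + b) % p) = b₀ ^ (a + b) := by
      intro a b
      rw [← hordb₀]
      exact pow_mod_orderOf b₀ _
    show b₀ ^ ((φ (g * h)).toAdd).val = b₀ ^ ((φ g).toAdd).val * b₀ ^ ((φ h).toAdd).val
    rw [map_mul, toAdd_mul, ZMod.val_add, hkey, pow_add]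
  have hfcent : ∀ (g x' : G), f g * x' = x' * f g := by
    intro g x'
    have h1 : Commute (z g₀) x' := hzc g₀ x'
    have h2 : Commute (f g) x' := by
      show Commute (b₀ ^ v g) x'
      rw [hb₀def, ← pow_mul]
      exact h1.pow_left _
    exact h2
  have hf_z : ∀ g : G, f g = z (g₀ ^ (p ^ (j - 1) * v g)) := by
    intro g
    show b₀ ^ v g = z (g₀ ^ (p ^ (j - 1) * v g))
    rw [hzpow, hb₀def, ← pow_mul]
  have hφf : ∀ g : G, φ (f g) = 1 := by
    intro g
    rw [hf_z]
    exact hφB _ ⟨_, rfl⟩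
  have hf1 : f 1 = 1 := by
    show b₀ ^ ((φ 1).toAdd).val = 1
    rw [map_one]
    simp
  let d : G →* G :=
    { toFun := fun g => g * f g
      map_one' := by show (1 : G) * f 1 = 1; rw [hf1, mul_one]
      map_mul' := by
        intro g h
        show g * h * f (g * h) = (g * f g) * (h * f h)
        rw [hfmul, mul_assoc g h _, ← mul_assoc h (f g) (f h), ← hfcent g h,
          mul_assoc (f g) h (f h), ← mul_assoc g (f g) _] }
  have hdinj : Function.Injective d := by
    intro g h hgh
    have h1 : φ (d g) = φ (d h) := by rw [hgh]
    have h2 : φ g = φ h := by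
      show φ g = φ h
      have e1 : φ (d g) = φ g := by
        show φ (g * f g) = φ g
        rw [map_mul, hφf, mul_one]
      have e2 : φ (d h) = φ h := by
        show φ (h * f h) = φ h
        rw [map_mul, hφf, mul_one]
      rw [← e1, ← e2, h1]
    have h3 : f g = f h := by
      show b₀ ^ ((φ g).toAdd).val = b₀ ^ ((φ h).toAdd).val
      rw [h2]
    have h4 : g * f g = h * f h := hgh
    rw [h3] at h4
    exact mul_right_cancel h4
  set δ : MulAut G := MulEquiv.ofBijective d (Finite.injective_iff_bijective.mp hdinj) with hδdef
  have hδapp : ∀ g : G, δ g = g * f g := fun g => rfl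
  -- derive the contradiction
  have h := hcommA τ δ
  have h2 := congrArg (fun ψ : MulAut G => ψ x) h
  simp only [MulAut.mul_apply] at h2
  rw [hτx] at h2
  have h2' : τ x * τ (f x) = x * f x := by
    rw [← map_mul]
    exact h2
  rw [hτx] at h2'
  have h3 : τ (f x) = f x := mul_left_cancel h2'
  have h4 : f x = 1 := by
    rw [hf_z] at h3 ⊢
    exact hfpf _ h3
  -- but f x ≠ 1
  have hvne : Multiplicative.toAdd (φ x) ≠ 0 := by
    intro h0
    apply hφx
    have h5 : Multiplicative.ofAdd (Multiplicative.toAdd (φ x)) = Multiplicative.ofAdd (0 : ZMod p) :=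
      congrArg _ h0
    simpa using h5
  have hvlt : v x < p := ZMod.val_lt _
  have hvpos : 0 < v x := by
    rcases Nat.eq_zero_or_pos (v x) with h0 | h0
    · exfalso
      apply hvne
      have := (ZMod.val_eq_zero _).mp h0
      exact this
    · exact h0
  have : orderOf b₀ ∣ v x := orderOf_dvd_iff_pow_eq_one.mpr h4
  rw [hordb₀] at this
  exact absurd (Nat.le_of_dvd hvpos this) (by omega)

/-- If `G` is a Miller `p`-group, then `Aut(G)` is a `p`-group. -/
theorem miller_pGroup_aut_isPGroup
    (p : ℕ) (hp : p.Prime) (G : Type*) [Group G]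
    (hG : IsMiller G) (hpG : IsPGroup p G) :
    IsPGroup p (MulAut G) := by
  haveI : Finite G := hG.1
  intro σ
  have hσ0 : orderOf σ ≠ 0 := (orderOf_pos σ).ne'
  refine ⟨(orderOf σ).factorization p, ?_⟩
  apply miller_coprime_aut_eq_one p hp G hG hpG
  rw [orderOf_pow, Nat.gcd_eq_right (Nat.ordProj_dvd _ _)]
  exact Nat.coprime_ordCompl hp hσ0
end

section
/- Let p be an odd prime and let G be a finite p-group of nilpotency class at most 2. Then G has a finite generating set {x_1, …, x_n} such that the cyclic subgroups generated by distinct generators intersect trivially: ⟨x_i⟩ ∩ ⟨x_j⟩ = 1 for all i ≠ j. -/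
/-! The Baer trick: a one-field structure carrying a commutative group
structure built from a class-two group of odd exponent. -/

open scoped commutatorElement

structure BaerT (G : Type*) where
  un : G

section Baer

variable {G : Type*} [Group G]

lemma baer_central_comm (hc : ∀ x y : G, ⁅x, y⁆ ∈ Subgroup.center G)
    (x y g : G) : g * ⁅x, y⁆ = ⁅x, y⁆ * g :=
  (Subgroup.mem_center_iff.mp (hc x y)) g

lemma baer_central_pow_comm (hc : ∀ x y : G, ⁅x, y⁆ ∈ Subgroup.center G)
    (m : ℕ) (x y g : G) : g * ⁅x, y⁆ ^ m = ⁅x, y⁆ ^ m * g :=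
  (Subgroup.mem_center_iff.mp (Subgroup.pow_mem _ (hc x y) m)) g

lemma baer_comm_mul_right (hc : ∀ x y : G, ⁅x, y⁆ ∈ Subgroup.center G)
    (u v w : G) : ⁅u, v * w⁆ = ⁅u, v⁆ * ⁅u, w⁆ := by
  have h : v⁻¹ * (u * w * u⁻¹ * w⁻¹) = u * w * u⁻¹ * w⁻¹ * v⁻¹ := by
    have := baer_central_comm hc u w v⁻¹
    simpa [commutatorElement_def] using this
  simp only [commutatorElement_def, mul_inv_rev]
  calc u * (v * w) * u⁻¹ * (w⁻¹ * v⁻¹)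
      = (u * v * u⁻¹) * (u * w * u⁻¹ * w⁻¹ * v⁻¹) := by group
    _ = (u * v * u⁻¹) * (v⁻¹ * (u * w * u⁻¹ * w⁻¹)) := by rw [← h]
    _ = u * v * u⁻¹ * v⁻¹ * (u * w * u⁻¹ * w⁻¹) := by group

lemma baer_comm_mul_left (hc : ∀ x y : G, ⁅x, y⁆ ∈ Subgroup.center G)
    (u v w : G) : ⁅u * v, w⁆ = ⁅u, w⁆ * ⁅v, w⁆ := by
  have h1 : ⁅u * v, w⁆ = ⁅w, u * v⁆⁻¹ := by rw [commutatorElement_inv]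
  rw [h1, baer_comm_mul_right hc, mul_inv_rev, commutatorElement_inv,
    commutatorElement_inv]
  exact (baer_central_comm hc v w _).symm

lemma baer_central_shift {a : G} (h : ∀ g : G, g * a = a * g) (x z : G) :
    x * a * z = x * z * a := by
  rw [mul_assoc, ← h z, ← mul_assoc]

lemma baer_assoc (hc : ∀ x y : G, ⁅x, y⁆ ∈ Subgroup.center G) (m : ℕ)
    (x y z : G) :
    (x * y * ⁅y, x⁆ ^ m) * z * ⁅z, x * y * ⁅y, x⁆ ^ m⁆ ^ m =
      x * (y * z * ⁅z, y⁆ ^ m) * ⁅y * z * ⁅z, y⁆ ^ m, x⁆ ^ m := by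
  have ha := baer_central_pow_comm hc m y x
  have hcc := baer_central_pow_comm hc m z y
  have h1 : ⁅z, x * y * ⁅y, x⁆ ^ m⁆ = ⁅z, x⁆ * ⁅z, y⁆ := by
    rw [baer_comm_mul_right hc, baer_comm_mul_right hc]
    have h0 : ⁅z, ⁅y, x⁆ ^ m⁆ = 1 := by
      rw [commutatorElement_eq_one_iff_mul_comm]
      exact ha z
    rw [h0, mul_one]
  have h2 : ⁅y * z * ⁅z, y⁆ ^ m, x⁆ = ⁅y, x⁆ * ⁅z, x⁆ := by
    rw [baer_comm_mul_left hc, baer_comm_mul_left hc]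
    have h0 : ⁅⁅z, y⁆ ^ m, x⁆ = 1 := by
      rw [commutatorElement_eq_one_iff_mul_comm]
      exact (hcc x).symm
    rw [h0, mul_one]
  have hComm1 : Commute ⁅z, x⁆ ⁅z, y⁆ := baer_central_comm hc z y ⁅z, x⁆
  have hComm2 : Commute ⁅y, x⁆ ⁅z, x⁆ := baer_central_comm hc z x ⁅y, x⁆
  rw [h1, h2, hComm1.mul_pow, hComm2.mul_pow]
  rw [baer_central_shift ha (x * y) z]
  calc x * y * z * ⁅y, x⁆ ^ m * (⁅z, x⁆ ^ m * ⁅z, y⁆ ^ m)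
      = x * y * z * (⁅y, x⁆ ^ m * ⁅z, x⁆ ^ m * ⁅z, y⁆ ^ m) := by
        simp only [mul_assoc]
    _ = x * y * z * (⁅z, y⁆ ^ m * (⁅y, x⁆ ^ m * ⁅z, x⁆ ^ m)) := by
        rw [hcc (⁅y, x⁆ ^ m * ⁅z, x⁆ ^ m)]
    _ = x * (y * z * ⁅z, y⁆ ^ m) * (⁅y, x⁆ ^ m * ⁅z, x⁆ ^ m) := by
        simp only [mul_assoc]

lemma baer_mul_comm (hc : ∀ x y : G, ⁅x, y⁆ ∈ Subgroup.center G) (m : ℕ)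
    (hm : ∀ g : G, g ^ (2 * m) = g) (x y : G) :
    x * y * ⁅y, x⁆ ^ m = y * x * ⁅x, y⁆ ^ m := by
  have hxy : x * y = ⁅x, y⁆ * (y * x) := by
    rw [commutatorElement_def]; group
  have hcent : ⁅x, y⁆ * (y * x) = y * x * ⁅x, y⁆ :=
    (baer_central_comm hc x y (y * x)).symm
  have hkey : ⁅x, y⁆ * ⁅y, x⁆ ^ m = ⁅x, y⁆ ^ m := by
    have h2 : ⁅x, y⁆ ^ m * ⁅x, y⁆ ^ m = ⁅x, y⁆ := by
      rw [← pow_add, ← two_mul]; exact hm _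
    have hinv : ⁅y, x⁆ = ⁅x, y⁆⁻¹ := (commutatorElement_inv x y).symm
    rw [hinv, inv_pow, mul_inv_eq_iff_eq_mul]
    exact h2.symm
  rw [hxy, hcent, mul_assoc, hkey]

lemma baer_one_mul (m : ℕ) (x : G) : 1 * x * ⁅x, (1 : G)⁆ ^ m = x := by simp

lemma baer_mul_one (m : ℕ) (x : G) : x * 1 * ⁅(1 : G), x⁆ ^ m = x := by simp

lemma baer_inv_mul (m : ℕ) (x : G) : x⁻¹ * x * ⁅x, x⁻¹⁆ ^ m = 1 := by
  have h : ⁅x, x⁻¹⁆ = 1 := ((Commute.refl x).inv_right).commutator_eq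
  simp [h]

/-- The Baer-trick commutative group structure. -/
def baerCommGroup (m : ℕ) (hc : ∀ x y : G, ⁅x, y⁆ ∈ Subgroup.center G)
    (hm : ∀ g : G, g ^ (2 * m) = g) : CommGroup (BaerT G) where
  mul x y := ⟨x.un * y.un * ⁅y.un, x.un⁆ ^ m⟩
  one := ⟨1⟩
  inv x := ⟨x.un⁻¹⟩
  mul_assoc x y z := congrArg BaerT.mk (baer_assoc hc m x.un y.un z.un)
  one_mul x := congrArg BaerT.mk (baer_one_mul m x.un)
  mul_one x := congrArg BaerT.mk (baer_mul_one m x.un)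
  inv_mul_cancel x := congrArg BaerT.mk (baer_inv_mul m x.un)
  mul_comm x y := congrArg BaerT.mk (baer_mul_comm hc m hm x.un y.un)

end Baer

/-- A finite `p`-group of class at most `2` (`p` odd) has a generating set
`x_1, …, x_n` with `⟨x_i⟩ ∩ ⟨x_j⟩ = 1` for `i ≠ j`. -/
theorem pGroup_class_two_generating_set_trivial_intersections
    (p : ℕ) (hp : p.Prime) (hodd : Odd p)
    (G : Type*) [Group G] [Finite G] (hpG : IsPGroup p G)
    (hclass : commutator G ≤ Subgroup.center G) :
    ∃ (n : ℕ) (x : Fin n → G),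
      Subgroup.closure (Set.range x) = ⊤ ∧
      ∀ i j : Fin n, i ≠ j →
        Subgroup.zpowers (x i) ⊓ Subgroup.zpowers (x j) = ⊥ := by
  classical
  haveI : Fact p.Prime := ⟨hp⟩
  obtain ⟨k, hk⟩ := IsPGroup.iff_card.mp hpG
  have hoddcard : Odd (Nat.card G) := hk ▸ hodd.pow
  obtain ⟨t, ht⟩ := hoddcard
  set m : ℕ := t + 1 with hmdef
  have h2m : 2 * m = Nat.card G + 1 := by omega
  have hm : ∀ g : G, g ^ (2 * m) = g := by
    intro g
    rw [h2m, pow_succ, pow_card_eq_one', one_mul]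
  have hc : ∀ x y : G, ⁅x, y⁆ ∈ Subgroup.center G := by
    intro x y
    exact hclass (by
      rw [commutator_def]
      exact Subgroup.commutator_mem_commutator (Subgroup.mem_top x) (Subgroup.mem_top y))
  letI instA : CommGroup (BaerT G) := baerCommGroup m hc hm
  letI : Finite (BaerT G) :=
    Finite.of_equiv G ⟨BaerT.mk, BaerT.un, fun _ => rfl, fun _ => rfl⟩
  have hmulA : ∀ x y : G, (BaerT.mk x) * (BaerT.mk y) = BaerT.mk (x * y * ⁅y, x⁆ ^ m) :=
    fun _ _ => rfl
  have hpow : ∀ (x : G) (n : ℕ), (BaerT.mk x) ^ n = BaerT.mk (x ^ n) := by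
    intro x n
    induction n with
    | zero => rw [pow_zero, pow_zero]; rfl
    | succ n ih =>
      rw [pow_succ, pow_succ, ih, hmulA]
      have h0 : ⁅x, x ^ n⁆ = 1 := ((Commute.refl x).pow_right n).commutator_eq
      rw [h0, one_pow, mul_one]
  have hzpow : ∀ (x : G) (kk : ℤ), (BaerT.mk x) ^ kk = BaerT.mk (x ^ kk) := by
    intro x kk
    cases kk with
    | ofNat n => rw [Int.ofNat_eq_coe, zpow_natCast, zpow_natCast, hpow]
    | negSucc n => rw [zpow_negSucc, zpow_negSucc, hpow]; rfl
  -- transfer generation from BaerT G to G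
  have hclosure : ∀ S : Set G,
      Subgroup.closure (BaerT.mk '' S) = (⊤ : Subgroup (BaerT G)) →
      Subgroup.closure S = (⊤ : Subgroup G) := by
    intro S hS
    rw [Subgroup.eq_top_iff']
    intro g
    set H := Subgroup.closure S with hH
    let K : Subgroup (BaerT G) :=
      { carrier := {a : BaerT G | a.un ∈ H}
        mul_mem' := by
          intro a b hha hhb
          have hcomm : ⁅b.un, a.un⁆ ∈ H := by
            rw [commutatorElement_def]
            exact Subgroup.mul_mem _ (Subgroup.mul_mem _ (Subgroup.mul_mem _ hhb hha)
              (Subgroup.inv_mem _ hhb)) (Subgroup.inv_mem _ hha)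
          exact Subgroup.mul_mem _ (Subgroup.mul_mem _ hha hhb)
            (Subgroup.pow_mem _ hcomm m)
        one_mem' := Subgroup.one_mem H
        inv_mem' := by
          intro a hha
          exact Subgroup.inv_mem H hha }
    have hSK : BaerT.mk '' S ⊆ (K : Set (BaerT G)) := by
      rintro _ ⟨s, hs, rfl⟩
      exact Subgroup.subset_closure hs
    have hle : Subgroup.closure (BaerT.mk '' S) ≤ K := (Subgroup.closure_le K).mpr hSK
    rw [hS] at hle
    exact hle (Subgroup.mem_top (BaerT.mk g))
  -- structure theorem for the abelian group BaerT G
  obtain ⟨ι, hι, d, hd, ⟨e⟩⟩ :=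
    CommGroup.equiv_prod_multiplicative_zmod_of_finite (BaerT G)
  set n := Fintype.card ι with hn
  set σ : Fin n ≃ ι := (Fintype.equivFin ι).symm with hσ
  haveI : ∀ i : ι, NeZero (d i) := fun i => ⟨by have := hd i; omega⟩
  set xA : Fin n → BaerT G := fun i =>
    e.symm (Pi.mulSingle (M := fun j => Multiplicative (ZMod (d j))) (σ i)
      (Multiplicative.ofAdd (1 : ZMod (d (σ i))))) with hxA
  refine ⟨n, fun i => (xA i).un, ?_, ?_⟩
  · -- generation
    apply hclosure
    rw [Subgroup.eq_top_iff']
    intro a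
    have hrange : BaerT.mk '' (Set.range fun i => (xA i).un) = Set.range xA := by
      ext b
      constructor
      · rintro ⟨_, ⟨i, rfl⟩, rfl⟩; exact ⟨i, rfl⟩
      · rintro ⟨i, rfl⟩; exact ⟨(xA i).un, ⟨i, rfl⟩, rfl⟩
    rw [hrange]
    have key : ∀ i : ι, e.symm (Pi.mulSingle i ((e a) i)) ∈
        Subgroup.closure (Set.range xA) := by
      intro i
      have h1 : Pi.mulSingle i ((e a) i)
          = (Pi.mulSingle (M := fun j => Multiplicative (ZMod (d j))) i
              (Multiplicative.ofAdd (1 : ZMod (d i)))) ^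
            ((Multiplicative.toAdd ((e a) i)).val) := by
        rw [← Pi.mulSingle_pow]
        rw [← ofAdd_nsmul, nsmul_eq_mul, mul_one, ZMod.natCast_val, ZMod.cast_id,
          ofAdd_toAdd]
      rw [h1, map_pow]
      apply Subgroup.pow_mem
      apply Subgroup.subset_closure
      obtain ⟨j, hj⟩ := σ.surjective i
      subst hj
      exact ⟨j, rfl⟩
    have ha : a = e.symm (∏ i : ι, Pi.mulSingle i ((e a) i)) := by
      rw [Finset.univ_prod_mulSingle, MulEquiv.symm_apply_apply]
    rw [ha, map_prod]
    exact Subgroup.prod_mem _ fun i _ => key i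
  · -- trivial intersections
    intro i j hij
    have hσij : σ i ≠ σ j := fun h => hij (σ.injective h)
    rw [Subgroup.eq_bot_iff_forall]
    intro g hg
    rw [Subgroup.mem_inf] at hg
    obtain ⟨hgi, hgj⟩ := hg
    obtain ⟨a, hga⟩ := Subgroup.mem_zpowers_iff.mp hgi
    obtain ⟨b, hgb⟩ := Subgroup.mem_zpowers_iff.mp hgj
    have hga' : (xA i) ^ a = BaerT.mk g := by
      have : BaerT.mk ((xA i).un) = xA i := rfl
      rw [← this, hzpow, hga]
    have hgb' : (xA j) ^ b = BaerT.mk g := by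
      have : BaerT.mk ((xA j).un) = xA j := rfl
      rw [← this, hzpow, hgb]
    have hei : e (BaerT.mk g) = Pi.mulSingle (σ i)
        ((Multiplicative.ofAdd (1 : ZMod (d (σ i)))) ^ a) := by
      rw [← hga', map_zpow, hxA]
      simp [Pi.mulSingle_zpow]
    have hej : e (BaerT.mk g) = Pi.mulSingle (σ j)
        ((Multiplicative.ofAdd (1 : ZMod (d (σ j)))) ^ b) := by
      rw [← hgb', map_zpow, hxA]
      simp [Pi.mulSingle_zpow]
    have hval : (Multiplicative.ofAdd (1 : ZMod (d (σ i)))) ^ a = 1 := by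
      have h1 := congrFun hej (σ i)
      rw [Pi.mulSingle_eq_of_ne hσij] at h1
      have h2 := congrFun hei (σ i)
      rw [Pi.mulSingle_eq_same] at h2
      rw [← h2, h1]
    have hONE : e (BaerT.mk g) = 1 := by
      rw [hei, hval, Pi.mulSingle_one]
    have hg1 : BaerT.mk g = (1 : BaerT G) := by
      apply e.injective
      rw [hONE, map_one]
    exact congrArg BaerT.un hg1
end

section
/- If p is an odd prime and G is a Miller p-group, then G is purely non-abelian. -/
/-- A group is purely non-abelian if it has no non-trivial abelian direct factor:
whenever `G ≃* A × N` with `A` abelian, `A` is trivial. -/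
def PurelyNonAbelian (G : Type u) [Group G] : Prop :=
  ∀ (A N : Type u) [Group A] [Group N],
    (∀ a b : A, a * b = b * a) → Nonempty (G ≃* A × N) → ∀ a : A, a = 1

/-- From a nontrivial element of `p`-power order, produce a power of it of order exactly `p`. -/
lemma aux_exists_pow_orderOf_eq_prime {X : Type*} [Group X] {p : ℕ} (hp : p.Prime)
    {x : X} (hx : x ≠ 1) {k : ℕ} (h : x ^ p ^ k = 1) : ∃ m : ℕ, orderOf (x ^ m) = p := by
  have hdvd : orderOf x ∣ p ^ k := orderOf_dvd_of_pow_eq_one h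
  obtain ⟨m, hmk, hord⟩ := (Nat.dvd_prime_pow hp).mp hdvd
  have hm0 : m ≠ 0 := by
    rintro rfl
    exact hx (orderOf_eq_one_iff.mp (by simpa using hord))
  refine ⟨p ^ (m - 1), ?_⟩
  set y := x ^ p ^ (m - 1) with hy
  have hyp : y ^ p = 1 := by
    rw [hy, ← pow_mul, ← pow_succ,
      Nat.sub_add_cancel (Nat.one_le_iff_ne_zero.mpr hm0), ← hord]
    exact pow_orderOf_eq_one x
  have hy1 : y ≠ 1 := by
    intro hy1
    have h1 : orderOf x ∣ p ^ (m - 1) := orderOf_dvd_of_pow_eq_one hy1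
    rw [hord] at h1
    have h2 := Nat.le_of_dvd (pow_pos hp.pos _) h1
    have h3 := (Nat.pow_lt_pow_iff_right hp.one_lt).mpr (Nat.sub_lt (Nat.pos_of_ne_zero hm0) one_pos)
    omega
  have hdy : orderOf y ∣ p := orderOf_dvd_of_pow_eq_one hyp
  rcases Nat.Prime.eq_one_or_self_of_dvd hp _ hdy with h1 | h1
  · exact absurd (orderOf_eq_one_iff.mp h1) hy1
  · exact h1

/-- A Miller `p`-group, `p` odd, is purely non-abelian. -/
theorem miller_pGroup_purelyNonAbelian
    (p : ℕ) (hp : p.Prime) (hodd : Odd p)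
    (G : Type u) [Group G] (hG : IsMiller G) (hpG : IsPGroup p G) :
    PurelyNonAbelian G := by
  intro A N _ _ hA he a
  obtain ⟨e⟩ := he
  by_contra ha
  haveI : Fact p.Prime := ⟨hp⟩
  obtain ⟨hfin, ⟨u, v, huv⟩, hcomm⟩ := hG
  haveI : Finite G := hfin
  haveI : Finite (A × N) := Finite.of_equiv G e.toEquiv
  haveI : Finite A := Finite.of_surjective (Prod.fst : A × N → A) Prod.fst_surjective
  haveI : Finite N := Finite.of_surjective (Prod.snd : A × N → N) Prod.snd_surjective
  letI : CommGroup A := { (inferInstance : Group A) with mul_comm := hA }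
  -- every element of A and N has p-power order
  have hpA : ∀ x : A, ∃ k, x ^ p ^ k = 1 := by
    intro x
    obtain ⟨k, hk⟩ := hpG (e.symm (x, 1))
    refine ⟨k, ?_⟩
    have h1 : ((x, (1 : N)) : A × N) ^ p ^ k = 1 := by
      apply e.symm.injective
      rw [map_pow, hk, map_one]
    simpa using congrArg Prod.fst h1
  have hpN : ∀ x : N, ∃ k, x ^ p ^ k = 1 := by
    intro x
    obtain ⟨k, hk⟩ := hpG (e.symm (1, x))
    refine ⟨k, ?_⟩
    have h1 : (((1 : A), x) : A × N) ^ p ^ k = 1 := by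
      apply e.symm.injective
      rw [map_pow, hk, map_one]
    simpa using congrArg Prod.snd h1
  -- N is nontrivial
  haveI : Nontrivial N := by
    by_contra hnt
    haveI := not_nontrivial_iff_subsingleton.mp hnt
    apply huv
    apply e.injective
    rw [map_mul, map_mul]
    ext
    · exact hA _ _
    · exact Subsingleton.elim _ _
  -- a central element z₀ of N of order p
  have hpNgrp : IsPGroup p N := hpN
  haveI : Nontrivial (Subgroup.center N) := hpNgrp.center_nontrivial
  obtain ⟨⟨z, hzc⟩, hz1⟩ := exists_ne (1 : Subgroup.center N)
  have hzne : z ≠ 1 := fun h => hz1 (Subtype.ext h)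
  obtain ⟨k, hk⟩ := hpN z
  obtain ⟨m, hm⟩ := aux_exists_pow_orderOf_eq_prime hp hzne hk
  set z₀ : N := z ^ m with hz₀
  have hz₀c : z₀ ∈ Subgroup.center N := Subgroup.pow_mem _ hzc m
  have hz₀ord : orderOf z₀ = p := hm
  have hz₀p : z₀ ^ p = 1 := by rw [← hz₀ord]; exact pow_orderOf_eq_one z₀
  -- an element a₀ of A of order p
  obtain ⟨k', hk'⟩ := hpA a
  obtain ⟨m', hm'⟩ := aux_exists_pow_orderOf_eq_prime hp ha hk'
  set a₀ : A := a ^ m' with ha₀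
  have ha₀ord : orderOf a₀ = p := hm'
  have ha₀ne : a₀ ≠ 1 := by
    intro h
    rw [h, orderOf_one] at ha₀ord
    exact hp.ne_one ha₀ord.symm
  have ha₀p : a₀ ^ p = 1 := by rw [← ha₀ord]; exact pow_orderOf_eq_one a₀
  -- the subgroup pA and the quotient by it
  haveI : Finite (Additive A) := Finite.of_equiv A Additive.ofMul
  let psmul : Additive A →+ Additive A :=
    AddMonoidHom.mk' (fun x => p • x) (fun x y => nsmul_add x y p)
  have hninj : ¬ Function.Injective psmul := by
    intro hinj
    apply ha₀ne
    have h0 : psmul (Additive.ofMul a₀) = psmul 0 := by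
      show p • Additive.ofMul a₀ = p • (0 : Additive A)
      rw [← ofMul_pow, ha₀p, smul_zero]
      rfl
    have := hinj h0
    simpa using this
  have hnsurj : ¬ Function.Surjective psmul :=
    fun h => hninj (Finite.injective_iff_surjective.mpr h)
  rw [Function.Surjective] at hnsurj
  push_neg at hnsurj
  obtain ⟨x, hx⟩ := hnsurj
  set H : AddSubgroup (Additive A) := psmul.range with hH
  haveI : Module (ZMod p) (Additive A ⧸ H) :=
    QuotientAddGroup.zmodModule (fun y => ⟨y, rfl⟩)
  have hQx : ((x : Additive A ⧸ H)) ≠ 0 := by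
    intro h
    obtain ⟨y, hy⟩ := (QuotientAddGroup.eq_zero_iff x).mp h
    exact hx y hy
  -- a linear functional not vanishing at the class of x
  have hsome : ∃ φ : Module.Dual (ZMod p) (Additive A ⧸ H),
      φ ((x : Additive A ⧸ H)) ≠ 0 := by
    by_contra hall
    push_neg at hall
    exact hQx ((Module.forall_dual_apply_eq_zero_iff (ZMod p) _).mp hall)
  obtain ⟨f, hf⟩ := hsome
  -- the homomorphism ζ : ZMod p →+ Additive N sending 1 to z₀
  have hzeta0 : (zmultiplesHom (Additive N) (Additive.ofMul z₀)) (p : ℤ) = 0 := by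
    have h1 : z₀ ^ (p : ℤ) = 1 := by
      rw [zpow_natCast]; exact hz₀p
    show (p : ℤ) • Additive.ofMul z₀ = 0
    rw [← ofMul_zpow, h1]
    rfl
  let ζ : ZMod p →+ Additive N :=
    ZMod.lift p ⟨zmultiplesHom (Additive N) (Additive.ofMul z₀), hzeta0⟩
  have hζ : ∀ c : ZMod p, Additive.toMul (ζ c) = z₀ ^ c.val := by
    intro c
    have hc : (((c.val : ℤ)) : ZMod p) = c := by
      push_cast
      simp [ZMod.natCast_val, ZMod.cast_id]
    conv_lhs => rw [← hc]
    rw [ZMod.lift_coe]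
    show Additive.toMul ((c.val : ℤ) • Additive.ofMul z₀) = _
    rw [toMul_zsmul, zpow_natCast]
    rfl
  -- the homomorphism g : A →* N
  let F : Additive A →+ Additive N :=
    ζ.comp (f.toAddMonoidHom.comp (QuotientAddGroup.mk' H))
  let g : A →* N := MonoidHom.toAdditive.symm F
  have hg : ∀ b : A, g b =
      z₀ ^ (f (((Additive.ofMul b : Additive A) : Additive A ⧸ H))).val := by
    intro b
    show Additive.toMul (F (Additive.ofMul b)) = _
    exact hζ _
  have hgc : ∀ b : A, g b ∈ Subgroup.center N := by
    intro b
    rw [hg]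
    exact Subgroup.pow_mem _ hz₀c _
  -- g does not vanish at b₀
  let b₀ : A := Additive.toMul x
  let vv : ℕ := (f ((x : Additive A ⧸ H))).val
  have hwval : g b₀ = z₀ ^ vv := hg b₀
  have hvlt : vv < p := ZMod.val_lt _
  have hvne : vv ≠ 0 := fun h0 => hf ((ZMod.val_eq_zero _).mp h0)
  have hwne : g b₀ ≠ 1 := by
    intro h1
    rw [hwval] at h1
    have hd : p ∣ vv := by rw [← hz₀ord]; exact orderOf_dvd_of_pow_eq_one h1
    exact hvne (Nat.eq_zero_of_dvd_of_lt hd hvlt)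
  have hwp : (g b₀) ^ p = 1 := by
    rw [hwval, ← pow_mul, mul_comm, pow_mul, hz₀p, one_pow]
  -- two automorphisms of A × N
  let φ' : (A × N) ≃* (A × N) := (MulEquiv.inv A).prodCongr (MulEquiv.refl N)
  let ψ' : (A × N) ≃* (A × N) :=
  { toFun := fun q => (q.1, q.2 * g q.1)
    invFun := fun q => (q.1, q.2 * (g q.1)⁻¹)
    left_inv := fun q => by simp
    right_inv := fun q => by simp
    map_mul' := fun q r => by
      ext
      · rfl
      · show q.2 * r.2 * g (q.1 * r.1) = q.2 * g q.1 * (r.2 * g r.1)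
        rw [map_mul]
        have hc := (Subgroup.mem_center_iff.mp (hgc q.1)) r.2
        simp only [mul_assoc]
        rw [← mul_assoc r.2, hc, mul_assoc] }
  -- commuting automorphisms of G
  have key : ∀ q : A × N, φ' (ψ' q) = ψ' (φ' q) := by
    intro q
    have h := hcomm ((e.trans φ').trans e.symm) ((e.trans ψ').trans e.symm)
    have h2 := DFunLike.congr_fun h (e.symm q)
    simp only [MulAut.mul_apply, MulEquiv.trans_apply, MulEquiv.apply_symm_apply] at h2
    exact e.symm.injective h2
  have hk2 := key (b₀, 1)
  have hφψ : φ' (ψ' (b₀, 1)) = (b₀⁻¹, g b₀) := by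
    show ((b₀ : A)⁻¹, (1 : N) * g b₀) = (b₀⁻¹, g b₀)
    rw [one_mul]
  have hψφ : ψ' (φ' (b₀, 1)) = (b₀⁻¹, (g b₀)⁻¹) := by
    show ((b₀ : A)⁻¹, (1 : N) * g b₀⁻¹) = (b₀⁻¹, (g b₀)⁻¹)
    rw [one_mul, map_inv]
  rw [hφψ, hψφ] at hk2
  have hinv : g b₀ = (g b₀)⁻¹ := congrArg Prod.snd hk2
  have hw2 : (g b₀) ^ 2 = 1 := by
    rw [pow_two, eq_inv_iff_mul_eq_one.mp hinv]
  obtain ⟨t, ht⟩ := hodd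
  have hwone : g b₀ = 1 := by
    have h1 : (g b₀) ^ (2 * t + 1) = 1 := by rw [← ht]; exact hwp
    rwa [pow_succ, pow_mul, hw2, one_pow, one_mul] at h1
  exact hwne hwone
end

section
/- Let p be a prime, let A be a non-trivial finite abelian p-group and let N be a finite purely non-abelian p-group. Then the direct product G = A × N is a Miller group if and only if: p = 2, A is cyclic of order 2^n for some n ≥ 2, and N is a special Miller 2-group. -/
open Subgroup
open scoped commutatorElement

namespace EarnleyAux


lemma pow_mod_eq {C : Type*} [Group C] {c : C} {m : ℕ} (hc : c ^ m = 1) (k : ℕ) :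
    c ^ (k % m) = c ^ k := by
  conv_rhs => rw [← Nat.div_add_mod k m]
  rw [pow_add, pow_mul, hc, one_pow, one_mul]

lemma sq_one_zpow_odd {C : Type*} [Group C] {x : C} (hx : x ^ 2 = 1) {k : ℤ} (hk : Odd k) :
    x ^ k = x := by
  obtain ⟨t, rfl⟩ := hk
  have h2 : x ^ (2 : ℤ) = 1 := by
    rw [show (2:ℤ) = ((2:ℕ):ℤ) from rfl, zpow_natCast, hx]
  rw [zpow_add, zpow_one, show (2:ℤ) * t = 2 * t from rfl, zpow_mul, h2, one_zpow, one_mul]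

lemma conj_eq_of_center {G : Type*} [Group G] {c : G} (hc : c ∈ center G) (x g : G) :
    (x * c) * g * (x * c)⁻¹ = x * g * x⁻¹ := by
  have h := Subgroup.mem_center_iff.mp hc g
  rw [mul_inv_rev]
  calc x * c * g * (c⁻¹ * x⁻¹) = x * (c * g * c⁻¹) * x⁻¹ := by group
  _ = x * g * x⁻¹ := by rw [← h, mul_inv_cancel_right]

lemma commutator_mul_central {G : Type*} [Group G] {c c' : G}
    (hc : c ∈ center G) (hc' : c' ∈ center G) (x y : G) :
    ⁅x * c, y * c'⁆ = ⁅x, y⁆ := by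
  have s2 : c' * x⁻¹ = x⁻¹ * c' := (Subgroup.mem_center_iff.mp hc' x⁻¹).symm
  calc ⁅x * c, y * c'⁆ = (x*c)*(y*c')*(x*c)⁻¹*(y*c')⁻¹ := commutatorElement_def _ _
  _ = x*(y*c')*x⁻¹*(y*c')⁻¹ := by rw [conj_eq_of_center hc]
  _ = x*y*(c'*x⁻¹)*(y*c')⁻¹ := by group
  _ = x*y*(x⁻¹*c')*(y*c')⁻¹ := by rw [s2]
  _ = ⁅x, y⁆ := by rw [commutatorElement_def]; group

/-- membership in the center of a product -/
lemma center_prod_snd {A N : Type*} [Group A] [Group N] {x : A × N}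
    (hx : x ∈ center (A × N)) : x.2 ∈ center N := by
  rw [Subgroup.mem_center_iff] at hx ⊢
  intro g
  have := hx (1, g)
  rw [Prod.ext_iff] at this
  exact this.2

lemma mk_mem_center_prod {A N : Type*} [Group A] [Group N]
    (habA : ∀ a b : A, a * b = b * a) {a : A} {n : N} (hn : n ∈ center N) :
    (a, n) ∈ center (A × N) := by
  rw [Subgroup.mem_center_iff] at hn ⊢
  intro g
  exact Prod.ext (habA _ _) (hn g.2)

/-- Homomorphism out of `Multiplicative (ZMod m)` determined by the image of `1`. -/
lemma homZMod {C : Type*} [Group C] (m : ℕ) [NeZero m] {c : C} (hc : c ^ m = 1) :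
    ∃ f : Multiplicative (ZMod m) →* C, ∀ x : Multiplicative (ZMod m),
      f x = c ^ (Multiplicative.toAdd x).val := by
  refine ⟨MonoidHom.mk' (fun x => c ^ (Multiplicative.toAdd x).val) ?_, fun _ => rfl⟩
  intro x y
  show c ^ (Multiplicative.toAdd (x * y)).val
      = c ^ (Multiplicative.toAdd x).val * c ^ (Multiplicative.toAdd y).val
  have h : (Multiplicative.toAdd (x * y)).val
      = ((Multiplicative.toAdd x).val + (Multiplicative.toAdd y).val) % m := by
    simp [ZMod.val_add]
  rw [h, pow_mod_eq hc, pow_add]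

/-- Homomorphism out of a finite cyclic group hitting a prescribed element. -/
lemma homCyclic {A C : Type*} [Group A] [Finite A] (hcyc : IsCyclic A) {c : C} [Group C]
    (hc : c ^ (Nat.card A) = 1) :
    ∃ f : A →* C, (∀ x, f x ∈ Subgroup.zpowers c) ∧ ∃ a : A, f a = c := by
  have hpos : 0 < Nat.card A := Nat.card_pos
  rcases eq_or_lt_of_le (show 1 ≤ Nat.card A from hpos) with h1 | h1
  · -- trivial group, c = 1
    have hc1 : c = 1 := by rw [← pow_one c, show 1 = Nat.card A from h1, hc]
    exact ⟨1, fun x => by simp [hc1], ⟨1, by simp [hc1]⟩⟩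
  · haveI : NeZero (Nat.card A) := ⟨hpos.ne'⟩
    obtain ⟨f₀, hf₀⟩ := homZMod (Nat.card A) hc
    set e := zmodCyclicMulEquiv hcyc
    refine ⟨f₀.comp e.symm.toMonoidHom, fun x => by
      rw [MonoidHom.comp_apply, hf₀]; exact pow_mem (Subgroup.mem_zpowers c) _, ?_⟩
    refine ⟨e (Multiplicative.ofAdd 1), ?_⟩
    rw [MonoidHom.comp_apply]
    simp only [MulEquiv.coe_toMonoidHom, MulEquiv.symm_apply_apply]
    rw [hf₀]
    have : (Multiplicative.toAdd (Multiplicative.ofAdd (1 : ZMod (Nat.card A)))).val = 1 := by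
      simp [ZMod.val_one_eq_one_mod, Nat.mod_eq_of_lt h1]
    rw [this, pow_one]

/-- In a finite p-group, a subgroup that together with the commutator subgroup generates
the whole group is the whole group. -/
theorem sup_commutator_eq_top {p : ℕ} (hp : p.Prime) :
    ∀ (k : ℕ) (N : Type*) (_ : Group N) (_ : Finite N), Nat.card N ≤ k → IsPGroup p N →
      ∀ H : Subgroup N, H ⊔ commutator N = ⊤ → H = ⊤ := by
  intro k
  induction k with
  | zero => intro N _ _ hcard _ H _
            exact absurd hcard (by simpa using Nat.card_pos.ne')
  | succ k ih =>
    intro N instG instF hcard hpN H hsup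
    haveI : Fact p.Prime := ⟨hp⟩
    rcases subsingleton_or_nontrivial N with hs | hnt
    · exact Subsingleton.elim _ _
    by_cases hZ : center N = ⊤
    · have hcomm : commutator N = ⊥ := by
        rw [_root_.commutator_def, eq_bot_iff]
        rw [Subgroup.commutator_le]
        intro x _ y _
        rw [Subgroup.mem_bot, commutatorElement_eq_one_iff_mul_comm]
        have : y ∈ center N := by rw [hZ]; trivial
        exact Subgroup.mem_center_iff.mp this x
      rwa [hcomm, sup_bot_eq] at hsup
    · haveI := IsPGroup.center_nontrivial hpN
      set Z := center N with hZdef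
      set Q := N ⧸ Z
      have hQp : IsPGroup p Q := hpN.to_quotient Z
      set π := QuotientGroup.mk' Z with hπ
      have hπs : Function.Surjective π := QuotientGroup.mk'_surjective Z
      have hcQ : Nat.card Q < Nat.card N := by
        have h1 : Nat.card N = Nat.card Q * Nat.card Z :=
          Subgroup.card_eq_card_quotient_mul_card_subgroup Z
        have h2 : 1 < Nat.card Z := by
          have := Nat.card_pos (α := Z)
          rcases Nat.lt_or_ge 1 (Nat.card Z) with h | h
          · exact h
          · exfalso
            have h1 : Nat.card Z = 1 := le_antisymm h this
            have := Nat.card_eq_one_iff_unique.mp h1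
            exact (not_subsingleton_iff_nontrivial.mpr ‹Nontrivial Z›) this.1
        have h3 : 0 < Nat.card Q := Nat.card_pos
        calc Nat.card Q = Nat.card Q * 1 := (mul_one _).symm
        _ < Nat.card Q * Nat.card Z := by
          exact (Nat.mul_lt_mul_left h3).mpr h2
        _ = Nat.card N := h1.symm
      have hmap : Subgroup.map π H ⊔ commutator Q = ⊤ := by
        have h1 : Subgroup.map π (H ⊔ commutator N) = ⊤ := by
          rw [hsup]
          exact Subgroup.map_top_of_surjective π hπs
        rw [Subgroup.map_sup] at h1
        have h2 : Subgroup.map π (commutator N) = commutator Q := by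
          rw [_root_.commutator_def, _root_.commutator_def, Subgroup.map_commutator,
            Subgroup.map_top_of_surjective π hπs]
        rwa [h2] at h1
      have hHQ : Subgroup.map π H = ⊤ :=
        ih Q inferInstance inferInstance (by omega) hQp _ hmap
      -- every element of N is h * z with h ∈ H, z central
      have hdec : ∀ x : N, ∃ h ∈ H, ∃ z ∈ center N, x = h * z := by
        intro x
        have : π x ∈ Subgroup.map π H := by rw [hHQ]; trivial
        obtain ⟨h, hh, hhx⟩ := this
        refine ⟨h, hh, h⁻¹ * x, ?_, by group⟩
        have : h⁻¹ * x ∈ π.ker := by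
          rw [MonoidHom.mem_ker, map_mul, map_inv, hhx, inv_mul_cancel]
        rwa [hπ, QuotientGroup.ker_mk'] at this
      have hcomm_le : commutator N ≤ H := by
        rw [_root_.commutator_def, Subgroup.commutator_le]
        intro x _ y _
        obtain ⟨h, hh, z, hz, rfl⟩ := hdec x
        obtain ⟨h', hh', z', hz', rfl⟩ := hdec y
        rw [commutator_mul_central hz hz']
        rw [commutatorElement_def]
        exact mul_mem (mul_mem (mul_mem hh hh') (inv_mem hh)) (inv_mem hh')
      rw [← hsup, sup_eq_left.mpr hcomm_le]

theorem commutator_ne_top {p : ℕ} (hp : p.Prime) (N : Type*) [Group N] [Finite N] [Nontrivial N]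
    (hpN : IsPGroup p N) : commutator N ≠ ⊤ := by
  intro h
  have := sup_commutator_eq_top hp (Nat.card N) N inferInstance inferInstance le_rfl hpN ⊥
    (by rw [h, bot_sup_eq])
  obtain ⟨x, hx⟩ := exists_ne (1 : N)
  have hxmem : x ∈ (⊥ : Subgroup N) := by rw [this]; trivial
  exact hx (Subgroup.mem_bot.mp hxmem)

/-- Separation: a surjective character onto a cyclic group detecting a given element. -/
theorem sep {B : Type*} [CommGroup B] [Finite B] {b : B} (hb : b ≠ 1) :
    ∃ (m : ℕ) (χ : B →* Multiplicative (ZMod m)), 1 < m ∧ m ∣ Monoid.exponent B ∧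
      Function.Surjective χ ∧ χ b ≠ 1 := by
  obtain ⟨ι, hfin, n, hn, ⟨e⟩⟩ := CommGroup.equiv_prod_multiplicative_zmod_of_finite B
  classical
  obtain ⟨i, hi⟩ : ∃ i, e b i ≠ 1 := by
    by_contra h
    push_neg at h
    apply hb
    apply e.injective
    rw [map_one]
    funext j
    exact h j
  refine ⟨n i, (Pi.evalMonoidHom _ i).comp e.toMonoidHom, hn i, ?_, ?_, hi⟩
  · have : n i = orderOf (e.symm <| Pi.mulSingle i <| Multiplicative.ofAdd 1) := by
      simpa only [MulEquiv.orderOf_eq, orderOf_piMulSingle, orderOf_ofAdd_eq_addOrderOf]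
        using (ZMod.addOrderOf_one (n i)).symm
    exact this ▸ Monoid.order_dvd_exponent _
  · intro y
    exact ⟨e.symm (Pi.mulSingle i y), by
      simp [MonoidHom.comp_apply, Pi.evalMonoidHom_apply]⟩

variable {A N : Type*} [Group A] [Group N]

/-- The automorphism (a,n) ↦ (a, f(a)n) for f : A →* N with central image. -/
def alphaAut (f : A →* N) (hf : ∀ a, f a ∈ center N) : MulAut (A × N) where
  toFun x := (x.1, f x.1 * x.2)
  invFun x := (x.1, (f x.1)⁻¹ * x.2)
  left_inv x := by
    refine Prod.ext rfl ?_
    simp [← mul_assoc]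
  right_inv x := by
    refine Prod.ext rfl ?_
    simp [← mul_assoc]
  map_mul' x y := by
    refine Prod.ext rfl ?_
    show f (x.1 * y.1) * (x.2 * y.2) = (f x.1 * x.2) * (f y.1 * y.2)
    rw [map_mul]
    have h : x.2 * f y.1 = f y.1 * x.2 := Subgroup.mem_center_iff.mp (hf y.1) x.2
    calc f x.1 * f y.1 * (x.2 * y.2) = f x.1 * (f y.1 * x.2) * y.2 := by group
    _ = f x.1 * (x.2 * f y.1) * y.2 := by rw [h]
    _ = (f x.1 * x.2) * (f y.1 * y.2) := by group

@[simp] lemma alphaAut_apply (f : A →* N) (hf : ∀ a, f a ∈ center N) (x : A × N) :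
    alphaAut f hf x = (x.1, f x.1 * x.2) := rfl

/-- The automorphism (a,n) ↦ (a·g(n), n) for g : N →* A, with A abelian. -/
def betaAut (habA : ∀ a b : A, a * b = b * a) (g : N →* A) : MulAut (A × N) where
  toFun x := (x.1 * g x.2, x.2)
  invFun x := (x.1 * (g x.2)⁻¹, x.2)
  left_inv x := by
    refine Prod.ext ?_ rfl
    simp [mul_assoc]
  right_inv x := by
    refine Prod.ext ?_ rfl
    simp [mul_assoc]
  map_mul' x y := by
    refine Prod.ext ?_ rfl
    show (x.1 * y.1) * g (x.2 * y.2) = (x.1 * g x.2) * (y.1 * g y.2)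
    rw [map_mul]
    have h : y.1 * g x.2 = g x.2 * y.1 := habA _ _
    calc x.1 * y.1 * (g x.2 * g y.2) = x.1 * (y.1 * g x.2) * g y.2 := by group
    _ = x.1 * (g x.2 * y.1) * g y.2 := by rw [h]
    _ = (x.1 * g x.2) * (y.1 * g y.2) := by group

@[simp] lemma betaAut_apply (habA : ∀ a b : A, a * b = b * a) (g : N →* A) (x : A × N) :
    betaAut habA g x = (x.1 * g x.2, x.2) := rfl

/-- The automorphism (a,n) ↦ (a⁻¹, n), with A abelian. -/
def invAut (habA : ∀ a b : A, a * b = b * a) : MulAut (A × N) where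
  toFun x := (x.1⁻¹, x.2)
  invFun x := (x.1⁻¹, x.2)
  left_inv x := by simp
  right_inv x := by simp
  map_mul' x y := by
    refine Prod.ext ?_ rfl
    show (x.1 * y.1)⁻¹ = x.1⁻¹ * y.1⁻¹
    rw [mul_inv_rev, habA]

@[simp] lemma invAut_apply (habA : ∀ a b : A, a * b = b * a) (x : A × N) :
    invAut (N := N) habA x = (x.1⁻¹, x.2) := rfl

/-- Automorphisms of the factors commute if all automorphisms of the product commute. -/
lemma mulAut_factor_comm_left (hM : ∀ φ ψ : MulAut (A × N), φ * ψ = ψ * φ)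
    (φ ψ : MulAut A) : ∀ a, φ (ψ a) = ψ (φ a) := by
  intro a
  have h := hM (MulEquiv.prodCongr φ (MulEquiv.refl N)) (MulEquiv.prodCongr ψ (MulEquiv.refl N))
  have h2 := congrArg (fun e : MulAut (A × N) => (e (a, (1 : N))).1) h
  exact h2

lemma mulAut_factor_comm_right (hM : ∀ φ ψ : MulAut (A × N), φ * ψ = ψ * φ)
    (φ ψ : MulAut N) : ∀ n, φ (ψ n) = ψ (φ n) := by
  intro n
  have h := hM (MulEquiv.prodCongr (MulEquiv.refl A) φ) (MulEquiv.prodCongr (MulEquiv.refl A) ψ)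
  have h2 := congrArg (fun e : MulAut (A × N) => (e ((1 : A), n)).2) h
  exact h2

/-- If all automorphisms of `A × N` commute then commutators of `N` are central. -/
lemma commutator_mem_center (hM : ∀ φ ψ : MulAut (A × N), φ * ψ = ψ * φ)
    (x y : N) : ⁅x, y⁆ ∈ center N := by
  have key : ∀ u v : A × N, u⁻¹ * v⁻¹ * u * v ∈ center (A × N) := by
    intro u v
    rw [Subgroup.mem_center_iff]
    intro w
    have h := hM (MulAut.conj u) (MulAut.conj v)
    rw [← map_mul, ← map_mul] at h
    have h2 : ∀ z : A × N, (u * v) * z * (u * v)⁻¹ = (v * u) * z * (v * u)⁻¹ := by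
      intro z
      have := congrArg (fun e : MulAut (A × N) => e z) h
      simpa [MulAut.conj_apply, mul_assoc] using this
    calc w * (u⁻¹ * v⁻¹ * u * v)
        = (v * u)⁻¹ * (v * u * w * (v * u)⁻¹) * (u * v) := by group
    _ = (v * u)⁻¹ * (u * v * w * (u * v)⁻¹) * (u * v) := by rw [← h2 w]
    _ = (u⁻¹ * v⁻¹ * u * v) * w := by group
  have h := key ((1 : A), x⁻¹) ((1 : A), y⁻¹)
  have h' : (((1 : A), x * y * x⁻¹ * y⁻¹) : A × N) ∈ center (A × N) := by
    simpa [Prod.ext_iff, mul_assoc] using h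
  rw [commutatorElement_def]
  exact center_prod_snd h'

/-- A shear automorphism of a product of commutative groups. -/
def shear {ι : Type} [DecidableEq ι] {M : ι → Type*} [∀ l, CommGroup (M l)]
    (i j : ι) (hij : i ≠ j) (F : M i →* M j) : (∀ l, M l) ≃* (∀ l, M l) where
  toFun x := Function.update x j (x j * F (x i))
  invFun x := Function.update x j (x j * (F (x i))⁻¹)
  left_inv x := by
    funext k
    by_cases hk : k = j
    · subst hk
      simp [Function.update_of_ne hij, mul_assoc]
    · simp [Function.update_of_ne hk]
  right_inv x := by
    funext k
    by_cases hk : k = j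
    · subst hk
      simp [Function.update_of_ne hij, mul_assoc]
    · simp [Function.update_of_ne hk]
  map_mul' x y := by
    funext k
    by_cases hk : k = j
    · subst hk
      simp only [Function.update_self, Pi.mul_apply, map_mul]
      exact mul_mul_mul_comm _ _ _ _
    · simp only [Function.update_of_ne hk, Pi.mul_apply]

lemma shear_apply {ι : Type} [DecidableEq ι] {M : ι → Type*} [∀ l, CommGroup (M l)]
    (i j : ι) (hij : i ≠ j) (F : M i →* M j) (x : ∀ l, M l) :
    shear i j hij F x = Function.update x j (x j * F (x i)) := rfl

/-- A finite abelian p-group whose automorphisms pairwise commute is cyclic. -/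
theorem isCyclic_of_mulAut_comm {p : ℕ} (hp : p.Prime) (A : Type*) [CommGroup A] [Finite A]
    (hpA : IsPGroup p A) (hAut : ∀ φ ψ : MulAut A, ∀ a, φ (ψ a) = ψ (φ a)) : IsCyclic A := by
  classical
  obtain ⟨ι, hfin, n, hn, ⟨e⟩⟩ := CommGroup.equiv_prod_multiplicative_zmod_of_finite A
  -- each n l is a positive power of p
  have hord : ∀ l : ι, ∃ el : ℕ, 1 ≤ el ∧ n l = p ^ el := by
    intro l
    have h1 : orderOf (e.symm <| Pi.mulSingle l <| Multiplicative.ofAdd 1) = n l := by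
      simpa only [MulEquiv.orderOf_eq, orderOf_piMulSingle, orderOf_ofAdd_eq_addOrderOf]
        using (ZMod.addOrderOf_one (n l))
    obtain ⟨k, hk⟩ := hpA (e.symm <| Pi.mulSingle l <| Multiplicative.ofAdd 1)
    have h2 : n l ∣ p ^ k := by rw [← h1]; exact orderOf_dvd_of_pow_eq_one hk
    obtain ⟨el, _, hel⟩ := (Nat.dvd_prime_pow hp).mp h2
    refine ⟨el, ?_, hel⟩
    rcases Nat.eq_zero_or_pos el with rfl | h1'
    · rw [pow_zero] at hel
      have := hn l
      omega
    · exact h1'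
  by_cases hij : ∃ i j : ι, i ≠ j
  · exfalso
    -- pick indices with n i = p^a, n j = p^b, b ≤ a
    obtain ⟨i₀, j₀, hne⟩ := hij
    obtain ⟨a₀, ha₀1, ha₀⟩ := hord i₀
    obtain ⟨b₀, hb₀1, hb₀⟩ := hord j₀
    -- wlog b ≤ a
    obtain ⟨i, j, hnij, a, b, ha, hb, hab, hb1⟩ :
        ∃ (i j : ι), i ≠ j ∧ ∃ a b : ℕ, n i = p ^ a ∧ n j = p ^ b ∧ b ≤ a ∧ 1 ≤ b := by
      rcases le_total b₀ a₀ with h | h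
      · exact ⟨i₀, j₀, hne, a₀, b₀, ha₀, hb₀, h, hb₀1⟩
      · exact ⟨j₀, i₀, hne.symm, b₀, a₀, hb₀, ha₀, h, ha₀1⟩
    haveI : ∀ l, NeZero (n l) := fun l => ⟨by have := hn l; omega⟩
    have hppos : 0 < p := hp.pos
    -- the two hom components
    have hc1 : (Multiplicative.ofAdd (1 : ZMod (n j))) ^ (n i) = 1 := by
      rw [← ofAdd_nsmul]
      simp only [nsmul_eq_mul, mul_one]
      rw [show ((n i : ZMod (n j)) = 0) from ?_, ofAdd_zero]
      rw [ZMod.natCast_eq_zero_iff]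
      rw [ha, hb]
      exact pow_dvd_pow p hab
    have hc2 : (Multiplicative.ofAdd ((p ^ (a - b) : ℕ) : ZMod (n i))) ^ (n j) = 1 := by
      rw [← ofAdd_nsmul]
      simp only [nsmul_eq_mul]
      rw [show ((n j : ZMod (n i)) * ((p ^ (a - b) : ℕ) : ZMod (n i)) = 0) from ?_, ofAdd_zero]
      rw [← Nat.cast_mul, ZMod.natCast_eq_zero_iff, ha, hb,
        ← pow_add]
      exact pow_dvd_pow p (by omega)
    obtain ⟨F₁, hF₁⟩ := homZMod (n i) hc1
    obtain ⟨F₂, hF₂⟩ := homZMod (n j) hc2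
    set S := shear (M := fun l => Multiplicative (ZMod (n l))) i j hnij F₁
    set T := shear (M := fun l => Multiplicative (ZMod (n l))) j i hnij.symm F₂
    set φ : MulAut A := (e.trans S).trans e.symm
    set ψ : MulAut A := (e.trans T).trans e.symm
    have hST : ∀ x, S (T x) = T (S x) := by
      intro x
      have h := hAut φ ψ (e.symm x)
      have : e.symm (S (T x)) = e.symm (T (S x)) := by
        simpa [φ, ψ, MulEquiv.trans_apply] using h
      exact e.symm.injective this
    -- evaluate at mulSingle i (ofAdd 1)
    set x₀ : ∀ l, Multiplicative (ZMod (n l)) := Pi.mulSingle i (Multiplicative.ofAdd 1)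
    have hx₀i : x₀ i = Multiplicative.ofAdd 1 := Pi.mulSingle_eq_same _ _
    have hx₀j : x₀ j = 1 := Pi.mulSingle_eq_of_ne (Ne.symm hnij) _
    have key := congrFun (hST x₀) i
    -- compute both sides
    have hTx₀ : T x₀ = x₀ := by
      rw [shear_apply]
      rw [hx₀j, map_one, mul_one]
      exact Function.update_eq_self i x₀
    have hSx₀j : (S x₀) j = F₁ (Multiplicative.ofAdd 1) := by
      rw [shear_apply, Function.update_self, hx₀j, hx₀i, one_mul]
    have hSx₀i : (S x₀) i = Multiplicative.ofAdd 1 := by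
      rw [shear_apply, Function.update_of_ne hnij, hx₀i]
    have hL : S (T x₀) i = Multiplicative.ofAdd 1 := by rw [hTx₀, hSx₀i]
    have hR : T (S x₀) i = Multiplicative.ofAdd 1 * F₂ (F₁ (Multiplicative.ofAdd 1)) := by
      rw [shear_apply, Function.update_self, hSx₀i, hSx₀j]
    rw [hL, hR] at key
    have hval1 : (Multiplicative.toAdd (Multiplicative.ofAdd (1 : ZMod (n i)))).val = 1 := by
      simp [ZMod.val_one_eq_one_mod]
      exact Nat.mod_eq_of_lt (hn i)
    have hF₁1 : F₁ (Multiplicative.ofAdd 1) = Multiplicative.ofAdd (1 : ZMod (n j)) := by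
      rw [hF₁, hval1, pow_one]
    have hval1' : (Multiplicative.toAdd (Multiplicative.ofAdd (1 : ZMod (n j)))).val = 1 := by
      simp [ZMod.val_one_eq_one_mod]
      exact Nat.mod_eq_of_lt (hn j)
    have hF₂1 : F₂ (Multiplicative.ofAdd (1 : ZMod (n j)))
        = Multiplicative.ofAdd ((p ^ (a - b) : ℕ) : ZMod (n i)) := by
      rw [hF₂, hval1', pow_one]
    rw [hF₁1, hF₂1] at key
    -- derive contradiction: p^(a-b) = 0 in ZMod (p^a)
    have : ((p ^ (a - b) : ℕ) : ZMod (n i)) = 0 := by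
      have h2 := key.symm
      rw [mul_eq_left] at h2
      simpa using h2
    rw [ZMod.natCast_eq_zero_iff, ha] at this
    have hlt : p ^ (a - b) < p ^ a :=
      Nat.pow_lt_pow_right hp.one_lt (by omega)
    exact absurd (Nat.le_of_dvd (Nat.pow_pos hppos) this) (not_le.mpr hlt)
  · -- at most one index: A is cyclic
    push_neg at hij
    haveI hsub : Subsingleton ι := ⟨fun i j => hij i j⟩
    rcases isEmpty_or_nonempty ι with hempty | hne
    · haveI : Subsingleton A := ⟨fun a b => e.injective (Subsingleton.elim _ _)⟩
      refine ⟨⟨1, fun x => ⟨0, ?_⟩⟩⟩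
      simp [Subsingleton.elim (1 : A) x]
    · haveI : Unique ι := ⟨⟨hne.some⟩, fun i => Subsingleton.elim _ _⟩
      refine isCyclic_of_surjective (e.symm.toMonoidHom.comp (MulEquiv.piUnique
        (fun l : ι => Multiplicative (ZMod (n l)))).symm.toMonoidHom) ?_
      intro y
      refine ⟨MulEquiv.piUnique _ (e y), ?_⟩
      show e.symm ((MulEquiv.piUnique fun l => Multiplicative (ZMod (n l))).symm
        ((MulEquiv.piUnique fun l => Multiplicative (ZMod (n l))) (e y))) = y
      rw [MulEquiv.symm_apply_apply, MulEquiv.symm_apply_apply]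



lemma sq_mem_center {N : Type*} [Group N] (hcomm_c : ∀ x y : N, ⁅x,y⁆ ∈ center N)
    (hsq1 : ∀ z ∈ center N, z ^ 2 = 1) (x : N) : x ^ 2 ∈ center N := by
  rw [Subgroup.mem_center_iff]
  intro y
  have hc : ⁅x, y⁆ ∈ center N := hcomm_c x y
  have hc2 : ⁅x, y⁆ ^ 2 = 1 := hsq1 _ hc
  obtain ⟨c, hgen⟩ : ∃ c, ⁅x, y⁆ = c := ⟨_, rfl⟩
  rw [hgen] at hc hc2
  have hcen : ∀ g : N, g * c = c * g := Subgroup.mem_center_iff.mp hc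
  have h1 : x * y = c * (y * x) := by rw [← hgen, commutatorElement_def]; group
  have h2 : x ^ 2 * y = c * c * (y * x ^ 2) := by
    calc x^2 * y = x * (x * y) := by rw [pow_two, mul_assoc]
    _ = x * (c * (y * x)) := by rw [h1]
    _ = (x * c) * (y * x) := by group
    _ = (c * x) * (y * x) := by rw [hcen x]
    _ = c * ((x * y) * x) := by group
    _ = c * ((c * (y * x)) * x) := by rw [h1]
    _ = c * c * (y * x ^ 2) := by rw [pow_two]; group
  have h3 : x ^ 2 * y = y * x ^ 2 := by rw [h2, ← pow_two, hc2, one_mul]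
  exact h3.symm


lemma mulAut_mem_center {G : Type*} [Group G] (θ : MulAut G) {z : G} (hz : z ∈ center G) :
    θ z ∈ center G := by
  rw [Subgroup.mem_center_iff] at hz ⊢
  intro g
  have h := hz (θ.symm g)
  have h2 := congrArg θ h
  rw [map_mul, map_mul, MulEquiv.apply_symm_apply] at h2
  exact h2

end EarnleyAux


/-- A finite `p`-group is special if its center equals its commutator subgroup
and this common subgroup is elementary abelian. -/
def IsSpecial (p : ℕ) (G : Type*) [Group G] : Prop :=
  Subgroup.center G = commutator G ∧ ∀ x ∈ Subgroup.center G, x ^ p = 1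

open EarnleyAux in
/-- Earnley's theorem: for `A ≠ 1` a finite abelian `p`-group and `N` a finite purely
non-abelian `p`-group, `A × N` is a Miller group iff `p = 2`, `A` is cyclic of order
`2^n` with `n ≥ 2`, and `N` is a special Miller `2`-group. -/
theorem miller_direct_product_abelian_factor
    (p : ℕ) (hp : p.Prime)
    (A : Type u) [Group A] [Finite A] (habA : ∀ a b : A, a * b = b * a)
    (hntA : ∃ a : A, a ≠ 1) (hpA : IsPGroup p A)
    (N : Type u) [Group N] [Finite N] (hpN : IsPGroup p N)
    (hpna : PurelyNonAbelian N) :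
    IsMiller (A × N) ↔
      p = 2 ∧ IsCyclic A ∧ (∃ n : ℕ, 2 ≤ n ∧ Nat.card A = 2 ^ n) ∧
        IsSpecial 2 N ∧ IsMiller N := by
  haveI : Fact p.Prime := ⟨hp⟩
  constructor
  · intro hM
    obtain ⟨hfin, ⟨w₁, w₂, hw⟩, hcomm⟩ := hM
    have hNnab : ∃ x y : N, x * y ≠ y * x := by
      by_contra h
      push_neg at h
      exact hw (Prod.ext (habA _ _) (h _ _))
    obtain ⟨x₀, y₀, hxy₀⟩ := hNnab
    haveI hNnt : Nontrivial N := by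
      refine ⟨⟨x₀, 1, fun h => hxy₀ ?_⟩⟩
      rw [h, one_mul, mul_one]
    obtain ⟨a₀, ha₀⟩ := hntA
    haveI hAnt : Nontrivial A := ⟨⟨a₀, 1, ha₀⟩⟩
    letI commA : CommGroup A := { (inferInstance : Group A) with mul_comm := habA }
    -- central element of order p
    haveI := IsPGroup.center_nontrivial hpN
    obtain ⟨zz, hzzne⟩ := exists_ne (1 : center N)
    have hζc : (zz : N) ∈ center N := zz.2
    have hζne' : (zz : N) ≠ 1 := fun h => hzzne (Subtype.ext h)
    obtain ⟨z, hzc, hzp1, hzne⟩ : ∃ z, z ∈ center N ∧ z ^ p = 1 ∧ z ≠ 1 := by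
      obtain ⟨kζ, hkζ⟩ := hpN (zz : N)
      obtain ⟨mz, hmzle, hmz⟩ := (Nat.dvd_prime_pow hp).mp (orderOf_dvd_of_pow_eq_one hkζ)
      have hmz1 : 1 ≤ mz := by
        rcases Nat.eq_zero_or_pos mz with rfl | h'
        · rw [pow_zero] at hmz
          exact absurd (orderOf_eq_one_iff.mp hmz) hζne'
        · exact h'
      refine ⟨(zz : N) ^ (p ^ (mz - 1)), Subgroup.pow_mem _ hζc _, ?_, ?_⟩
      · rw [← pow_mul, ← pow_succ]
        have : mz - 1 + 1 = mz := by omega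
        rw [this, ← hmz]
        exact pow_orderOf_eq_one _
      · intro hcon
        have := orderOf_dvd_of_pow_eq_one hcon
        rw [hmz] at this
        have := (Nat.pow_dvd_pow_iff_le_right hp.one_lt).mp this
        omega
    -- key: image of any central-valued hom from A has exponent 2
    have hFA : ∀ (f : A →* N), (∀ a, f a ∈ center N) → ∀ a : A, (f a) ^ 2 = 1 := by
      intro f hf a
      have h := hcomm (alphaAut f hf) (invAut habA)
      have h2 := congrArg (fun e : MulAut (A × N) => (e (a⁻¹, (1 : N))).2) h
      simp only [MulAut.mul_apply, alphaAut_apply, invAut_apply, inv_inv, mul_one] at h2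
      -- h2 : f a = f a⁻¹
      have h3 : f a = (f a)⁻¹ := by rw [map_inv] at h2; exact h2
      rw [pow_two]
      exact mul_eq_one_iff_eq_inv.mpr h3
    -- p = 2
    have hp2 : p = 2 := by
      obtain ⟨m, χ, hm1, hmdvd, hχs, _⟩ := sep (B := A) ha₀
      have hexpdvd : Monoid.exponent A ∣ Nat.card A :=
        Monoid.exponent_dvd_of_forall_pow_eq_one (fun a => pow_card_eq_one')
      obtain ⟨KA, hKA⟩ := IsPGroup.iff_card.mp hpA
      have hmdvd' : m ∣ p ^ KA := hKA ▸ hmdvd.trans hexpdvd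
      obtain ⟨em, hemle, hem⟩ := (Nat.dvd_prime_pow hp).mp hmdvd'
      have hem1 : 1 ≤ em := by
        rcases Nat.eq_zero_or_pos em with rfl | h'
        · rw [pow_zero] at hem; omega
        · exact h'
      haveI : NeZero m := ⟨by omega⟩
      have hzm : z ^ m = 1 := by
        have he : m = p * p ^ (em - 1) := by
          rw [hem]
          conv_lhs => rw [show em = (em - 1) + 1 by omega]
          rw [pow_succ, mul_comm]
        rw [he, pow_mul, hzp1, one_pow]
      obtain ⟨h₀, hh₀⟩ := homZMod m hzm
      have hfc : ∀ a, (h₀.comp χ) a ∈ center N := fun a => by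
        rw [MonoidHom.comp_apply, hh₀]
        exact Subgroup.pow_mem _ hzc _
      obtain ⟨a₁, ha₁⟩ := hχs (Multiplicative.ofAdd 1)
      have hfa₁ : (h₀.comp χ) a₁ = z := by
        rw [MonoidHom.comp_apply, ha₁, hh₀]
        have hv : (Multiplicative.toAdd (Multiplicative.ofAdd (1 : ZMod m))).val = 1 := by
          simp [ZMod.val_one_eq_one_mod]
          exact Nat.mod_eq_of_lt hm1
        rw [hv, pow_one]
      have hsq := hFA (h₀.comp χ) hfc a₁
      rw [hfa₁] at hsq
      have hop : orderOf z = p := orderOf_eq_prime hzp1 hzne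
      have hdvd2 : p ∣ 2 := hop ▸ orderOf_dvd_of_pow_eq_one hsq
      exact (Nat.prime_dvd_prime_iff_eq hp Nat.prime_two).mp hdvd2
    subst hp2
    -- A is cyclic
    have hAutA : ∀ φ ψ : MulAut A, ∀ a, φ (ψ a) = ψ (φ a) := mulAut_factor_comm_left hcomm
    have hcyc : IsCyclic A := isCyclic_of_mulAut_comm hp A hpA hAutA
    obtain ⟨nA, hcardA⟩ := IsPGroup.iff_card.mp hpA
    have hnA1 : 1 ≤ nA := by
      rcases Nat.eq_zero_or_pos nA with rfl | h'
      · rw [pow_zero] at hcardA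
        exact absurd (Nat.card_eq_one_iff_unique.mp hcardA).1
          (not_subsingleton_iff_nontrivial.mpr hAnt)
      · exact h'
    -- nA ≥ 2
    have hnA2 : 2 ≤ nA := by
      by_contra hcon
      have hcard2 : Nat.card A = 2 := by
        rw [hcardA, show nA = 1 by omega, pow_one]
      have hzcard : z ^ Nat.card A = 1 := by rw [hcard2]; exact hzp1
      obtain ⟨f, hfr, a₁, hfa₁⟩ := homCyclic hcyc hzcard
      have hfc : ∀ a, f a ∈ center N := fun a => (Subgroup.zpowers_le.mpr hzc) (hfr a)
      have hcomne := commutator_ne_top Nat.prime_two N hpN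
      obtain ⟨x₂, hx₂⟩ : ∃ x, x ∉ commutator N := by
        by_contra h'
        push_neg at h'
        exact hcomne ((Subgroup.eq_top_iff' _).mpr h')
      have hb : (Abelianization.of x₂ : Abelianization N) ≠ 1 := fun h =>
        hx₂ ((QuotientGroup.eq_one_iff x₂).mp h)
      obtain ⟨m, χ, hm1, hmdvd, hχs, hχb⟩ := sep hb
      haveI : NeZero m := ⟨by omega⟩
      have ha₁m : a₁ ^ m = 1 := by
        have h2 : a₁ ^ 2 = 1 := by rw [← hcard2]; exact pow_card_eq_one'
        have hpB : IsPGroup 2 (Abelianization N) := hpN.to_quotient (commutator N)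
        have hexpdvd : Monoid.exponent (Abelianization N) ∣ Nat.card (Abelianization N) :=
          Monoid.exponent_dvd_of_forall_pow_eq_one (fun a => pow_card_eq_one')
        obtain ⟨KB, hKB⟩ := IsPGroup.iff_card.mp hpB
        have hm2 : m ∣ 2 ^ KB := hKB ▸ hmdvd.trans hexpdvd
        obtain ⟨e, hele, he⟩ := (Nat.dvd_prime_pow Nat.prime_two).mp hm2
        have he1 : 1 ≤ e := by
          rcases Nat.eq_zero_or_pos e with rfl | h'
          · rw [pow_zero] at he; omega
          · exact h'
        have h2m : 2 ∣ m := by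
          rw [he]
          exact dvd_pow_self 2 (by omega)
        obtain ⟨t, rfl⟩ := h2m
        rw [pow_mul, h2, one_pow]
      obtain ⟨emb, hemb⟩ := homZMod m ha₁m
      obtain ⟨bb, hbb⟩ := hχs (Multiplicative.ofAdd 1)
      obtain ⟨x₃, hx₃⟩ : ∃ x₃, Abelianization.of x₃ = bb := QuotientGroup.mk_surjective bb
      have hgx₃ : (emb.comp (χ.comp (Abelianization.of))) x₃ = a₁ := by
        simp only [MonoidHom.comp_apply]
        rw [hx₃, hbb, hemb]
        have hv : (Multiplicative.toAdd (Multiplicative.ofAdd (1 : ZMod m))).val = 1 := by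
          simp [ZMod.val_one_eq_one_mod]
          exact Nat.mod_eq_of_lt hm1
        rw [hv, pow_one]
      have h := hcomm (alphaAut f hfc) (betaAut habA (emb.comp (χ.comp (Abelianization.of))))
      have h2 := congrArg (fun e : MulAut (A × N) => (e ((1 : A), x₃)).2) h
      simp only [MulAut.mul_apply, alphaAut_apply, betaAut_apply, map_one, one_mul, mul_one] at h2
      rw [hgx₃, hfa₁] at h2
      -- h2 : z * x₃ = x₃
      exact hzne (by rwa [mul_eq_right] at h2)
    -- IsMiller N
    have hAutN : ∀ φ ψ : MulAut N, φ * ψ = ψ * φ := by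
      intro φ ψ
      ext n
      simp only [MulAut.mul_apply]
      exact mulAut_factor_comm_right hcomm φ ψ n
    -- center of N has exponent 2
    have he1 : ∀ w, w ∈ center N → w ^ 2 = 1 := by
      intro w hw'
      rcases eq_or_ne w 1 with rfl | hwne
      · simp
      obtain ⟨kw, hkw⟩ := hpN w
      obtain ⟨mw, hmwle, hmw⟩ := (Nat.dvd_prime_pow Nat.prime_two).mp
        (orderOf_dvd_of_pow_eq_one hkw)
      have hmw1 : 1 ≤ mw := by
        rcases Nat.eq_zero_or_pos mw with rfl | h'
        · rw [pow_zero] at hmw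
          exact absurd (orderOf_eq_one_iff.mp hmw) hwne
        · exact h'
      have hcpow : (w ^ (2 ^ (mw - nA))) ^ Nat.card A = 1 := by
        rw [hcardA, ← pow_mul, ← pow_add]
        have hdvd : orderOf w ∣ 2 ^ (mw - nA + nA) := hmw ▸ (Nat.pow_dvd_pow 2 (by omega))
        exact orderOf_dvd_iff_pow_eq_one.mp hdvd
      obtain ⟨f, hfr, a₁, hfa₁⟩ := homCyclic hcyc hcpow
      have hwjc : w ^ (2 ^ (mw - nA)) ∈ center N := Subgroup.pow_mem _ hw' _
      have hfc : ∀ a, f a ∈ center N := fun a => (Subgroup.zpowers_le.mpr hwjc) (hfr a)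
      have hsq := hFA f hfc a₁
      rw [hfa₁] at hsq
      have hdvd : orderOf w ∣ 2 ^ (mw - nA + 1) := by
        apply orderOf_dvd_of_pow_eq_one
        rw [pow_succ, pow_mul]
        exact hsq
      rw [hmw] at hdvd
      have hle := (Nat.pow_dvd_pow_iff_le_right one_lt_two).mp hdvd
      have hmweq : mw = 1 := by omega
      have hor : orderOf w = 2 := by rw [hmw, hmweq, pow_one]
      rw [← hor]
      exact pow_orderOf_eq_one w
    -- commutator ≤ center
    have hcomm_le : commutator N ≤ center N := by
      rw [_root_.commutator_def, Subgroup.commutator_le]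
      intro x _ y _
      exact commutator_mem_center hcomm x y
    have hsqN : ∀ x : N, x ^ 2 ∈ center N :=
      sq_mem_center (fun x y => commutator_mem_center hcomm x y) he1
    have hx4 : ∀ x : N, x ^ 4 = 1 := fun x => by
      have h := he1 _ (hsqN x)
      rw [← pow_mul] at h
      simpa using h
    -- center ≤ commutator
    have hcent_le : center N ≤ commutator N := by
      intro z' hz'
      by_contra hz'notin
      have hb : (Abelianization.of z' : Abelianization N) ≠ 1 := fun h =>
        hz'notin ((QuotientGroup.eq_one_iff z').mp h)
      obtain ⟨m, χ, hm1, hmdvd, hχs, hχb⟩ := sep hb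
      haveI : NeZero m := ⟨by omega⟩
      have hexp4 : Monoid.exponent (Abelianization N) ∣ 4 :=
        Monoid.exponent_dvd_of_forall_pow_eq_one (fun b => by
          obtain ⟨x, hx⟩ : ∃ x, Abelianization.of x = b := QuotientGroup.mk_surjective b
          rw [← hx, ← map_pow, hx4, map_one])
      have hm4 : m ∣ 4 := hmdvd.trans hexp4
      obtain ⟨e, hele, he⟩ := (Nat.dvd_prime_pow Nat.prime_two).mp
        (show m ∣ 2 ^ 2 from hm4)
      have he1' : 1 ≤ e := by
        rcases Nat.eq_zero_or_pos e with rfl | h'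
        · rw [pow_zero] at he; omega
        · exact h'
      obtain ⟨gA, hgA⟩ := hcyc.exists_generator
      have hogA : orderOf gA = 2 ^ nA := by
        rw [orderOf_eq_card_of_forall_mem_zpowers hgA, hcardA]
      have hocA : orderOf (gA ^ (2 ^ (nA - e))) = m := by
        rw [orderOf_pow, hogA]
        rw [Nat.gcd_eq_right (Nat.pow_dvd_pow 2 (by omega))]
        rw [Nat.pow_div (by omega) (by norm_num), he]
        congr 1
        omega
      have hcAm : (gA ^ (2 ^ (nA - e))) ^ m = 1 := by
        rw [← hocA]; exact pow_orderOf_eq_one _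
      obtain ⟨emb, hemb⟩ := homZMod m hcAm
      have hgz' : (emb.comp (χ.comp (Abelianization.of))) z' ≠ 1 := by
        simp only [MonoidHom.comp_apply]
        rw [hemb]
        intro hcon
        have hvlt : (Multiplicative.toAdd (χ (Abelianization.of z'))).val < m := ZMod.val_lt _
        have hvne : (Multiplicative.toAdd (χ (Abelianization.of z'))).val ≠ 0 := by
          intro h0
          apply hχb
          have hta : Multiplicative.toAdd (χ (Abelianization.of z')) = 0 :=
            (ZMod.val_eq_zero _).mp h0
          have := congrArg Multiplicative.ofAdd hta
          simpa using this
        have hdvd := orderOf_dvd_of_pow_eq_one hcon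
        rw [hocA] at hdvd
        exact absurd (Nat.le_of_dvd (Nat.pos_of_ne_zero hvne) hdvd) (not_le.mpr hvlt)
      have hz'card : z' ^ Nat.card A = 1 := by
        rw [hcardA]
        have h2 := he1 z' hz'
        have hsplit : z' ^ (2 ^ nA) = (z' ^ 2) ^ (2 ^ (nA - 1)) := by
          rw [← pow_mul]
          congr 1
          rw [← pow_succ']
          congr 1
          omega
        rw [hsplit, h2, one_pow]
      obtain ⟨f, hfr, a₁, hfa₁⟩ := homCyclic hcyc hz'card
      have hfc : ∀ a, f a ∈ center N := fun a => (Subgroup.zpowers_le.mpr hz') (hfr a)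
      have h := hcomm (alphaAut f hfc) (betaAut habA (emb.comp (χ.comp (Abelianization.of))))
      have h2 := congrArg (fun e : MulAut (A × N) => (e (a₁, (1 : N))).1) h
      simp only [MulAut.mul_apply, alphaAut_apply, betaAut_apply, map_one, one_mul, mul_one] at h2
      rw [hfa₁] at h2
      -- h2 : a₁ = a₁ * g z'
      exact hgz' (by rwa [eq_comm, mul_eq_left] at h2)
    exact ⟨rfl, hcyc, ⟨nA, hnA2, hcardA⟩,
      ⟨le_antisymm hcent_le hcomm_le, fun x hx => he1 x hx⟩,
      ⟨inferInstance, ⟨x₀, y₀, hxy₀⟩, hAutN⟩⟩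
  · intro hRHS
    obtain ⟨hp2, hcyc, ⟨nA, hnA2, hcardA⟩, ⟨hZC, hexp⟩, hfinN, ⟨xN, yN, hxyN⟩, hAutN⟩ := hRHS
    subst hp2
    refine ⟨inferInstance, ⟨((1:A), xN), ((1:A), yN), fun h => hxyN (congrArg Prod.snd h)⟩, ?_⟩
    intro θ θ'
    obtain ⟨gA, hgA⟩ := hcyc.exists_generator
    have hogA : orderOf gA = 2 ^ nA := by
      rw [orderOf_eq_card_of_forall_mem_zpowers hgA, hcardA]
    have hcommN_le : commutator N ≤ center N := le_of_eq hZC.symm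
    have hcent_c : ∀ x y : N, ⁅x, y⁆ ∈ center N := fun x y => hcommN_le (by
      rw [_root_.commutator_def]
      exact Subgroup.commutator_mem_commutator (Subgroup.mem_top x) (Subgroup.mem_top y))
    have hsqN : ∀ x : N, x ^ 2 ∈ center N := EarnleyAux.sq_mem_center hcent_c hexp
    -- the second component of the image of (a,1) is central
    have hcent_pres : ∀ (σ : MulAut (A × N)) (a : A), (σ (a, 1)).2 ∈ center N := by
      intro σ a
      have h1 : ((a, 1) : A × N) ∈ center (A × N) :=
        EarnleyAux.mk_mem_center_prod habA (Subgroup.one_mem _)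
      exact EarnleyAux.center_prod_snd (EarnleyAux.mulAut_mem_center σ h1)
    -- first component of image of (1,t) for central t is trivial
    have hBcent : ∀ (σ : MulAut (A × N)) (t : N), t ∈ center N → (σ (1, t)).1 = 1 := by
      intro σ t ht
      rw [hZC, commutator_eq_closure] at ht
      refine Subgroup.closure_induction ?_ ?_ ?_ ?_ ht
      · rintro w ⟨x, y, rfl⟩
        have hcp : ((1 : A), ⁅x, y⁆) = ⁅((1:A), x), ((1:A), y)⁆ := by
          rw [commutatorElement_def, commutatorElement_def]
          refine Prod.ext ?_ rfl
          simp
        rw [hcp, map_commutatorElement]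
        have hfst : (⁅σ (1, x), σ (1, y)⁆ : A × N).1 = ⁅(σ (1, x)).1, (σ (1, y)).1⁆ := rfl
        rw [hfst, commutatorElement_eq_one_iff_mul_comm]
        exact habA _ _
      · show (σ (1, 1)).1 = 1
        rw [show (((1:A), (1:N)) : A × N) = 1 from rfl, map_one]
        rfl
      · intro w v _ _ hw1 hv1
        have h : ((1:A), w * v) = ((1:A), w) * ((1:A), v) := by simp
        rw [h, map_mul]
        show (σ (1, w)).1 * (σ (1, v)).1 = 1
        rw [hw1, hv1, one_mul]
      · intro w _ hw1
        have h : ((1:A), w⁻¹) = (((1:A), w) : A × N)⁻¹ := by simp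
        rw [h, map_inv]
        show ((σ (1, w)).1)⁻¹ = 1
        rw [hw1, inv_one]
    -- second components of (1,·) images: the D-automorphism
    have hDmk : ∀ (σ : MulAut (A × N)), ∃ D : MulAut N, ∀ n, D n = (σ (1, n)).2 := by
      intro σ
      have happ : ∀ n, ((MonoidHom.snd A N).comp (σ.toMonoidHom.comp (MonoidHom.inr A N))) n
          = (σ (1, n)).2 := fun n => rfl
      have hsup : ((MonoidHom.snd A N).comp (σ.toMonoidHom.comp (MonoidHom.inr A N))).range
          ⊔ commutator N = ⊤ := by
        rw [← hZC]
        apply (Subgroup.eq_top_iff' _).mpr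
        intro m
        obtain ⟨⟨a, n⟩, hthe⟩ := σ.surjective ((1 : A), m)
        have hdecomp : ((a, n) : A × N) = (a, 1) * (1, n) := by simp
        rw [hdecomp, map_mul] at hthe
        have hm : m = (σ (1, n)).2 * (σ (a, 1)).2 := by
          have h2 := congrArg Prod.snd hthe
          simp only [Prod.snd_mul] at h2
          rw [← h2]
          exact (Subgroup.mem_center_iff.mp (hcent_pres σ a) _).symm
        rw [hm]
        exact Subgroup.mul_mem _ (SetLike.le_def.mp le_sup_left (MonoidHom.mem_range.mpr ⟨n, happ n⟩))
          (SetLike.le_def.mp le_sup_right (hcent_pres σ a))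
      have htop := EarnleyAux.sup_commutator_eq_top Nat.prime_two (Nat.card N) N
        inferInstance inferInstance le_rfl hpN _ hsup
      have hsurj : Function.Surjective
          ((MonoidHom.snd A N).comp (σ.toMonoidHom.comp (MonoidHom.inr A N))) :=
        MonoidHom.range_eq_top.mp htop
      have hinj : Function.Injective
          ((MonoidHom.snd A N).comp (σ.toMonoidHom.comp (MonoidHom.inr A N))) :=
        Finite.injective_iff_surjective.mpr hsurj
      exact ⟨MulEquiv.ofBijective _ ⟨hinj, hsurj⟩, fun n => rfl⟩
    obtain ⟨D, hDapp⟩ := hDmk θ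
    obtain ⟨D', hD'app⟩ := hDmk θ'
    -- every automorphism of N is central
    have hDcentral : ∀ (E : MulAut N) (x : N), ∃ c ∈ center N, E x = x * c := by
      intro E x
      have h := hAutN (MulAut.conj x) E
      have happ : ∀ m, x * E m * x⁻¹ = E (x * m * x⁻¹) := by
        intro m
        have h2 := congrArg (fun e : MulAut N => e m) h
        simpa [MulAut.mul_apply, MulAut.conj_apply] using h2
      refine ⟨x⁻¹ * E x, ?_, by group⟩
      rw [Subgroup.mem_center_iff]
      intro g
      obtain ⟨m, rfl⟩ := E.surjective g
      have h2 := happ m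
      have h3 : E (x * m * x⁻¹) = E x * E m * (E x)⁻¹ := by rw [map_mul, map_mul, map_inv]
      rw [h3] at h2
      calc E m * (x⁻¹ * E x) = x⁻¹ * (x * E m * x⁻¹) * E x := by group
      _ = x⁻¹ * (E x * E m * (E x)⁻¹) * E x := by rw [h2]
      _ = (x⁻¹ * E x) * E m := by group
    -- automorphisms of N fix the center pointwise
    have hDfix : ∀ (E : MulAut N), ∀ t ∈ center N, E t = t := by
      intro E t ht
      rw [hZC, commutator_eq_closure] at ht
      refine Subgroup.closure_induction ?_ (map_one E) ?_ ?_ ht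
      · rintro w ⟨x, y, rfl⟩
        rw [map_commutatorElement]
        obtain ⟨c, hc, hcx⟩ := hDcentral E x
        obtain ⟨c', hc', hcy⟩ := hDcentral E y
        rw [hcx, hcy, EarnleyAux.commutator_mul_central hc hc']
      · intro w v _ _ hw1 hv1
        rw [map_mul, hw1, hv1]
      · intro w _ hw1
        rw [map_inv, hw1]
    -- the automorphism fixes (1,t) for central t
    have hfixθ : ∀ t ∈ center N, θ (1, t) = (1, t) := by
      intro t ht
      refine Prod.ext (hBcent θ t ht) ?_
      show (θ (1, t)).2 = t
      rw [← hDapp]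
      exact hDfix D t ht
    have hfixθ' : ∀ t ∈ center N, θ' (1, t) = (1, t) := by
      intro t ht
      refine Prod.ext (hBcent θ' t ht) ?_
      show (θ' (1, t)).2 = t
      rw [← hD'app]
      exact hDfix D' t ht
    -- squares of first components of (1,·)
    have hB2 : ∀ (σ : MulAut (A × N)) (n : N), ((σ (1, n)).1) ^ 2 = 1 := by
      intro σ n
      have h1 : ((σ (1, n)).1) ^ 2 = (σ (((1:A), n) ^ 2)).1 := by
        rw [map_pow]
        rfl
      have h2 : (((1:A), n) : A × N) ^ 2 = ((1:A), n ^ 2) := by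
        refine Prod.ext ?_ rfl
        simp
      rw [h1, h2]
      exact hBcent σ _ (hsqN n)
    -- the A-component is a fixed odd power
    have hAcomp : ∀ (σ : MulAut (A × N)), ∃ k : ℤ, Odd k ∧ ∀ x : A, (σ (x, 1)).1 = x ^ k := by
      intro σ
      obtain ⟨k, hk⟩ := Subgroup.mem_zpowers_iff.mp (hgA ((σ (gA, 1)).1))
      have hall : ∀ x : A, (σ (x, 1)).1 = x ^ k := by
        intro x
        obtain ⟨j, hj⟩ := Subgroup.mem_zpowers_iff.mp (hgA x)
        rw [← hj]
        have h1 : ((gA ^ j : A), (1 : N)) = (((gA, 1) : A × N)) ^ j := by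
          refine Prod.ext ?_ ?_ <;> simp
        rw [h1, map_zpow]
        show ((σ (gA, 1)) ^ j).1 = (gA ^ j) ^ k
        have h2 : ((σ (gA, 1)) ^ j).1 = ((σ (gA, 1)).1) ^ j := by
          simp
        rw [h2, ← hk, ← zpow_mul, mul_comm, zpow_mul]
      refine ⟨k, ?_, hall⟩
      rcases Int.even_or_odd k with hke | hko
      · exfalso
        obtain ⟨t, ht⟩ := hke
        obtain ⟨⟨a, n⟩, hthe⟩ := σ.surjective ((gA, (1 : N)))
        have hdecomp : ((a, n) : A × N) = (a, 1) * (1, n) := by simp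
        rw [hdecomp, map_mul] at hthe
        have hgAeq : gA = a ^ k * (σ (1, n)).1 := by
          have h2 := congrArg Prod.fst hthe
          simp only [Prod.fst_mul] at h2
          rw [← h2, hall a]
        have hBsq := hB2 σ n
        have hcomm_ab : Commute (a ^ k) ((σ (1, n)).1) := habA _ _
        have hpow : gA ^ (2 ^ (nA - 1))
            = (a ^ k) ^ (2 ^ (nA - 1)) * ((σ (1, n)).1) ^ (2 ^ (nA - 1)) := by
          rw [hgAeq]
          exact hcomm_ab.mul_pow _
        have h1 : (a ^ k) ^ (2 ^ (nA - 1)) = 1 := by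
          have hz : (a ^ k) ^ (2 ^ (nA - 1)) = (a ^ t) ^ ((2 : ℕ) ^ nA) := by
            rw [← zpow_natCast ((a:A) ^ k), ← zpow_mul, ← zpow_natCast ((a:A) ^ t), ← zpow_mul]
            congr 1
            rw [ht]
            push_cast
            have h2 : (2:ℤ) ^ nA = 2 * 2 ^ (nA - 1) := by
              rw [← pow_succ']
              congr 1
              omega
            rw [h2]
            ring
          rw [hz, ← hcardA]
          exact pow_card_eq_one'
        have h2 : ((σ (1, n)).1) ^ (2 ^ (nA - 1)) = 1 := by
          have hsplit : (2:ℕ) ^ (nA - 1) = 2 * 2 ^ (nA - 2) := by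
            rw [← pow_succ']
            congr 1
            omega
          rw [hsplit, pow_mul, hBsq, one_pow]
        have h3 : gA ^ (2 ^ (nA - 1)) = 1 := by rw [hpow, h1, h2, one_mul]
        have h4 := orderOf_dvd_of_pow_eq_one h3
        rw [hogA] at h4
        have h5 := (Nat.pow_dvd_pow_iff_le_right one_lt_two).mp h4
        omega
      · exact hko
    obtain ⟨k, hkodd, hkeq⟩ := hAcomp θ
    obtain ⟨k', hk'odd, hk'eq⟩ := hAcomp θ'
    -- involutions in A are squares
    have hsqA : ∀ x : A, x ^ 2 = 1 → ∃ t : A, x = t ^ 2 := by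
      intro x hx
      obtain ⟨j, hj⟩ := Subgroup.mem_zpowers_iff.mp (hgA x)
      have hj2 : gA ^ ((j * 2 : ℤ)) = 1 := by
        rw [zpow_mul, hj, show ((2:ℤ)) = ((2:ℕ):ℤ) from rfl, zpow_natCast, hx]
      have hdvd : ((2:ℤ) ^ nA) ∣ j * 2 := by
        have := orderOf_dvd_iff_zpow_eq_one.mpr hj2
        rwa [hogA, Nat.cast_pow, Nat.cast_ofNat] at this
      have hdvd2 : ((2:ℤ) ^ (nA - 1)) ∣ j := by
        have h2 : (2:ℤ) ^ nA = 2 ^ (nA - 1) * 2 := by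
          rw [← pow_succ]
          congr 1
          omega
        rw [h2] at hdvd
        exact (mul_dvd_mul_iff_right (two_ne_zero)).mp hdvd
      obtain ⟨s, hs⟩ := hdvd2
      refine ⟨gA ^ ((2:ℤ) ^ (nA - 2) * s), ?_⟩
      rw [← hj, hs]
      rw [← zpow_natCast (gA ^ ((2:ℤ) ^ (nA - 2) * s)), ← zpow_mul]
      congr 1
      have h2 : (2:ℤ) ^ (nA - 1) = 2 ^ (nA - 2) * 2 := by
        rw [← pow_succ]
        congr 1
        omega
      rw [h2]
      push_cast
      ring
    -- Γ values square to 1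
    have hΓsq : ∀ (σ : MulAut (A × N)) (a : A), ((σ (a, 1)).2) ^ 2 = 1 :=
      fun σ a => hexp _ (hcent_pres σ a)
    -- Γ kills involutions
    have hΓkill : ∀ (σ : MulAut (A × N)) (w : A), w ^ 2 = 1 → (σ (w, 1)).2 = 1 := by
      intro σ w hw
      obtain ⟨t, rfl⟩ := hsqA w hw
      have h1 : ((t ^ 2 : A), (1 : N)) = (((t, 1) : A × N)) ^ 2 := by
        refine Prod.ext ?_ ?_ <;> simp
      rw [h1, map_pow]
      have h2 : ((σ (t, 1)) ^ 2).2 = ((σ (t, 1)).2) ^ 2 := by simp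
      rw [h2]
      exact hΓsq σ t
    -- generic decomposition of the application
    have happly : ∀ (σ : MulAut (A × N)) (a : A) (n : N),
        σ (a, n) = ((σ (a, 1)).1 * (σ (1, n)).1, (σ (a, 1)).2 * (σ (1, n)).2) := by
      intro σ a n
      have hdec : ((a, n) : A × N) = (a, 1) * (1, n) := by simp
      rw [hdec, map_mul]
      exact Prod.ext rfl rfl
    -- B ∘ D' = B  and D ∘ D' = D' ∘ D etc.
    have hBD : ∀ n : N, (θ (1, (θ' (1, n)).2)).1 = (θ (1, n)).1 := by
      intro n
      obtain ⟨c, hcmem, hceq⟩ := hDcentral D' n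
      rw [hD'app] at hceq
      rw [hceq]
      have h1 : ((1:A), n * c) = ((1:A), n) * ((1:A), c) := by simp
      rw [h1, map_mul]
      show (θ (1, n)).1 * (θ (1, c)).1 = (θ (1, n)).1
      rw [hBcent θ c hcmem, mul_one]
    have hBD' : ∀ n : N, (θ' (1, (θ (1, n)).2)).1 = (θ' (1, n)).1 := by
      intro n
      obtain ⟨c, hcmem, hceq⟩ := hDcentral D n
      rw [hDapp] at hceq
      rw [hceq]
      have h1 : ((1:A), n * c) = ((1:A), n) * ((1:A), c) := by simp
      rw [h1, map_mul]
      show (θ' (1, n)).1 * (θ' (1, c)).1 = (θ' (1, n)).1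
      rw [hBcent θ' c hcmem, mul_one]
    have hDD : ∀ n : N, (θ (1, (θ' (1, n)).2)).2 = (θ' (1, (θ (1, n)).2)).2 := by
      intro n
      have h := hAutN D D'
      have h2 := congrArg (fun e : MulAut N => e n) h
      simp only [MulAut.mul_apply] at h2
      rw [hDapp, hD'app, hD'app, hDapp] at h2
      exact h2
    -- Γ of an odd power
    have hΓpow : ∀ (σ : MulAut (A × N)) (kk : ℤ), Odd kk → ∀ a : A,
        (σ (a ^ kk, 1)).2 = (σ (a, 1)).2 := by
      intro σ kk hkk a
      have h1 : ((a ^ kk : A), (1:N)) = (((a, 1) : A × N)) ^ kk := by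
        refine Prod.ext ?_ ?_ <;> simp
      rw [h1, map_zpow]
      have h2 : ((σ (a, 1)) ^ kk).2 = ((σ (a, 1)).2) ^ kk := by simp
      rw [h2]
      exact EarnleyAux.sq_one_zpow_odd (hΓsq σ a) hkk
    -- now the final computation
    apply MulEquiv.ext
    intro x
    obtain ⟨a, n⟩ := x
    simp only [MulAut.mul_apply]
    rw [happly θ' a n,
      happly θ ((θ' (a,1)).1 * (θ' (1,n)).1) ((θ' (a,1)).2 * (θ' (1,n)).2),
      happly θ a n,
      happly θ' ((θ (a,1)).1 * (θ (1,n)).1) ((θ (a,1)).2 * (θ (1,n)).2)]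
    -- compute the four corner values
    -- θ of the first components
    have hfstθ : (θ ((θ' (a,1)).1 * (θ' (1,n)).1, 1)).1 = a ^ (k' * k) * ((θ' (1,n)).1) := by
      have h1 : (((θ' (a,1)).1 * (θ' (1,n)).1 : A), (1:N))
          = ((θ' (a,1)).1, (1:N)) * ((θ' (1,n)).1, (1:N)) := by simp
      rw [h1, map_mul]
      show (θ ((θ' (a,1)).1, 1)).1 * (θ ((θ' (1,n)).1, 1)).1 = _
      rw [hkeq, hkeq, hk'eq]
      rw [EarnleyAux.sq_one_zpow_odd (hB2 θ' n) hkodd]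
      rw [← zpow_mul]
    have hfstθ' : (θ' ((θ (a,1)).1 * (θ (1,n)).1, 1)).1 = a ^ (k * k') * ((θ (1,n)).1) := by
      have h1 : (((θ (a,1)).1 * (θ (1,n)).1 : A), (1:N))
          = ((θ (a,1)).1, (1:N)) * ((θ (1,n)).1, (1:N)) := by simp
      rw [h1, map_mul]
      show (θ' ((θ (a,1)).1, 1)).1 * (θ' ((θ (1,n)).1, 1)).1 = _
      rw [hk'eq, hk'eq, hkeq]
      rw [EarnleyAux.sq_one_zpow_odd (hB2 θ n) hk'odd]
      rw [← zpow_mul]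
    have hsndθ : (θ ((θ' (a,1)).1 * (θ' (1,n)).1, 1)).2 = (θ (a, 1)).2 := by
      have h1 : (((θ' (a,1)).1 * (θ' (1,n)).1 : A), (1:N))
          = ((θ' (a,1)).1, (1:N)) * ((θ' (1,n)).1, (1:N)) := by simp
      rw [h1, map_mul]
      show (θ ((θ' (a,1)).1, 1)).2 * (θ ((θ' (1,n)).1, 1)).2 = _
      rw [hΓkill θ _ (hB2 θ' n), mul_one, hk'eq, hΓpow θ k' hk'odd a]
    have hsndθ' : (θ' ((θ (a,1)).1 * (θ (1,n)).1, 1)).2 = (θ' (a, 1)).2 := by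
      have h1 : (((θ (a,1)).1 * (θ (1,n)).1 : A), (1:N))
          = ((θ (a,1)).1, (1:N)) * ((θ (1,n)).1, (1:N)) := by simp
      rw [h1, map_mul]
      show (θ' ((θ (a,1)).1, 1)).2 * (θ' ((θ (1,n)).1, 1)).2 = _
      rw [hΓkill θ' _ (hB2 θ n), mul_one, hkeq, hΓpow θ' k hkodd a]
    -- θ applied to (1, second components)
    have hBθ : (θ (1, (θ' (a,1)).2 * (θ' (1,n)).2)).1 = (θ (1, n)).1 := by
      have h1 : ((1:A), (θ' (a,1)).2 * (θ' (1,n)).2)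
          = ((1:A), (θ' (a,1)).2) * ((1:A), (θ' (1,n)).2) := by simp
      rw [h1, map_mul]
      show (θ (1, (θ' (a,1)).2)).1 * (θ (1, (θ' (1,n)).2)).1 = _
      rw [hBcent θ _ (hcent_pres θ' a), one_mul, hBD]
    have hBθ' : (θ' (1, (θ (a,1)).2 * (θ (1,n)).2)).1 = (θ' (1, n)).1 := by
      have h1 : ((1:A), (θ (a,1)).2 * (θ (1,n)).2)
          = ((1:A), (θ (a,1)).2) * ((1:A), (θ (1,n)).2) := by simp
      rw [h1, map_mul]
      show (θ' (1, (θ (a,1)).2)).1 * (θ' (1, (θ (1,n)).2)).1 = _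
      rw [hBcent θ' _ (hcent_pres θ a), one_mul, hBD']
    have hDθ : (θ (1, (θ' (a,1)).2 * (θ' (1,n)).2)).2
        = (θ' (a,1)).2 * (θ (1, (θ' (1,n)).2)).2 := by
      have h1 : ((1:A), (θ' (a,1)).2 * (θ' (1,n)).2)
          = ((1:A), (θ' (a,1)).2) * ((1:A), (θ' (1,n)).2) := by simp
      rw [h1, map_mul]
      show (θ (1, (θ' (a,1)).2)).2 * (θ (1, (θ' (1,n)).2)).2 = _
      rw [hfixθ _ (hcent_pres θ' a)]
    have hDθ' : (θ' (1, (θ (a,1)).2 * (θ (1,n)).2)).2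
        = (θ (a,1)).2 * (θ' (1, (θ (1,n)).2)).2 := by
      have h1 : ((1:A), (θ (a,1)).2 * (θ (1,n)).2)
          = ((1:A), (θ (a,1)).2) * ((1:A), (θ (1,n)).2) := by simp
      rw [h1, map_mul]
      show (θ' (1, (θ (a,1)).2)).2 * (θ' (1, (θ (1,n)).2)).2 = _
      rw [hfixθ' _ (hcent_pres θ a)]
    refine Prod.ext ?_ ?_
    · show (θ ((θ' (a,1)).1 * (θ' (1,n)).1, 1)).1 * (θ (1, (θ' (a,1)).2 * (θ' (1,n)).2)).1
        = (θ' ((θ (a,1)).1 * (θ (1,n)).1, 1)).1 * (θ' (1, (θ (a,1)).2 * (θ (1,n)).2)).1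
      rw [hfstθ, hfstθ', hBθ, hBθ']
      rw [mul_comm k' k]
      rw [mul_assoc, mul_assoc, habA ((θ' (1,n)).1) ((θ (1,n)).1)]
    · show (θ ((θ' (a,1)).1 * (θ' (1,n)).1, 1)).2 * (θ (1, (θ' (a,1)).2 * (θ' (1,n)).2)).2
        = (θ' ((θ (a,1)).1 * (θ (1,n)).1, 1)).2 * (θ' (1, (θ (a,1)).2 * (θ (1,n)).2)).2
      rw [hsndθ, hsndθ', hDθ, hDθ', hDD]
      -- Γa * (Γ'a * w) = Γ'a * (Γa * w) using centrality of Γ'a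
      have hc' : (θ' (a,1)).2 ∈ center N := hcent_pres θ' a
      have hswap : (θ (a,1)).2 * (θ' (a,1)).2 = (θ' (a,1)).2 * (θ (a,1)).2 :=
        Subgroup.mem_center_iff.mp hc' _
      rw [← mul_assoc, ← mul_assoc, hswap]
end

section
/- If p is a prime and G is a Miller p-group, then the exponent of G is greater than p; that is, there exists x ∈ G with x^p ≠ 1. -/
open scoped commutatorElement

section CommAux

variable {G : Type*} [Group G]

lemma cen_comm {z : G} (hz : z ∈ Subgroup.center G) (a : G) : a * z = z * a :=
  Subgroup.mem_center_iff.mp hz a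

lemma comm_left_mul (hc : ∀ g h : G, ⁅g, h⁆ ∈ Subgroup.center G) (a b c : G) :
    ⁅a * b, c⁆ = ⁅a, c⁆ * ⁅b, c⁆ := by
  have h1 : ⁅a * b, c⁆ = a * ⁅b, c⁆ * a⁻¹ * ⁅a, c⁆ := by
    simp only [commutatorElement_def]; group
  rw [h1, cen_comm (hc b c) a, cen_comm (hc b c) ⁅a,c⁆]; group

lemma comm_right_mul (hc : ∀ g h : G, ⁅g, h⁆ ∈ Subgroup.center G) (a b c : G) :
    ⁅a, b * c⁆ = ⁅a, b⁆ * ⁅a, c⁆ := by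
  have h1 : ⁅a, b * c⁆ = ⁅a, b⁆ * (b * ⁅a, c⁆ * b⁻¹) := by
    simp only [commutatorElement_def]; group
  rw [h1, cen_comm (hc a c) b]; group

lemma comm_central_right (a z : G) (hz : z ∈ Subgroup.center G) : ⁅a, z⁆ = 1 :=
  commutatorElement_eq_one_iff_mul_comm.mpr (cen_comm hz a)

lemma comm_central_left (z a : G) (hz : z ∈ Subgroup.center G) : ⁅z, a⁆ = 1 :=
  commutatorElement_eq_one_iff_mul_comm.mpr (cen_comm hz a).symm

/-- move a central factor in the middle to the right -/
lemma cen_shuffle {w : G} (hw : w ∈ Subgroup.center G) (a b : G) :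
    a * w * b = a * b * w := by
  rw [mul_assoc, ← cen_comm hw b, ← mul_assoc]

end CommAux

section Baer

variable {G : Type*} [Group G] (k : ℕ)

/-- The Baer addition on a group of class ≤ 2: `x + y = x * y * ⁅y,x⁆ ^ k`
where `k` is the inverse of 2 mod p. -/
def baerACG
    (hc : ∀ g h : G, ⁅g, h⁆ ∈ Subgroup.center G)
    (h1 : ∀ g h : G, ⁅g, h⁆ ^ (2 * k) = ⁅g, h⁆) : AddCommGroup G where
  add x y := x * y * ⁅y, x⁆ ^ k
  zero := 1
  neg := Inv.inv
  add_assoc x y z := by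
    show (x * y * ⁅y, x⁆ ^ k) * z * ⁅z, x * y * ⁅y, x⁆ ^ k⁆ ^ k
        = x * (y * z * ⁅z, y⁆ ^ k) * ⁅y * z * ⁅z, y⁆ ^ k, x⁆ ^ k
    have hyx := Subgroup.pow_mem _ (hc y x) k
    have hzy := Subgroup.pow_mem _ (hc z y) k
    have hzx := Subgroup.pow_mem _ (hc z x) k
    have e1 : ⁅z, x * y * ⁅y, x⁆ ^ k⁆ = ⁅z, x⁆ * ⁅z, y⁆ := by
      rw [comm_right_mul hc, comm_right_mul hc,
        comm_central_right z (⁅y,x⁆ ^ k) hyx, mul_one]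
    have e2 : ⁅y * z * ⁅z, y⁆ ^ k, x⁆ = ⁅y, x⁆ * ⁅z, x⁆ := by
      rw [comm_left_mul hc, comm_left_mul hc,
        comm_central_left (⁅z,y⁆ ^ k) x hzy, mul_one]
    have p1 : (⁅z,x⁆ * ⁅z,y⁆) ^ k = ⁅z,x⁆ ^ k * ⁅z,y⁆ ^ k :=
      Commute.mul_pow (cen_comm (hc z y) ⁅z,x⁆) k
    have p2 : (⁅y,x⁆ * ⁅z,x⁆) ^ k = ⁅y,x⁆ ^ k * ⁅z,x⁆ ^ k :=
      Commute.mul_pow (cen_comm (hc z x) ⁅y,x⁆) k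
    rw [e1, e2, p1, p2, cen_shuffle hyx (x*y) z]
    simp only [mul_assoc, mul_right_inj]
    rw [cen_comm hzy (⁅z,x⁆ ^ k), ← mul_assoc, cen_comm hzy (⁅y,x⁆ ^ k), mul_assoc]
  zero_add x := by
    show 1 * x * ⁅x, 1⁆ ^ k = x
    simp [commutatorElement_def]
  add_zero x := by
    show x * 1 * ⁅1, x⁆ ^ k = x
    simp [commutatorElement_def]
  neg_add_cancel x := by
    show x⁻¹ * x * ⁅x, x⁻¹⁆ ^ k = 1
    simp [commutatorElement_def]
  add_comm x y := by
    show x * y * ⁅y, x⁆ ^ k = y * x * ⁅x, y⁆ ^ k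
    have hswap : x * y = y * x * ⁅x, y⁆ := by
      rw [cen_comm (hc x y) (y*x)]
      simp only [commutatorElement_def]; group
    have hyx : ⁅y, x⁆ = ⁅x, y⁆⁻¹ := (commutatorElement_inv x y).symm
    rw [hswap, hyx, inv_pow, mul_assoc (y*x)]
    congr 1
    rw [mul_inv_eq_iff_eq_mul, ← pow_add, ← two_mul, h1]
  nsmul n x := x ^ n
  nsmul_zero x := pow_zero x
  nsmul_succ n x := by
    show x ^ (n + 1) = x ^ n * x * ⁅x, x ^ n⁆ ^ k
    rw [commutatorElement_eq_one_iff_commute.mpr ((Commute.refl x).pow_right n),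
      one_pow, mul_one, pow_succ]
  zsmul n x := x ^ n
  zsmul_zero' x := zpow_zero x
  zsmul_succ' n x := by
    show x ^ ((n : ℤ) + 1) = x ^ (n : ℤ) * x * ⁅x, x ^ (n : ℤ)⁆ ^ k
    rw [commutatorElement_eq_one_iff_commute.mpr ((Commute.refl x).zpow_right (n : ℤ)),
      one_pow, mul_one, zpow_add_one]
  zsmul_neg' n x := by
    show x ^ (Int.negSucc n) = (x ^ ((n.succ : ℕ) : ℤ))⁻¹
    rw [zpow_negSucc, ← zpow_natCast]

end Baer
section Key

theorem baer_key {G : Type*} [Group G] [Finite G] (p k : ℕ) (hp : p.Prime) (hk : 2 * k = p + 1)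
    (hexp : ∀ x : G, x ^ p = 1)
    (hc : ∀ g h : G, ⁅g, h⁆ ∈ Subgroup.center G)
    (hA : ∀ φ ψ : MulAut G, φ * ψ = ψ * φ) : ∀ a b : G, a * b = b * a := by
  haveI := Fact.mk hp
  have hp2 : p ≠ 2 := by rintro rfl; omega
  have h1 : ∀ g h : G, ⁅g, h⁆ ^ (2 * k) = ⁅g, h⁆ := fun g h => by
    rw [hk, pow_succ, hexp, one_mul]
  letI acg : AddCommGroup G := baerACG k hc h1
  have addDef : ∀ x y : G, x + y = x * y * ⁅y, x⁆ ^ k := fun _ _ => rfl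
  have nsmulDef : ∀ (n : ℕ) (x : G), n • x = x ^ n := fun _ _ => rfl
  have zeroDef : (0 : G) = 1 := rfl
  haveI : Module (ZMod p) G :=
    AddCommGroup.zmodModule (n := p) (fun x => by rw [nsmulDef, hexp, zeroDef])
  have hz2 : ∀ x : G, (2 : ZMod p) • x = x ^ 2 := fun x => by
    rw [show ((2 : ZMod p)) = ((2 : ℕ) : ZMod p) by norm_cast, Nat.cast_smul_eq_nsmul, nsmulDef]
  have hz4 : ∀ x : G, (4 : ZMod p) • x = x ^ 4 := fun x => by
    rw [show ((4 : ZMod p)) = ((4 : ℕ) : ZMod p) by norm_cast, Nat.cast_smul_eq_nsmul, nsmulDef]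
  have mulAdd : ∀ u w : G, w ∈ Subgroup.center G → u * w = u + w := fun u w hw => by
    rw [addDef, comm_central_left w u hw, one_pow, mul_one]
  -- the center as a submodule
  let Zc : Submodule (ZMod p) G :=
    { carrier := (Subgroup.center G : Set G)
      add_mem' := fun {a b} ha hb => by
        have : a + b = a * b * ⁅b, a⁆ ^ k := addDef a b
        show a + b ∈ Subgroup.center G
        rw [this]
        exact Subgroup.mul_mem _ (Subgroup.mul_mem _ ha hb) (Subgroup.pow_mem _ (hc b a) k)
      zero_mem' := by show (0:G) ∈ Subgroup.center G; rw [zeroDef]; exact Subgroup.one_mem _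
      smul_mem' := fun c x hx => by
        show c • x ∈ Subgroup.center G
        rw [← ZMod.natCast_rightInverse c, Nat.cast_smul_eq_nsmul, nsmulDef]
        exact Subgroup.pow_mem _ hx _ }
  have memZc : ∀ {w : G}, w ∈ Zc ↔ w ∈ Subgroup.center G := fun {w} => Iff.rfl
  obtain ⟨S, hS⟩ := Submodule.exists_isCompl Zc
  by_cases hbot : S = ⊥
  · have htop : Zc = ⊤ := by
      have := codisjoint_iff.mp hS.codisjoint
      rwa [hbot, sup_bot_eq] at this
    intro a b
    have hb : b ∈ Subgroup.center G := memZc.mp (htop ▸ Submodule.mem_top)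
    exact cen_comm hb a
  exfalso
  obtain ⟨s, hsS, hs0⟩ := Submodule.exists_mem_ne_zero_of_ne_bot hbot
  set prS := S.linearProjOfIsCompl Zc hS.symm with hprS
  set prZ := Zc.linearProjOfIsCompl S hS with hprZ
  set f : G → G := fun x => (2 : ZMod p) • (prS x : G) + (4 : ZMod p) • (prZ x : G) with hf
  have hdec : ∀ x : G, (prZ x : G) + (prS x : G) = x := fun x =>
    Submodule.projection_add_projection_eq_self hS x
  have fS : ∀ w : G, w ∈ S → f w = (2 : ZMod p) • w := by
    intro w hw
    have h1 : prS w = ⟨w, hw⟩ := Submodule.linearProjOfIsCompl_apply_left hS.symm ⟨w, hw⟩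
    have h2 : prZ w = 0 := Submodule.linearProjOfIsCompl_apply_right' hS hw
    rw [hf]; simp only [h1, h2, Submodule.coe_zero, smul_zero, add_zero]
  have fZ : ∀ w : G, w ∈ Subgroup.center G → f w = (4 : ZMod p) • w := by
    intro w hw
    have h1 : prZ w = ⟨w, memZc.mpr hw⟩ :=
      Submodule.linearProjOfIsCompl_apply_left hS ⟨w, memZc.mpr hw⟩
    have h2 : prS w = 0 := Submodule.linearProjOfIsCompl_apply_right' hS.symm (memZc.mpr hw)
    rw [hf]; simp only [h1, h2, Submodule.coe_zero, smul_zero, zero_add]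
  have fadd : ∀ a b : G, f (a + b) = f a + f b := by
    intro a b
    rw [hf]
    simp only [map_add, Submodule.coe_add, smul_add]
    exact add_add_add_comm _ _ _ _
  -- membership facts
  have prZcen : ∀ x : G, (prZ x : G) ∈ Subgroup.center G := fun x => memZc.mp (prZ x).2
  have smulcen : ∀ (c : ZMod p) (w : G), w ∈ Subgroup.center G → c • w ∈ Subgroup.center G :=
    fun c w hw => memZc.mp (Zc.smul_mem c (memZc.mpr hw))
  -- decomposition in multiplicative terms
  have hdecm : ∀ x : G, x = (prS x : G) * (prZ x : G) := fun x => by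
    conv_lhs => rw [← hdec x]
    rw [mulAdd _ _ (prZcen x)]
    exact add_comm _ _
  -- f in multiplicative terms
  have hfm : ∀ x : G, f x = ((prS x : G)) ^ 2 * ((prZ x : G)) ^ 4 := fun x => by
    rw [hf]
    simp only []
    rw [← hz2, ← hz4, mulAdd _ _ (smulcen _ _ (prZcen x))]
  have hstrip : ∀ a b w1 w2 : G, w1 ∈ Subgroup.center G → w2 ∈ Subgroup.center G →
      ⁅a * w1, b * w2⁆ = ⁅a, b⁆ := by
    intro a b w1 w2 hw1 hw2
    rw [comm_left_mul hc, comm_right_mul hc, comm_right_mul hc,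
      comm_central_left _ _ hw1, comm_central_left _ _ hw1,
      comm_central_right _ _ hw2, mul_one, mul_one, mul_one]
  have sqsq : ∀ a b : G, ⁅a ^ 2, b ^ 2⁆ = ⁅a, b⁆ ^ 4 := by
    intro a b
    rw [pow_two, pow_two, comm_left_mul hc]
    simp only [comm_right_mul hc]
    simp only [← pow_two]
    rw [← pow_mul]
  -- commutators of f-values
  have fcom : ∀ y x : G, ⁅f y, f x⁆ = ⁅y, x⁆ ^ 4 := by
    intro y x
    have e1 : ⁅y, x⁆ = ⁅(prS y : G), (prS x : G)⁆ := by
      conv_lhs => rw [hdecm y, hdecm x]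
      rw [hstrip _ _ _ _ (prZcen y) (prZcen x)]
    have e2 : ⁅f y, f x⁆ = ⁅((prS y : G)) ^ 2, ((prS x : G)) ^ 2⁆ := by
      rw [hfm y, hfm x,
        hstrip _ _ _ _ (Subgroup.pow_mem _ (prZcen y) 4) (Subgroup.pow_mem _ (prZcen x) 4)]
    rw [e2, sqsq, ← e1]
  -- f is multiplicative
  have fmul : ∀ x y : G, f (x * y) = f x * f y := by
    intro x y
    have hcent : (⁅y, x⁆ ^ k)⁻¹ ∈ Subgroup.center G :=
      Subgroup.inv_mem _ (Subgroup.pow_mem _ (hc y x) k)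
    have hcent2 : (⁅f y, f x⁆ ^ k)⁻¹ ∈ Subgroup.center G :=
      Subgroup.inv_mem _ (Subgroup.pow_mem _ (hc _ _) k)
    have mulDec : x * y = (x + y) + (⁅y, x⁆ ^ k)⁻¹ := by
      rw [← mulAdd _ _ hcent, addDef, mul_inv_cancel_right]
    have mulDec2 : f x * f y = (f x + f y) + (⁅f y, f x⁆ ^ k)⁻¹ := by
      rw [← mulAdd _ _ hcent2, addDef, mul_inv_cancel_right]
    rw [mulDec, fadd, fadd, mulDec2]
    congr 1
    rw [fZ _ hcent, hz4, fcom, inv_pow, ← pow_mul, ← pow_mul, Nat.mul_comm]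
  have h2ne : (2 : ZMod p) ≠ 0 := by
    rw [show ((2 : ZMod p)) = ((2 : ℕ) : ZMod p) by norm_cast, Ne,
      ZMod.natCast_eq_zero_iff]
    intro hdvd
    exact hp2 ((Nat.prime_dvd_prime_iff_eq hp Nat.prime_two).mp hdvd)
  have h4ne : (4 : ZMod p) ≠ 0 := by
    rw [show ((4 : ZMod p)) = ((4 : ℕ) : ZMod p) by norm_cast, Ne,
      ZMod.natCast_eq_zero_iff, show (4 : ℕ) = 2 ^ 2 by norm_num]
    intro hdvd
    exact hp2 ((Nat.prime_dvd_prime_iff_eq hp Nat.prime_two).mp (hp.dvd_of_dvd_pow hdvd))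
  let F : G →* G := MonoidHom.mk' f fmul
  have finj : Function.Injective F := by
    apply (injective_iff_map_eq_one F).mpr
    intro a ha
    have ha0 : (2 : ZMod p) • (prS a : G) + (4 : ZMod p) • (prZ a : G) = 0 := by
      rw [zeroDef]; exact ha
    have hu : (2 : ZMod p) • (prS a : G) ∈ S := S.smul_mem _ (prS a).2
    have hw : (4 : ZMod p) • (prZ a : G) ∈ Zc := Zc.smul_mem _ (prZ a).2
    have huZ : (2 : ZMod p) • (prS a : G) ∈ Zc := by
      rw [eq_neg_of_add_eq_zero_left ha0]
      exact Zc.neg_mem hw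
    have hu0 : (2 : ZMod p) • (prS a : G) = 0 :=
      Submodule.disjoint_def.mp hS.disjoint _ huZ hu
    have hw0 : (4 : ZMod p) • (prZ a : G) = 0 := by
      rw [hu0, zero_add] at ha0; exact ha0
    have hsa : (prS a : G) = 0 := by
      have := congrArg (fun t => (2 : ZMod p)⁻¹ • t) hu0
      simpa [smul_smul, inv_mul_cancel₀ h2ne] using this
    have hza : (prZ a : G) = 0 := by
      have := congrArg (fun t => (4 : ZMod p)⁻¹ • t) hw0
      simpa [smul_smul, inv_mul_cancel₀ h4ne] using this
    have : a = 0 := by rw [← hdec a, hsa, hza, add_zero]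
    rw [this, zeroDef]
  have hbij : Function.Bijective F := Finite.injective_iff_bijective.mp finj
  let φ : MulAut G := MulEquiv.ofBijective F hbij
  have hφconj : ∀ g x : G, f (g * x * g⁻¹) = g * f x * g⁻¹ := by
    intro g x
    have h2 := congrArg (fun ψ : MulAut G => ψ x) (hA φ (MulAut.conj g))
    simp only [MulAut.mul_apply, MulAut.conj_apply] at h2
    exact h2
  have hcenf : ∀ g : G, g⁻¹ * f g ∈ Subgroup.center G := by
    intro g
    rw [Subgroup.mem_center_iff]
    intro u
    obtain ⟨x, hx⟩ := hbij.2 u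
    have hx' : f x = u := hx
    have h3 := hφconj g x
    have h4 : f (g * x * g⁻¹) = f g * f x * (f g)⁻¹ := by
      show F (g * x * g⁻¹) = F g * F x * (F g)⁻¹
      rw [map_mul, map_mul, map_inv]
    rw [h4, hx'] at h3
    rw [mul_inv_eq_iff_eq_mul] at h3
    have h5 : (g⁻¹ * f g) * u = u * (g⁻¹ * f g) := by
      rw [mul_assoc, h3]; group
    exact h5.symm
  have hfs : f s = s ^ 2 := by rw [fS s hsS, hz2]
  have hscen : s ∈ Subgroup.center G := by
    have := hcenf s
    rwa [hfs, pow_two, inv_mul_cancel_left] at this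
  exact hs0 (Submodule.disjoint_def.mp hS.disjoint s (memZc.mpr hscen) hsS)

end Key
/-- The exponent of a Miller `p`-group is greater than `p`; that is,
there is an element `x` with `x ^ p ≠ 1`. -/
theorem miller_pGroup_exponent_gt
    (p : ℕ) (hp : p.Prime) (G : Type*) [Group G]
    (hG : IsMiller G) (hpG : IsPGroup p G) :
    p < Monoid.exponent G ∧ ∃ x : G, x ^ p ≠ 1 := by
  obtain ⟨hfin, ⟨a, b, hab⟩, hA⟩ := hG
  haveI := hfin
  haveI := Fact.mk hp
  -- Nilpotency class ≤ 2: commutators are central, since inner automorphisms commute.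
  have hc : ∀ g h : G, ⁅g, h⁆ ∈ Subgroup.center G := by
    intro g h
    have h1 : MulAut.conj (g⁻¹ * h⁻¹) = MulAut.conj (h⁻¹ * g⁻¹) := by
      rw [map_mul, map_mul]
      exact hA _ _
    rw [Subgroup.mem_center_iff]
    intro x
    have h2 := congrArg (fun ψ : MulAut G => ψ x) h1
    simp only [MulAut.conj_apply] at h2
    have e : ∀ u v x' : G, u * x' * u⁻¹ = v * x' * v⁻¹ → v⁻¹ * u * x' = x' * (v⁻¹ * u) := by
      intro u v x' heq
      calc v⁻¹ * u * x' = v⁻¹ * (u * x' * u⁻¹) * u := by group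
        _ = v⁻¹ * (v * x' * v⁻¹) * u := by rw [heq]
        _ = x' * (v⁻¹ * u) := by group
    have h3 := e _ _ _ h2
    have h4 : ⁅g, h⁆ = (h⁻¹ * g⁻¹)⁻¹ * (g⁻¹ * h⁻¹) := by
      rw [commutatorElement_def]; group
    rw [h4]
    exact (h3.symm)
  have hexists : ∃ x : G, x ^ p ≠ 1 := by
    by_contra hcon
    push_neg at hcon
    by_cases hp2 : p = 2
    · subst hp2
      apply hab
      have hinv : ∀ x : G, x⁻¹ = x := fun x => by
        rw [← mul_eq_one_iff_inv_eq, ← pow_two, hcon]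
      calc a * b = (a * b)⁻¹ := (hinv _).symm
        _ = b⁻¹ * a⁻¹ := mul_inv_rev a b
        _ = b * a := by rw [hinv, hinv]
    · obtain ⟨m, hm⟩ := hp.odd_of_ne_two hp2
      exact hab (baer_key p (m + 1) hp (by omega) hcon hc hA a b)
  refine ⟨?_, hexists⟩
  obtain ⟨x, hx⟩ := hexists
  obtain ⟨n, hn⟩ := IsPGroup.iff_orderOf.mp hpG x
  have hndvd : ¬ orderOf x ∣ p := fun hdvd => hx (orderOf_dvd_iff_pow_eq_one.mp hdvd)
  have hn2 : 2 ≤ n := by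
    by_contra hlt
    push_neg at hlt
    exact hndvd (hn ▸ (pow_dvd_pow p (by omega : n ≤ 1)).trans (by rw [pow_one]))
  have hp2le : p ^ 2 ≤ orderOf x := hn ▸ Nat.pow_le_pow_right hp.one_lt.le hn2
  have hplt : p < p ^ 2 := by
    have := hp.one_lt
    calc p = p ^ 1 := (pow_one p).symm
      _ < p ^ 2 := Nat.pow_lt_pow_right hp.one_lt (by norm_num)
  calc p < p ^ 2 := hplt
    _ ≤ orderOf x := hp2le
    _ ≤ Monoid.exponent G :=
        Nat.le_of_dvd (Nat.pos_of_ne_zero Monoid.exponent_ne_zero_of_finite)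
          (Monoid.order_dvd_exponent x)
end

section
/- Let p be an odd prime and let G be a finite p-group such that Aut(G) is elementary abelian (abelian with φ^p = id for every automorphism φ). Then the Frattini subgroup Φ(G) is elementary abelian (abelian with x^p = 1 for all its elements x), and moreover Z(G) = Φ(G) or [G,G] = Φ(G). -/
open Subgroup Finset
open scoped commutatorElement

namespace JRY

variable {G : Type*} [Group G]





section CommCenter

variable (hcz : ∀ a b : G, ⁅a, b⁆ ∈ center G)

lemma central_conj {b x : G} (hx : x ∈ center G) : b * x * b⁻¹ = x := by
  rw [mem_center_iff.mp hx b, mul_assoc, mul_inv_cancel, mul_one]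

include hcz in
lemma comm_mul_right (a b c : G) : ⁅a, b * c⁆ = ⁅a, b⁆ * ⁅a, c⁆ := by
  have key : ⁅a, b * c⁆ = ⁅a, b⁆ * (b * ⁅a, c⁆ * b⁻¹) := by
    simp only [commutatorElement_def]; group
  rw [key, central_conj (hcz a c)]

include hcz in
lemma comm_pow_right (a b : G) (n : ℕ) : ⁅a, b⁆ ^ n = ⁅a, b ^ n⁆ := by
  induction n with
  | zero => simp
  | succ n ih =>
      rw [pow_succ', ih, ← comm_mul_right hcz, ← pow_succ']

include hcz in
lemma comm_pow_left (a b : G) (n : ℕ) : ⁅a, b⁆ ^ n = ⁅a ^ n, b⁆ := by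
  have h1 : ⁅a, b⁆ = ⁅b, a⁆⁻¹ := by rw [commutatorElement_inv]
  rw [h1, inv_pow, comm_pow_right hcz, commutatorElement_inv]

include hcz in
lemma mul_pow_class2 (x y : G) (n : ℕ) :
    (x * y) ^ n = x ^ n * y ^ n * ⁅y, x⁆ ^ (n.choose 2) := by
  set k := ⁅y, x⁆ with hkdef
  have hkm : ∀ (m : ℕ) (g : G), g * k ^ m = k ^ m * g := fun m g =>
    (mem_center_iff.mp (pow_mem (hcz y x) m) g)
  induction n with
  | zero => simp
  | succ n ih =>
      have hswap : y ^ n * x = k ^ n * (x * y ^ n) := by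
        have h2 : k ^ n = ⁅y ^ n, x⁆ := comm_pow_left hcz y x n
        rw [h2, commutatorElement_def]
        group
      have hch : (n + 1).choose 2 = n.choose 2 + n := by
        rw [Nat.choose_succ_succ n 1, Nat.choose_one_right, Nat.add_comm]
      rw [pow_succ (x*y) n, ih, hch, pow_add k, pow_succ x n, pow_succ y n]
      simp only [mul_assoc]
      rw [← hkm (n.choose 2) (x * y)]
      simp only [mul_assoc]
      rw [← mul_assoc (y ^ n) x, hswap]
      simp only [mul_assoc]
      rw [← hkm n (x * (y ^ n * (y * k ^ n.choose 2)))]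
      simp only [mul_assoc]

end CommCenter



lemma keyNum {p : ℕ} (hp : p.Prime) (hodd : Odd p) :
    ∃ s : ℕ, (p + 1) ^ p = 1 + p ^ 2 + p ^ 3 * s := by
  obtain ⟨t, ht⟩ := hodd
  have h3 : 3 ≤ p := by
    have := hp.two_le; omega
  have hbin : (p + 1) ^ p = ∑ k ∈ Finset.range (p + 1), p ^ k * p.choose k := by
    have := add_pow p 1 p  -- (p+1)^p = ∑ p^k * 1^(p-k) * choose p k
    simpa using this
  obtain ⟨q, hq⟩ : ∃ q, p + 1 = q + 3 := ⟨p - 2, by omega⟩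
  rw [hq, Finset.sum_range_succ', Finset.sum_range_succ', Finset.sum_range_succ'] at hbin
  have hf0 : p ^ 0 * p.choose 0 = 1 := by simp
  have hf1 : p ^ 1 * p.choose 1 = p ^ 2 := by simp [Nat.choose_one_right]; ring
  have hf2 : p ^ 2 * p.choose 2 = p ^ 3 * t := by
    rw [Nat.choose_two_right]
    have : p * (p - 1) / 2 = p * t := by
      have : p - 1 = 2 * t := by omega
      rw [this, show p * (2 * t) = 2 * (p * t) by ring, Nat.mul_div_cancel_left _ (by norm_num)]
    rw [this]; ring
  have hsum : ∑ i ∈ Finset.range q, p ^ (i + 1 + 1 + 1) * p.choose (i + 1 + 1 + 1)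
      = p ^ 3 * ∑ i ∈ Finset.range q, p ^ i * p.choose (i + 3) := by
    rw [Finset.mul_sum]
    apply Finset.sum_congr rfl
    intro i _
    have : i + 1 + 1 + 1 = i + 3 := by omega
    rw [this, pow_add]; ring
  refine ⟨∑ i ∈ Finset.range q, p ^ i * p.choose (i + 3) + t, ?_⟩
  rw [hq, hbin]
  simp only [show (0:ℕ)+1+1 = 2 from rfl, show (0:ℕ)+1 = 1 from rfl]
  rw [hsum, hf0, hf1, hf2]
  ring


lemma pow_eq_pow_of_cast_eq {z : G} {n : ℕ} (hz : z ^ n = 1) {a b : ℕ}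
    (h : (a : ZMod n) = (b : ZMod n)) : z ^ a = z ^ b := by
  rw [pow_eq_pow_mod a hz, pow_eq_pow_mod b hz]
  congr 1
  exact (ZMod.natCast_eq_natCast_iff a b n).mp h

lemma pow_val_add {n : ℕ} [NeZero n] {z : G} (hz : z ^ n = 1) (A B : ZMod n) :
    z ^ (A + B).val = z ^ A.val * z ^ B.val := by
  rw [← pow_add]
  apply pow_eq_pow_of_cast_eq hz
  push_cast [ZMod.natCast_val, ZMod.cast_id]
  simp [ZMod.natCast_val, ZMod.cast_id]

lemma exists_translation_aut [Finite G] {n : ℕ} [NeZero n] (z : G)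
    (hzc : z ∈ center G) (hzn : z ^ n = 1) (φ : G →* Multiplicative (ZMod n))
    (hinj : ∀ x : G, x * z ^ (Multiplicative.toAdd (φ x)).val = 1 → x = 1) :
    ∃ σ : MulAut G, ∀ x, σ x = x * z ^ (Multiplicative.toAdd (φ x)).val := by
  let F : G →* G :=
    { toFun := fun x => x * z ^ (Multiplicative.toAdd (φ x)).val
      map_one' := by simp
      map_mul' := by
        intro a b
        simp only [map_mul]
        rw [toAdd_mul, pow_val_add hzn]
        have hcent : ∀ (m : ℕ) (g : G), g * z ^ m = z ^ m * g := fun m g =>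
          mem_center_iff.mp (pow_mem hzc m) g
        rw [mul_assoc, mul_assoc, ← mul_assoc (z ^ _) b, ← hcent _ b, mul_assoc] }
  have hFinj : Function.Injective F := by
    intro a b hab
    have h1 : F (a * b⁻¹) = 1 := by
      rw [map_mul, map_inv, hab, mul_inv_cancel]
    have := hinj _ h1
    rw [mul_inv_eq_one] at this
    exact this
  have hFbij := Finite.injective_iff_bijective.mp hFinj
  exact ⟨MulEquiv.ofBijective F hFbij, fun x => rfl⟩




section ExpP2
variable {p : ℕ} (hp : p.Prime) (hodd : Odd p) [Finite G] (hpG : IsPGroup p G)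
  (hel : ∀ φ : MulAut G, φ ^ p = 1)
  (hcz : ∀ a b : G, ⁅a, b⁆ ∈ center G)
  (hcp : ∀ a b : G, ⁅a, b⁆ ^ p = 1)

include hp hodd hpG hel hcz hcp in
lemma exp_p2 : ∀ x : G, x ^ (p ^ 2) = 1 := by
  obtain ⟨t, ht⟩ := hodd
  -- the (p+1)-power map is an automorphism
  have hvanish : ∀ x y : G, ⁅y, x⁆ ^ ((p + 1).choose 2) = 1 := by
    intro x y
    have hch : (p + 1).choose 2 = p * (t + 1) := by
      rw [Nat.choose_two_right]
      have h1 : (p + 1) * (p + 1 - 1) = p * (t + 1) * 2 := by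
        rw [Nat.add_sub_cancel]; rw [ht]; ring
      rw [h1, Nat.mul_div_cancel _ (by norm_num)]
    rw [hch, pow_mul, hcp, one_pow]
  let F : G →* G :=
    { toFun := fun x => x ^ (p + 1)
      map_one' := one_pow _
      map_mul' := fun a b => by
        show (a * b) ^ (p + 1) = a ^ (p + 1) * b ^ (p + 1)
        rw [mul_pow_class2 hcz a b (p + 1), hvanish, mul_one] }
  have hFinj : Function.Injective F := by
    intro a b hab
    have h1 : F (a * b⁻¹) = 1 := by rw [map_mul, map_inv, hab, mul_inv_cancel]
    have h2 : (a * b⁻¹) ^ (p + 1) = 1 := h1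
    have hd1 : orderOf (a * b⁻¹) ∣ p + 1 := orderOf_dvd_of_pow_eq_one h2
    obtain ⟨k, hk⟩ := hpG (a * b⁻¹)
    have hd2 : orderOf (a * b⁻¹) ∣ p ^ k := orderOf_dvd_of_pow_eq_one hk
    have hcop0 : Nat.Coprime p (p + 1) := by
      simpa using (Nat.coprime_self_add_right (m := p) (n := 1)).mpr (Nat.coprime_one_right p)
    have hcop : Nat.Coprime (p ^ k) (p + 1) := hcop0.pow_left k
    have hdd : orderOf (a * b⁻¹) ∣ Nat.gcd (p ^ k) (p + 1) := Nat.dvd_gcd hd2 hd1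
    rw [hcop] at hdd
    have := orderOf_eq_one_iff.mp (Nat.eq_one_of_dvd_one hdd)
    rwa [mul_inv_eq_one] at this
  have hFbij := Finite.injective_iff_bijective.mp hFinj
  let σ : MulAut G := MulEquiv.ofBijective F hFbij
  have hiter : ∀ (n : ℕ) (x : G), (σ ^ n) x = x ^ ((p + 1) ^ n) := by
    intro n
    induction n with
    | zero => intro x; simp
    | succ n ih =>
        intro x
        rw [pow_succ σ n, MulAut.mul_apply]
        have hσx : σ x = x ^ (p + 1) := rfl
        rw [hσx, ih, ← pow_mul, ← pow_succ']
  have hfix : ∀ x : G, x ^ ((p + 1) ^ p) = x := by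
    intro x
    have := hel σ
    have h2 := hiter p x
    rw [this, MulAut.one_apply] at h2
    exact h2.symm
  intro x
  obtain ⟨s, hs⟩ := keyNum hp ⟨t, ht⟩
  have h3 : x ^ (1 + (p ^ 2 + p ^ 3 * s)) = x := by
    rw [← add_assoc, ← hs]; exact hfix x
  rw [pow_add, pow_one] at h3
  have h4 : x ^ (p ^ 2 + p ^ 3 * s) = 1 := by
    have := mul_left_cancel (a := x) (b := x ^ (p ^ 2 + p ^ 3 * s)) (c := 1) (by rw [mul_one]; exact h3)
    exact this
  -- orderOf x is a p-power dividing p^2 + p^3 s, hence divides p^2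
  obtain ⟨k, hk⟩ := hpG x
  have hd2 : orderOf x ∣ p ^ k := orderOf_dvd_of_pow_eq_one hk
  obtain ⟨j, hjk, hj⟩ := (Nat.dvd_prime_pow hp).mp hd2
  have hdm : orderOf x ∣ p ^ 2 + p ^ 3 * s := orderOf_dvd_of_pow_eq_one h4
  rcases le_or_gt j 2 with hj2 | hj2
  · apply orderOf_dvd_iff_pow_eq_one.mp
    rw [hj]
    exact pow_dvd_pow p hj2
  · exfalso
    have h5 : p ^ 3 ∣ orderOf x := by rw [hj]; exact pow_dvd_pow p hj2
    have h6 : p ^ 3 ∣ p ^ 2 + p ^ 3 * s := h5.trans hdm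
    have h7 : p ^ 3 ∣ p ^ 2 := (Nat.dvd_add_right (Dvd.intro s rfl)).mp (by rwa [add_comm] at h6)
    have := Nat.le_of_dvd (pow_pos hp.pos 2) h7
    have := Nat.pow_lt_pow_right hp.one_lt (show 2 < 3 by norm_num)
    omega
end ExpP2


lemma mem_frattini_iff {x : G} : x ∈ frattini G ↔ ∀ M : Subgroup G, IsCoatom M → x ∈ M := by
  simp [frattini, Order.radical, Subgroup.mem_iInf]

lemma coatom_facts {p : ℕ} (hp : p.Prime) [Finite G] (hpG : IsPGroup p G)
    {M : Subgroup G} (hM : IsCoatom M) :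
    (∀ a b : G, ⁅a, b⁆ ∈ M) ∧ (∀ g : G, g ^ p ∈ M) := by
  haveI : Fact p.Prime := ⟨hp⟩
  haveI : Group.IsNilpotent G := hpG.isNilpotent
  haveI hMn : M.Normal := NormalizerCondition.normal_of_coatom M normalizerCondition_of_isNilpotent hM
  have hQp : IsPGroup p (G ⧸ M) := hpG.to_quotient M
  have hcy : ∀ q : G ⧸ M, q ≠ 1 → zpowers q = ⊤ := by
    intro q hq
    have hsur : Function.Surjective (QuotientGroup.mk' M) := QuotientGroup.mk'_surjective M
    set S := comap (QuotientGroup.mk' M) (zpowers q) with hS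
    have hMS : M ≤ S := by
      intro m hm
      show QuotientGroup.mk' M m ∈ zpowers q
      rw [QuotientGroup.mk'_apply, QuotientGroup.eq_one_iff m |>.mpr hm]
      exact one_mem _
    obtain ⟨y, hy⟩ := hsur q
    have hyS : y ∈ S := by
      show QuotientGroup.mk' M y ∈ zpowers q
      rw [hy]; exact mem_zpowers q
    have hyM : y ∉ M := by
      intro hyM
      apply hq
      rw [← hy, QuotientGroup.mk'_apply, QuotientGroup.eq_one_iff y |>.mpr hyM]
    have hlt : M < S := lt_of_le_of_ne hMS (fun h => hyM (h ▸ hyS))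
    have hStop : S = ⊤ := hM.2 S hlt
    have h2 := map_comap_eq_self_of_surjective hsur (zpowers q)
    rw [← hS, hStop] at h2
    rw [← h2]
    exact map_top_of_surjective _ hsur
  obtain ⟨x, hx⟩ : ∃ x : G, x ∉ M := by
    by_contra h
    push_neg at h
    exact hM.1 (Subgroup.eq_top_iff' M |>.mpr h)
  set q₀ : G ⧸ M := QuotientGroup.mk x with hq₀
  have hq₀1 : q₀ ≠ 1 := by
    rw [hq₀, Ne, QuotientGroup.eq_one_iff]
    exact hx
  obtain ⟨k, hk⟩ := hQp q₀
  obtain ⟨j, hjk, hj⟩ := (Nat.dvd_prime_pow hp).mp (orderOf_dvd_of_pow_eq_one hk)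
  have hj1 : 1 ≤ j := by
    rcases Nat.eq_zero_or_pos j with h0 | h
    · exfalso
      rw [h0, pow_zero] at hj
      exact hq₀1 (orderOf_eq_one_iff.mp hj)
    · exact h
  set y : G ⧸ M := q₀ ^ (p ^ (j - 1)) with hy
  have hy1 : y ≠ 1 := by
    intro h1
    have := orderOf_dvd_of_pow_eq_one h1
    rw [hj] at this
    have := (Nat.pow_dvd_pow_iff_le_right hp.one_lt).mp this
    omega
  have hyp : y ^ p = 1 := by
    rw [hy, ← pow_mul, ← pow_succ]
    have : j - 1 + 1 = j := by omega
    rw [this, ← hj, pow_orderOf_eq_one]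
  have hyo : orderOf y = p := orderOf_eq_prime hyp hy1
  have hcard : Nat.card (G ⧸ M) = p := by
    rw [← card_top (G := G ⧸ M), ← hcy y hy1, Nat.card_zpowers, hyo]
  constructor
  · intro a b
    have ha : (QuotientGroup.mk a : G ⧸ M) ∈ zpowers y := by
      rw [hcy y hy1]; trivial
    have hb : (QuotientGroup.mk b : G ⧸ M) ∈ zpowers y := by
      rw [hcy y hy1]; trivial
    obtain ⟨i, hi⟩ := ha
    obtain ⟨l, hl⟩ := hb
    have hcomm : Commute (QuotientGroup.mk a : G ⧸ M) (QuotientGroup.mk b) := by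
      rw [← hi, ← hl]
      exact (Commute.refl y).zpow_zpow i l
    rw [← QuotientGroup.eq_one_iff]
    have hmk : (QuotientGroup.mk ⁅a, b⁆ : G ⧸ M) = ⁅(QuotientGroup.mk a : G ⧸ M), QuotientGroup.mk b⁆ :=
      map_commutatorElement (QuotientGroup.mk' M) a b
    rw [hmk, commutatorElement_eq_one_iff_commute]
    exact hcomm
  · intro g
    rw [← QuotientGroup.eq_one_iff, QuotientGroup.mk_pow, ← hcard]
    exact pow_card_eq_one'



-- duality for finite commutative groups of exponent dividing N
lemma dual_sep (A : Type*) [CommGroup A] [Finite A] (N : ℕ) [NeZero N]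
    (hexp : ∀ a : A, a ^ N = 1) {a : A} (ha : a ≠ 1) :
    ∃ φ : A →* Multiplicative (ZMod N), φ a ≠ 1 := by
  classical
  obtain ⟨ι, hι, n, hn, ⟨e⟩⟩ := CommGroup.equiv_prod_multiplicative_zmod_of_finite A
  obtain ⟨i, hi⟩ : ∃ i, e a i ≠ 1 := by
    by_contra h
    push_neg at h
    exact ha ((MulEquiv.map_eq_one_iff e).mp (funext h))
  have hdvd : n i ∣ N := by
    have h1 : n i = orderOf (e.symm <| Pi.mulSingle i <| Multiplicative.ofAdd 1) := by
      simpa only [MulEquiv.orderOf_eq, orderOf_piMulSingle, orderOf_ofAdd_eq_addOrderOf]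
        using (ZMod.addOrderOf_one (n i)).symm
    rw [h1]
    exact orderOf_dvd_of_pow_eq_one (hexp _)
  haveI : NeZero (n i) := ⟨by intro h0; have := hn i; omega⟩
  obtain ⟨c, hc⟩ := hdvd
  have hc0 : c ≠ 0 := by
    intro h0
    exact (NeZero.ne N) (by rw [hc, h0, mul_zero])
  have hni0 : n i ≠ 0 := NeZero.ne _
  let f : ZMod (n i) →+ ZMod N :=
    { toFun := fun x => ((c * x.val : ℕ) : ZMod N)
      map_zero' := by simp
      map_add' := by
        intro x y
        rw [← Nat.cast_add]
        rw [ZMod.natCast_eq_natCast_iff]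
        rw [ZMod.val_add]
        have h2 : c * ((x.val + y.val) % n i) ≡ c * (x.val + y.val) [MOD c * n i] :=
          (Nat.mod_modEq _ _).mul_left' c
        rw [hc, mul_comm (n i) c]
        calc c * ((x.val + y.val) % n i) ≡ c * (x.val + y.val) [MOD c * n i] := h2
          _ = c * x.val + c * y.val := by ring }
  refine ⟨((AddMonoidHom.toMultiplicative f).comp (Pi.evalMonoidHom (fun j => Multiplicative (ZMod (n j))) i)).comp e.toMonoidHom, ?_⟩
  simp only [MonoidHom.comp_apply, MulEquiv.coe_toMonoidHom, Pi.evalMonoidHom_apply]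
  intro hcontra
  apply hi
  -- hcontra : toMultiplicative f (e a i) = 1
  have h3 : f (Multiplicative.toAdd (e a i)) = 0 := hcontra
  have h3' : ((c * (Multiplicative.toAdd (e a i)).val : ℕ) : ZMod N) = 0 := h3
  have h4 : (N : ℕ) ∣ c * (Multiplicative.toAdd (e a i)).val := by
    rwa [ZMod.natCast_eq_zero_iff] at h3'
  rw [hc, mul_comm (n i) c] at h4
  have h5 : n i ∣ (Multiplicative.toAdd (e a i)).val :=
    (mul_dvd_mul_iff_left hc0).mp h4
  have h6 : (Multiplicative.toAdd (e a i)).val = 0 :=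
    Nat.eq_zero_of_dvd_of_lt h5 (ZMod.val_lt _) |> fun h => h
  have h7 : Multiplicative.toAdd (e a i) = 0 := by
    rwa [← ZMod.val_eq_zero]
  rw [← toAdd_eq_zero]
  exact h7

-- separation through a normal subgroup with "elementary abelian" quotient data
lemma sep {G : Type*} [Group G] [Finite G] (n : ℕ) [NeZero n] (N : Subgroup G) (hN : N.Normal)
    (hcomm : ∀ a b : G, ⁅a, b⁆ ∈ N) (hexp : ∀ g : G, g ^ n ∈ N) {x : G} (hx : x ∉ N) :
    ∃ φ : G →* Multiplicative (ZMod n), (∀ y ∈ N, φ y = 1) ∧ φ x ≠ 1 := by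
  haveI := hN
  letI : CommGroup (G ⧸ N) :=
    { (inferInstance : Group (G ⧸ N)) with
      mul_comm := by
        intro a b
        induction a using QuotientGroup.induction_on with | _ a =>
        induction b using QuotientGroup.induction_on with | _ b =>
        rw [← QuotientGroup.mk_mul, ← QuotientGroup.mk_mul, QuotientGroup.eq]
        have : (a * b)⁻¹ * (b * a) = ⁅b⁻¹, a⁻¹⁆ := by
          rw [commutatorElement_def]; group
        rw [this]
        exact hcomm b⁻¹ a⁻¹ }
  have hexpQ : ∀ q : G ⧸ N, q ^ n = 1 := by
    intro q
    induction q using QuotientGroup.induction_on with | _ g =>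
    rw [← QuotientGroup.mk_pow, QuotientGroup.eq_one_iff]
    exact hexp g
  have hx1 : (QuotientGroup.mk x : G ⧸ N) ≠ 1 := by
    rw [Ne, QuotientGroup.eq_one_iff]
    exact hx
  obtain ⟨φ₀, hφ₀⟩ := dual_sep (G ⧸ N) n hexpQ hx1
  refine ⟨φ₀.comp (QuotientGroup.mk' N), fun y hy => ?_, hφ₀⟩
  have : QuotientGroup.mk' N y = 1 := (QuotientGroup.eq_one_iff y).mpr hy
  simp [MonoidHom.comp_apply, this]

-- kernel of a nontrivial map to Z/p is a coatom
lemma ker_coatom {G : Type*} [Group G] {p : ℕ} (hp : p.Prime)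
    (φ : G →* Multiplicative (ZMod p)) {x : G} (hx : φ x ≠ 1) : IsCoatom φ.ker := by
  haveI : Fact p.Prime := ⟨hp⟩
  constructor
  · intro h
    exact hx (MonoidHom.mem_ker.mp (h ▸ Subgroup.mem_top x))
  · intro H hH
    obtain ⟨h, hhH, hhk⟩ := SetLike.exists_of_lt hH
    have ht : Multiplicative.toAdd (φ h) ≠ 0 := by
      rw [Ne, toAdd_eq_zero]
      exact fun hh => hhk (MonoidHom.mem_ker.mpr hh)
    rw [eq_top_iff']
    intro g
    set t := Multiplicative.toAdd (φ h)
    set s := Multiplicative.toAdd (φ g)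
    set k := (t⁻¹ * s).val
    have hker : g * (h ^ k)⁻¹ ∈ φ.ker := by
      rw [MonoidHom.mem_ker, map_mul, map_inv, map_pow]
      have : φ h ^ k = φ g := by
        have h1 : Multiplicative.toAdd (φ h ^ k) = k • t := by rw [toAdd_pow]
        have h2 : (k : ZMod p) * t = s := by
          rw [ZMod.natCast_val, ZMod.cast_id]
          field_simp
        apply Multiplicative.toAdd.injective
        rw [h1]
        rw [nsmul_eq_mul]
        exact h2
      rw [this, mul_inv_cancel]
    have hgH : g = (g * (h ^ k)⁻¹) * h ^ k := by group
    rw [hgH]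
    exact mul_mem (hH.le hker) (pow_mem hhH k)




lemma step_B [Finite G] {p : ℕ} (hp : p.Prime)
    (hab : ∀ φ ψ : MulAut G, φ * ψ = ψ * φ)
    {z c w : G} (hzc : z ∈ center G) (hzp : z ^ p = 1)
    (hcc : c ∈ center G) (hcp : c ^ p = 1) (hc1 : c ≠ 1)
    {lam mu : G →* Multiplicative (ZMod p)}
    (hlz : lam z ≠ 1) (hlc : lam c = 1) (hmz : mu z = 1) (hmc : mu c = 1)
    (hmw : mu w ≠ 1) : False := by
  haveI : Fact p.Prime := ⟨hp⟩
  haveI : NeZero p := ⟨hp.ne_zero⟩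
  -- σ : x ↦ x * c^(lam x)
  obtain ⟨σ, hσ⟩ := exists_translation_aut c hcc hcp lam (by
    intro x hx1
    have h2 : lam x = 1 := by
      have h3 := congrArg lam hx1
      rw [map_mul, map_pow, hlc, one_pow, mul_one, map_one] at h3
      exact h3
    rw [h2] at hx1
    simpa using hx1)
  -- τ : x ↦ x * z^(mu x)
  obtain ⟨τ, hτ⟩ := exists_translation_aut z hzc hzp mu (by
    intro x hx1
    have h2 : mu x = 1 := by
      have h3 := congrArg mu hx1
      rw [map_mul, map_pow, hmz, one_pow, mul_one, map_one] at h3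
      exact h3
    rw [h2] at hx1
    simpa using hx1)
  have hcentpow : ∀ (g : G) (m : ℕ) (u : G), u ∈ center G → g * u ^ m = u ^ m * g :=
    fun g m u hu => mem_center_iff.mp (pow_mem hu m) g
  have key := congrArg (fun (f : MulAut G) => f w) (hab σ τ)
  simp only [MulAut.mul_apply] at key
  -- key : σ (τ w) = τ (σ w)
  rw [hτ w, hσ w] at key
  rw [hσ (w * z ^ (Multiplicative.toAdd (mu w)).val)] at key
  rw [hτ (w * c ^ (Multiplicative.toAdd (lam w)).val)] at key
  set A := Multiplicative.toAdd (lam w) with hA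
  set B := Multiplicative.toAdd (lam z) with hB
  set Mw := Multiplicative.toAdd (mu w) with hMw
  have e1 : mu (w * c ^ A.val) = mu w := by
    rw [map_mul, map_pow, hmc, one_pow, mul_one]
  rw [e1] at key
  rw [← hMw] at key
  have e2' : lam (w * z ^ Mw.val) = lam w * lam z ^ Mw.val := by rw [map_mul, map_pow]
  rw [e2'] at key
  have e2 : Multiplicative.toAdd (lam w * lam z ^ Mw.val) = A + Mw.val • B := by
    rw [toAdd_mul, toAdd_pow]
  rw [e2] at key
  rw [pow_val_add hcp A (Mw.val • B)] at key
  simp only [mul_assoc] at key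
  have e5 := mul_left_cancel key
  rw [← mul_assoc, hcentpow (z ^ Mw.val) A.val c hcc, mul_assoc] at e5
  have e6 := mul_left_cancel e5
  have e7 : c ^ ((Mw.val • B).val) = 1 := by
    apply mul_left_cancel (a := z ^ Mw.val)
    rw [mul_one]
    exact e6
  have hBne : B ≠ 0 := by rw [hB, Ne, toAdd_eq_zero]; exact hlz
  have hMne : Mw ≠ 0 := by rw [hMw, Ne, toAdd_eq_zero]; exact hmw
  have hD : (Mw.val • B) = Mw * B := by
    rw [nsmul_eq_mul, ZMod.natCast_val, ZMod.cast_id]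
  have hDne : Mw.val • B ≠ 0 := by rw [hD]; exact mul_ne_zero hMne hBne
  have hord : orderOf c = p := orderOf_eq_prime hcp hc1
  have hdvd := orderOf_dvd_of_pow_eq_one e7
  rw [hord] at hdvd
  have hlt : (Mw.val • B).val < p := ZMod.val_lt _
  have hval0 : (Mw.val • B).val = 0 := by
    rcases Nat.eq_zero_or_pos ((Mw.val • B).val) with h | h
    · exact h
    · exact absurd (Nat.le_of_dvd h hdvd) (by omega)
  exact hDne (by rwa [← ZMod.val_eq_zero])




lemma no_central_p2 [Finite G] {p : ℕ} (hp : p.Prime) (hodd : Odd p)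
    (hel : ∀ φ : MulAut G, φ ^ p = 1)
    {z : G} (hzc : z ∈ center G) (hz2 : z ^ p ^ 2 = 1) (hzp : z ^ p ≠ 1)
    {ν : G →* Multiplicative (ZMod (p ^ 2))} {a : G}
    (hνa : (ν a) ^ p ≠ 1) : False := by
  haveI : Fact p.Prime := ⟨hp⟩
  haveI : NeZero (p ^ 2) := ⟨pow_ne_zero 2 hp.ne_zero⟩
  set bar : ZMod (p ^ 2) →+* ZMod p := ZMod.castHom (dvd_pow_self p two_ne_zero) (ZMod p) with hbar
  have hval_cast : ∀ u : ZMod (p ^ 2), ((u.val : ℕ) : ZMod (p ^ 2)) = u := fun u => by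
    rw [ZMod.natCast_val, ZMod.cast_id]
  have hbar_iff : ∀ u : ZMod (p ^ 2), bar u = 0 ↔ p ∣ u.val := by
    intro u
    rw [hbar, ZMod.castHom_apply, ← ZMod.natCast_val, ZMod.natCast_eq_zero_iff]
  -- a ∣ product unit cancellation
  have hunit_mul : ∀ u : ZMod (p ^ 2), bar u ≠ 0 → ∀ v : ZMod (p ^ 2), u * v = 0 → v = 0 := by
    intro u hu v huv
    have hnd : ¬ p ∣ u.val := fun hd => hu ((hbar_iff u).mpr hd)
    have hcop : Nat.Coprime u.val (p ^ 2) :=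
      ((hp.coprime_iff_not_dvd.mpr hnd).symm).pow_right 2
    have hiu : IsUnit u := by
      rw [← hval_cast u]
      exact (ZMod.isUnit_iff_coprime u.val (p ^ 2)).mpr hcop
    exact (IsUnit.mul_right_eq_zero hiu).mp huv
  -- ν a is "unit-valued"
  have hbar_a : bar (Multiplicative.toAdd (ν a)) ≠ 0 := by
    intro h0
    obtain ⟨j, hj⟩ := (hbar_iff _).mp h0
    apply hνa
    have h1 : Multiplicative.toAdd ((ν a) ^ p) = p • Multiplicative.toAdd (ν a) := by
      rw [toAdd_pow]
    have h2 : p • Multiplicative.toAdd (ν a) = ((p * (Multiplicative.toAdd (ν a)).val : ℕ) : ZMod (p ^ 2)) := by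
      rw [nsmul_eq_mul, Nat.cast_mul, hval_cast]
    have h3 : ((p * (Multiplicative.toAdd (ν a)).val : ℕ) : ZMod (p ^ 2)) = 0 := by
      rw [ZMod.natCast_eq_zero_iff, hj, pow_two]
      exact mul_dvd_mul_left p (Dvd.intro _ rfl)
    rw [← toAdd_eq_zero, h1, h2, h3]
  -- scaling
  set k : ℕ := if bar (Multiplicative.toAdd (ν z)) = -1 then 2 else 1 with hk
  set ν' : G →* Multiplicative (ZMod (p ^ 2)) :=
    (powMonoidHom k).comp ν with hν'
  have hν'app : ∀ x, Multiplicative.toAdd (ν' x) = k • Multiplicative.toAdd (ν x) := by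
    intro x
    rw [hν', MonoidHom.comp_apply, powMonoidHom_apply, toAdd_pow]
  have hp3 : 3 ≤ p := by
    obtain ⟨t0, ht0⟩ := id hodd
    have := hp.two_le
    omega
  have hkp : ¬ (p ∣ k) := by
    rw [hk]
    split
    · exact fun hd => absurd (Nat.le_of_dvd (by norm_num) hd) (by omega)
    · exact fun hd => absurd (Nat.le_of_dvd (by norm_num) hd) (by omega)
  have hkbar : ((k : ℕ) : ZMod p) ≠ 0 := by
    rw [Ne, ZMod.natCast_eq_zero_iff]
    exact hkp
  set t : ZMod (p ^ 2) := Multiplicative.toAdd (ν' z) with ht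
  have hbart_ne : bar t ≠ -1 := by
    rw [ht, hν'app, map_nsmul]
    by_cases hcase : bar (Multiplicative.toAdd (ν z)) = -1
    · rw [hk, if_pos hcase, hcase]
      intro hcon
      rw [nsmul_eq_mul] at hcon
      push_cast at hcon
      have h1 : (1 : ZMod p) = 0 := by linear_combination -hcon
      exact one_ne_zero h1
    · rw [hk, if_neg hcase, one_smul]
      exact hcase
  have hbar_a' : bar (Multiplicative.toAdd (ν' a)) ≠ 0 := by
    rw [hν'app, map_nsmul, nsmul_eq_mul]
    exact mul_ne_zero hkbar hbar_a
  have h1t : bar (1 + t) ≠ 0 := by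
    rw [map_add, map_one]
    intro hcon
    apply hbart_ne
    linear_combination hcon
  -- build the automorphism
  obtain ⟨h, hh⟩ := exists_translation_aut z hzc hz2 ν' (by
    intro x hx1
    have h2 := congrArg ν' hx1
    rw [map_mul, map_pow, map_one] at h2
    have h3 := congrArg Multiplicative.toAdd h2
    rw [toAdd_mul, toAdd_pow, toAdd_one, ← ht] at h3
    rw [nsmul_eq_mul, hval_cast] at h3
    have h4 : Multiplicative.toAdd (ν' x) * (1 + t) = 0 := by linear_combination h3
    have h5 : (1 + t) * Multiplicative.toAdd (ν' x) = 0 := by rw [mul_comm]; exact h4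
    have h6 := hunit_mul (1 + t) h1t _ h5
    rw [h6] at hx1
    simpa using hx1)
  -- iteration formula
  set S : ℕ → ZMod (p ^ 2) := fun m => ∑ i ∈ range m, (1 + t) ^ i with hS
  have hSsucc : ∀ m, S (m + 1) = (1 + t) * S m + 1 := by
    intro m; rw [hS]; exact geom_sum_succ
  have hiter : ∀ (m : ℕ) (x : G), (h ^ m) x = x * z ^ ((Multiplicative.toAdd (ν' x) * S m).val) := by
    intro m
    induction m with
    | zero =>
        intro x
        have : S 0 = 0 := by rw [hS]; simp
        rw [pow_zero, this, mul_zero, ZMod.val_zero, pow_zero, mul_one, MulAut.one_apply]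
    | succ m ih =>
        intro x
        rw [pow_succ h m, MulAut.mul_apply, hh x, map_mul, map_pow, ih, ih]
        rw [← pow_succ' z, ← pow_mul, mul_assoc, ← pow_add]
        congr 1
        apply pow_eq_pow_of_cast_eq hz2
        push_cast [hval_cast]
        rw [hSsucc m]
        ring
  -- apply hel
  have hfix : ∀ x : G, Multiplicative.toAdd (ν' x) * S p = 0 := by
    intro x
    have h1 := congrArg (fun (f : MulAut G) => f x) (hel h)
    simp only [MulAut.one_apply] at h1
    rw [hiter p x] at h1
    have h2 : z ^ ((Multiplicative.toAdd (ν' x) * S p).val) = 1 := by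
      have := mul_left_cancel (a := x) (b := z ^ ((Multiplicative.toAdd (ν' x) * S p).val)) (c := 1) (by rw [mul_one]; exact h1)
      exact this
    have hzo : orderOf z = p ^ 2 := by
      have := orderOf_eq_prime_pow (n := 1) (x := z) (by rwa [pow_one]) (by rwa [show (1:ℕ)+1 = 2 from rfl])
      exact this
    have hdvd := orderOf_dvd_of_pow_eq_one h2
    rw [hzo] at hdvd
    have hlt : ((Multiplicative.toAdd (ν' x) * S p).val) < p ^ 2 := ZMod.val_lt _
    have : ((Multiplicative.toAdd (ν' x) * S p).val) = 0 := by
      rcases Nat.eq_zero_or_pos ((Multiplicative.toAdd (ν' x) * S p).val) with h0 | hpos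
      · exact h0
      · exact absurd (Nat.le_of_dvd hpos hdvd) (by omega)
    rwa [← ZMod.val_eq_zero]
  -- number theory on S p
  by_cases hbt : bar t = 0
  · -- t ≡ 0 mod p : S p = p
    obtain ⟨j, hj⟩ := (hbar_iff t).mp hbt
    have htj : t = ((p * j : ℕ) : ZMod (p ^ 2)) := by rw [← hval_cast t, hj]
    have ht2 : t * t = 0 := by
      rw [htj, ← Nat.cast_mul, ZMod.natCast_eq_zero_iff]
      exact ⟨j * j, by ring⟩
    have hSclosed : ∀ m : ℕ, S m = (m : ZMod (p ^ 2)) + ((m.choose 2 : ℕ) : ZMod (p ^ 2)) * t := by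
      intro m
      induction m with
      | zero => rw [hS]; simp
      | succ m ih =>
          rw [hSsucc m, ih, Nat.choose_succ_succ m 1, Nat.choose_one_right]
          push_cast
          linear_combination ((m.choose 2 : ℕ) : ZMod (p ^ 2)) * ht2
    have hSp : S p = (p : ZMod (p ^ 2)) := by
      obtain ⟨t0, ht0⟩ := id hodd
      have hchoose : p.choose 2 = p * t0 := by
        rw [Nat.choose_two_right]
        have hsub : p - 1 = 2 * t0 := by omega
        rw [hsub, show p * (2 * t0) = 2 * (p * t0) from by ring,
          Nat.mul_div_cancel_left _ (by norm_num)]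
      have hct : ((p.choose 2 : ℕ) : ZMod (p ^ 2)) * t = 0 := by
        rw [hchoose, htj, ← Nat.cast_mul, ZMod.natCast_eq_zero_iff]
        exact ⟨t0 * j, by ring⟩
      rw [hSclosed p, hct, add_zero]
    have h4 := hfix a
    rw [hSp] at h4
    apply hbar_a'
    rw [hbar_iff]
    have h5 : (((Multiplicative.toAdd (ν' a)).val * p : ℕ) : ZMod (p ^ 2)) = 0 := by
      rw [Nat.cast_mul, hval_cast]
      exact h4
    rw [ZMod.natCast_eq_zero_iff] at h5
    obtain ⟨m, hm⟩ := h5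
    have h6 : (Multiplicative.toAdd (ν' a)).val * p = (p * m) * p := by
      rw [hm, pow_two]; ring
    exact ⟨m, Nat.eq_of_mul_eq_mul_right hp.pos h6⟩
  · -- t a unit mod p : S p is a unit
    have hbarS : bar (S p) = 1 := by
      rw [hS]
      rw [map_sum]
      simp only [map_pow, map_add, map_one]
      have hgeom := geom_sum_mul (1 + bar t) p
      rw [add_sub_cancel_left, ZMod.pow_card] at hgeom
      have h2 : (∑ i ∈ range p, (1 + bar t) ^ i - 1) * bar t = 0 := by
        rw [sub_mul, hgeom]
        ring
      rcases mul_eq_zero.mp h2 with h3 | h3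
      · linear_combination h3
      · exact absurd h3 hbt
    have hSne : bar (S p) ≠ 0 := by rw [hbarS]; exact one_ne_zero
    have h4 := hfix a
    rw [mul_comm] at h4
    exact hbar_a' (by rw [hunit_mul (S p) hSne _ h4, map_zero])


end JRY

open Subgroup JRY in
/-- Jain–Rai–Yadav: if `G` is a finite `p`-group, `p` odd, with `Aut(G)` elementary
abelian, then `Φ(G)` is elementary abelian and `Z(G) = Φ(G)` or `[G,G] = Φ(G)`. -/
theorem frattini_elementary_abelian_of_elementary_abelian_aut
    (p : ℕ) (hp : p.Prime) (hodd : Odd p)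
    (G : Type*) [Group G] [Finite G] (hpG : IsPGroup p G)
    (hab : ∀ φ ψ : MulAut G, φ * ψ = ψ * φ)
    (hel : ∀ φ : MulAut G, φ ^ p = 1) :
    (∀ x ∈ frattini G, ∀ y ∈ frattini G, x * y = y * x) ∧
    (∀ x ∈ frattini G, x ^ p = 1) ∧
    (Subgroup.center G = frattini G ∨ commutator G = frattini G) := by
  rcases subsingleton_or_nontrivial G with hS | hNT
  · refine ⟨fun x _ y _ => Subsingleton.elim _ _, fun x _ => Subsingleton.elim _ _, Or.inl ?_⟩
    ext g
    constructor
    · intro _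
      have : g = 1 := Subsingleton.elim g 1
      rw [this]; exact one_mem _
    · intro _
      have : g = 1 := Subsingleton.elim g 1
      rw [this]; exact one_mem _
  haveI : Fact p.Prime := ⟨hp⟩
  haveI : NeZero p := ⟨hp.ne_zero⟩
  -- commutators are central
  have hcz : ∀ a b : G, ⁅a, b⁆ ∈ center G := by
    intro a b
    have h1 := hab (MulAut.conj a⁻¹) (MulAut.conj b⁻¹)
    have h2 : ∀ x : G, MulAut.conj (a⁻¹ * b⁻¹) x = MulAut.conj (b⁻¹ * a⁻¹) x := by
      intro x
      rw [map_mul, h1, ← map_mul]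
    rw [mem_center_iff]
    intro g
    have E : (a⁻¹ * b⁻¹) * g * (b * a) = (b⁻¹ * a⁻¹) * g * (a * b) := by
      have := h2 g
      simp only [MulAut.conj_apply, mul_inv_rev, inv_inv] at this
      calc (a⁻¹ * b⁻¹) * g * (b * a) = a⁻¹ * b⁻¹ * g * (b * a) := by group
        _ = b⁻¹ * a⁻¹ * g * (a * b) := by
            have h3 : a⁻¹ * b⁻¹ * g * (b * a) = b⁻¹ * a⁻¹ * g * (a * b) := by
              have h4 := this
              group at h4 ⊢
              exact h4
            exact h3
        _ = (b⁻¹ * a⁻¹) * g * (a * b) := by group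
    rw [commutatorElement_def]
    calc g * (a * b * a⁻¹ * b⁻¹)
        = a * b * ((b⁻¹ * a⁻¹) * g * (a * b)) * a⁻¹ * b⁻¹ := by group
      _ = a * b * ((a⁻¹ * b⁻¹) * g * (b * a)) * a⁻¹ * b⁻¹ := by rw [E]
      _ = a * b * a⁻¹ * b⁻¹ * g := by group
  -- p-th powers are central
  have hpc : ∀ g : G, g ^ p ∈ center G := by
    intro g
    have h1 := hel (MulAut.conj g)
    have h2 : MulAut.conj (g ^ p) = 1 := by rw [map_pow, h1]
    rw [mem_center_iff]
    intro x
    have h3 : g ^ p * x * (g ^ p)⁻¹ = x := by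
      have h4 : MulAut.conj (g ^ p) x = (1 : MulAut G) x := by rw [h2]
      rw [MulAut.conj_apply] at h4
      rw [h4, MulAut.one_apply]
    have h4 : g ^ p * x = x * g ^ p := by
      have := congrArg (fun w => w * g ^ p) h3
      simpa [mul_assoc] using this
    exact h4.symm
  -- commutators have order dividing p
  have hcp : ∀ a b : G, ⁅a, b⁆ ^ p = 1 := by
    intro a b
    rw [comm_pow_right hcz a b p]
    rw [commutatorElement_eq_one_iff_commute]
    exact mem_center_iff.mp (hpc b) a
  -- exponent p²
  have hexp2 : ∀ x : G, x ^ p ^ 2 = 1 := exp_p2 hp hodd hpG hel hcz hcp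
  -- Frattini contains commutators and p-th powers
  have hfrcomm : ∀ a b : G, ⁅a, b⁆ ∈ frattini G := fun a b =>
    mem_frattini_iff.mpr fun M hM => (coatom_facts hp hpG hM).1 a b
  have hfrpow : ∀ g : G, g ^ p ∈ frattini G := fun g =>
    mem_frattini_iff.mpr fun M hM => (coatom_facts hp hpG hM).2 g
  -- the subgroup of central elements of order dividing p
  let K : Subgroup G :=
    { carrier := {x | x ∈ center G ∧ x ^ p = 1}
      one_mem' := ⟨one_mem _, one_pow p⟩
      mul_mem' := by
        rintro a b ⟨ha, hap⟩ ⟨hb, hbp⟩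
        refine ⟨mul_mem ha hb, ?_⟩
        have hcab : Commute a b := (mem_center_iff.mp ha b).symm
        rw [hcab.mul_pow, hap, hbp, mul_one]
      inv_mem' := by
        rintro a ⟨ha, hap⟩
        exact ⟨inv_mem ha, by rw [inv_pow, hap, inv_one]⟩ }
  have hKmem : ∀ x : G, x ∈ K ↔ x ∈ center G ∧ x ^ p = 1 := fun x => Iff.rfl
  haveI hKn : K.Normal := by
    constructor
    intro n hn g
    have h1 : g * n * g⁻¹ = n := central_conj hn.1
    rw [h1]
    exact hn
  have hfrK : frattini G ≤ K := by
    intro x hx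
    by_contra hxK
    obtain ⟨φ, hker, hφx⟩ := sep p K hKn
      (fun a b => ⟨hcz a b, hcp a b⟩)
      (fun g => ⟨hpc g, by rw [← pow_mul, ← pow_two]; exact hexp2 g⟩) hxK
    exact hφx (MonoidHom.mem_ker.mp (frattini_le_coatom (ker_coatom hp φ hφx) hx))
  refine ⟨?_, ?_, ?_⟩
  · intro x hx y hy
    exact (mem_center_iff.mp (hfrK hx).1 y).symm
  · intro x hx
    exact (hfrK hx).2
  by_cases hce : commutator G = frattini G
  · exact Or.inr hce
  refine Or.inl (le_antisymm ?_ (fun x hx => (hfrK hx).1))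
  intro z hz
  by_contra hzfr
  -- G is nonabelian
  have hnab : ∃ a b : G, a * b ≠ b * a := by
    by_contra hcon
    push_neg at hcon
    let ι : MulAut G :=
      { toFun := fun x => x⁻¹
        invFun := fun x => x⁻¹
        left_inv := inv_inv
        right_inv := inv_inv
        map_mul' := fun a b => by
          show (a * b)⁻¹ = a⁻¹ * b⁻¹
          rw [mul_inv_rev, hcon b⁻¹ a⁻¹] }
    have hι2 : ι ^ 2 = 1 := by
      apply DFunLike.ext
      intro x
      rw [pow_two, MulAut.mul_apply, MulAut.one_apply]
      exact inv_inv x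
    obtain ⟨t0, ht0⟩ := id hodd
    have hι_eq : ι ^ p = ι := by
      rw [ht0, pow_succ, pow_mul, hι2, one_pow, one_mul]
    have hι1 : ι = 1 := by rw [← hι_eq]; exact hel ι
    have hx2 : ∀ x : G, x * x = 1 := by
      intro x
      have h4 : x⁻¹ = x := by
        have h3 : ι x = (1 : MulAut G) x := by rw [hι1]
        rw [MulAut.one_apply] at h3
        exact h3
      nth_rewrite 1 [← h4]
      rw [inv_mul_cancel]
    obtain ⟨y, hy⟩ := exists_ne (1 : G)
    obtain ⟨k, hk⟩ := hpG y
    have h2 : orderOf y ∣ 2 := orderOf_dvd_of_pow_eq_one (by rw [pow_two]; exact hx2 y)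
    have h3 : orderOf y ∣ p ^ k := orderOf_dvd_of_pow_eq_one hk
    rcases (Nat.dvd_prime Nat.prime_two).mp h2 with h4 | h4
    · exact hy (orderOf_eq_one_iff.mp h4)
    · rw [h4] at h3
      have h5 : 2 ∣ p := Nat.Prime.dvd_of_dvd_pow Nat.prime_two h3
      obtain ⟨t0, ht0⟩ := id hodd
      omega
  obtain ⟨a₀, b₀, hab₀⟩ := hnab
  have hc1 : ⁅a₀, b₀⁆ ≠ 1 := fun h =>
    hab₀ (commutatorElement_eq_one_iff_commute.mp h)
  -- z has order p
  have hzp1 : z ^ p = 1 := by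
    by_contra hzp
    have hgp : ∃ g : G, g ^ p ∉ commutator G := by
      by_contra hgp
      push_neg at hgp
      apply hce
      apply le_antisymm
      · rw [_root_.commutator_def, Subgroup.commutator_le]
        intro g1 _ g2 _
        exact hfrcomm g1 g2
      · intro x hx
        by_contra hxc
        obtain ⟨φ, hker, hφx⟩ := sep p (commutator G) inferInstance
          (fun a b => by
            rw [_root_.commutator_def]
            exact Subgroup.commutator_mem_commutator (mem_top a) (mem_top b)) hgp hxc
        exact hφx (MonoidHom.mem_ker.mp (frattini_le_coatom (ker_coatom hp φ hφx) hx))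
    obtain ⟨g, hg⟩ := hgp
    haveI : NeZero (p ^ 2) := ⟨pow_ne_zero 2 hp.ne_zero⟩
    obtain ⟨ν, hνker, hνg⟩ := sep (p ^ 2) (commutator G) inferInstance
      (fun a b => by
        rw [_root_.commutator_def]
        exact Subgroup.commutator_mem_commutator (mem_top a) (mem_top b))
      (fun g' => by rw [hexp2 g']; exact one_mem _) hg
    have hνg' : (ν g) ^ p ≠ 1 := by rw [← map_pow]; exact hνg
    exact no_central_p2 hp hodd hel hz (hexp2 z) hzp hνg'
  -- functionals
  obtain ⟨lam, hlker, hlz⟩ := sep p (frattini G) inferInstance hfrcomm hfrpow hzfr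
  haveI hzpn : (zpowers z).Normal := by
    constructor
    intro n hn g
    obtain ⟨i, rfl⟩ := hn
    have h1 : g * z ^ i * g⁻¹ = z ^ i := central_conj (zpow_mem hz i)
    rw [h1]
    exact zpow_mem (mem_zpowers z) i
  have hN'ne : frattini G ⊔ zpowers z ≠ ⊤ := by
    intro htop
    have hcyc : zpowers z = ⊤ := frattini_nongenerating (by rw [sup_comm] at htop; exact htop)
    apply hab₀
    obtain ⟨i, hi⟩ := (Subgroup.eq_top_iff' (zpowers z)).mp hcyc a₀
    obtain ⟨j, hj⟩ := (Subgroup.eq_top_iff' (zpowers z)).mp hcyc b₀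
    rw [← hi, ← hj]
    exact (Commute.refl z).zpow_zpow i j
  obtain ⟨w, hw⟩ : ∃ w : G, w ∉ frattini G ⊔ zpowers z := by
    by_contra hcon
    push_neg at hcon
    exact hN'ne ((Subgroup.eq_top_iff' _).mpr hcon)
  obtain ⟨mu, hmker, hmw⟩ := sep p (frattini G ⊔ zpowers z) inferInstance
    (fun a b => (le_sup_left : frattini G ≤ _) (hfrcomm a b))
    (fun g => (le_sup_left : frattini G ≤ _) (hfrpow g)) hw
  exact step_B hp hab hz hzp1 (hcz a₀ b₀) (hcp a₀ b₀) hc1 hlz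
    (hlker _ (hfrcomm a₀ b₀))
    (hmker z ((le_sup_right : zpowers z ≤ _) (mem_zpowers z)))
    (hmker _ ((le_sup_left : frattini G ≤ _) (hfrcomm a₀ b₀))) hmw
end

section
/- Let p be a prime and let G be a finite p-group which is both a Miller group and a Camina group. Then every automorphism of G is class-preserving: for every automorphism φ of G and every x ∈ G there exists g ∈ G with φ(x) = g·x·g⁻¹. -/
/-- A Camina group: for every `x ∉ [G,G]`, the conjugacy class of `x` is the
coset `x[G,G]`. -/
def IsCamina (G : Type*) [Group G] : Prop :=
  ∀ x : G, x ∉ commutator G →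
    ∀ y : G, IsConj x y ↔ ∃ c ∈ commutator G, y = x * c

open scoped commutatorElement

private lemma commutator_central_mul {G : Type*} [Group G] (a b z₁ z₂ : G)
    (h₁ : ∀ g, g * z₁ = z₁ * g) (h₂ : ∀ g, g * z₂ = z₂ * g) :
    ⁅a * z₁, b * z₂⁆ = ⁅a, b⁆ := by
  simp only [commutatorElement_def, mul_inv_rev]
  calc a * z₁ * (b * z₂) * (z₁⁻¹ * a⁻¹) * (z₂⁻¹ * b⁻¹)
      = a * (z₁ * b) * z₂ * z₁⁻¹ * a⁻¹ * (z₂⁻¹ * b⁻¹) := by group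
  _ = a * (b * z₁) * z₂ * z₁⁻¹ * a⁻¹ * (z₂⁻¹ * b⁻¹) := by rw [← h₁ b]
  _ = a * b * (z₁ * z₂) * z₁⁻¹ * a⁻¹ * (z₂⁻¹ * b⁻¹) := by group
  _ = a * b * (z₂ * z₁) * z₁⁻¹ * a⁻¹ * (z₂⁻¹ * b⁻¹) := by rw [h₂ z₁]
  _ = a * b * (z₂ * a⁻¹) * (z₂⁻¹ * b⁻¹) := by group
  _ = a * b * (a⁻¹ * z₂) * (z₂⁻¹ * b⁻¹) := by rw [h₂ a⁻¹]
  _ = a * b * a⁻¹ * b⁻¹ := by group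

/-- If a finite `p`-group is both Miller and Camina, then all its automorphisms are
class-preserving. -/
theorem miller_camina_aut_class_preserving
    (p : ℕ) (hp : p.Prime)
    (G : Type*) [Group G] (hG : IsMiller G) (hpG : IsPGroup p G)
    (hcam : IsCamina G) :
    ∀ (φ : MulAut G) (x : G), ∃ g : G, φ x = g * x * g⁻¹ := by
  obtain ⟨hfin, ⟨a0, b0, hab⟩, hcomm⟩ := hG
  -- Step 1: every automorphism is central: x⁻¹ * φ x commutes with everything.
  have hcent : ∀ (φ : MulAut G) (x : G), ∀ y : G, y * (x⁻¹ * φ x) = (x⁻¹ * φ x) * y := by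
    intro φ x y
    have h := hcomm φ (MulAut.conj x)
    have h2 : φ (x * φ.symm y * x⁻¹) = x * y * x⁻¹ := by
      have := congrArg (fun ψ : MulAut G => ψ (φ.symm y)) h
      simpa [MulAut.conj, mul_assoc] using this
    have h3 : φ x * y * (φ x)⁻¹ = x * y * x⁻¹ := by
      simpa [map_mul, map_inv] using h2
    have h4 : φ x * y = x * y * x⁻¹ * φ x := by
      rw [← h3]; group
    calc y * (x⁻¹ * φ x) = x⁻¹ * (x * y * x⁻¹ * φ x) := by group
    _ = x⁻¹ * (φ x * y) := by rw [h4]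
    _ = (x⁻¹ * φ x) * y := by group
  -- Step 2: the center is contained in the commutator subgroup.
  have hZle : ∀ z : G, (∀ y : G, y * z = z * y) → z ∈ commutator G := by
    intro z hz
    by_contra hznot
    have htriv : ∀ c ∈ commutator G, c = 1 := by
      intro c hc
      have hconj : IsConj z (z * c) := (hcam z hznot (z * c)).2 ⟨c, hc, rfl⟩
      obtain ⟨u, hu⟩ := hconj
      have hu' : u * z = z * c * u := hu
      have h5 : z * u = z * c * u := by rw [← hz u, hu']
      have h6 : z = z * c := mul_right_cancel h5
      exact (mul_eq_left.mp h6.symm)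
    refine hab (commutatorElement_eq_one_iff_mul_comm.mp ?_)
    exact htriv _ (Subgroup.commutator_mem_commutator
      (Subgroup.mem_top a0) (Subgroup.mem_top b0))
  -- Step 3: every automorphism fixes the commutator subgroup pointwise.
  have hfixcomm : ∀ (φ : MulAut G) (a b : G), φ ⁅a, b⁆ = ⁅a, b⁆ := by
    intro φ a b
    have ha : φ a = a * (a⁻¹ * φ a) := by group
    have hb : φ b = b * (b⁻¹ * φ b) := by group
    calc φ ⁅a, b⁆ = ⁅φ a, φ b⁆ := map_commutatorElement φ a b
    _ = ⁅a * (a⁻¹ * φ a), b * (b⁻¹ * φ b)⁆ := by rw [← ha, ← hb]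
    _ = ⁅a, b⁆ := commutator_central_mul a b _ _ (hcent φ a) (hcent φ b)
  have hfix : ∀ (φ : MulAut G), ∀ x ∈ commutator G, φ x = x := by
    intro φ x hx
    rw [commutator_eq_closure] at hx
    induction hx using Subgroup.closure_induction with
    | mem y hy =>
        obtain ⟨a, b, rfl⟩ := hy
        exact hfixcomm φ a b
    | one => exact map_one φ
    | mul y z _ _ hy hz => rw [map_mul, hy, hz]
    | inv y _ hy => rw [map_inv, hy]
  -- Main argument.
  intro φ x
  by_cases hx : x ∈ commutator G
  · exact ⟨1, by simp [hfix φ x hx]⟩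
  · have hz : x⁻¹ * φ x ∈ commutator G := hZle _ (hcent φ x)
    have hconj : IsConj x (φ x) :=
      (hcam x hx (φ x)).2 ⟨x⁻¹ * φ x, hz, by group⟩
    obtain ⟨u, hu⟩ := hconj
    exact ⟨u, by rw [eq_mul_inv_iff_mul_eq]; exact hu.symm⟩
end
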